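/- arXiv:2601.12737 — 6 statements merged into one kernel-verified Lean document; each statement's English description precedes it below -/
import Mathlib

section
/- Let (ν_n)_{n≥1} be a non-decreasing sequence of positive integers with liminf_{n→∞} ν_n/n = ∞. Then the Hausdorff dimension of F((ν_n)) equals 0. -/
open Filter MeasureTheory Set
open scoped ENNReal NNReal Topology

/-- The Gauss map `T(x) = 1/x - ⌊1/x⌋`. -/
noncomputable def gaussMap (x : ℝ) : ℝ := 1 / x - ⌊1 / x⌋

/-- The `n`-th partial quotient `a_n(x) = ⌊1 / T^{n-1} x⌋` of the regular continued
fraction expansion of `x` (meaningful for `n ≥ 1` and `x` irrational in `(0,1)`). -/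
noncomputable def pq (x : ℝ) (n : ℕ) : ℕ := (⌊1 / (gaussMap^[n - 1] x)⌋).toNat

/-- The set `J` of irrationals in `(0,1)` with strictly increasing partial quotients. -/
def Jset : Set ℝ :=
  {x | x ∈ Set.Ioo (0 : ℝ) 1 ∧ Irrational x ∧ ∀ n : ℕ, 1 ≤ n → pq x n < pq x (n + 1)}


lemma pq_one_def (x : ℝ) : pq x 1 = (⌊1 / x⌋).toNat := rfl

lemma floor_pos_of (x : ℝ) (hx : x ∈ Set.Ioo (0:ℝ) 1) : 1 ≤ ⌊1 / x⌋ := by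
  have h1 : 1 < 1 / x := by
    rw [lt_div_iff₀ hx.1]; simpa using hx.2
  exact Int.le_floor.mpr (by exact_mod_cast h1.le)

lemma pq_one_cast (x : ℝ) (hx : x ∈ Set.Ioo (0:ℝ) 1) : (pq x 1 : ℝ) = (⌊1 / x⌋ : ℤ) := by
  have h := floor_pos_of x hx
  rw [pq_one_def]
  norm_cast
  omega

lemma pq_one_pos (x : ℝ) (hx : x ∈ Set.Ioo (0:ℝ) 1) : 1 ≤ pq x 1 := by
  have h := floor_pos_of x hx
  rw [pq_one_def]; omega

lemma gauss_eq_fract (x : ℝ) : gaussMap x = Int.fract (1 / x) := rfl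

lemma gauss_mem (x : ℝ) (hx : x ∈ Set.Ioo (0:ℝ) 1) (hirr : Irrational x) :
    gaussMap x ∈ Set.Ioo (0:ℝ) 1 ∧ Irrational (gaussMap x) := by
  have h1 : Irrational (1 / x) := by
    rw [one_div]; exact hirr.inv
  have h2 : Irrational (gaussMap x) := by
    rw [gauss_eq_fract]; exact h1.sub_intCast _
  refine ⟨⟨?_, ?_⟩, h2⟩
  · have h0 : (0:ℝ) ≤ gaussMap x := by
      rw [gauss_eq_fract]; exact Int.fract_nonneg _
    rcases h0.lt_or_eq with h | h
    · exact h
    · exact absurd (h ▸ h2) (by intro H; exact H ⟨0, by simp [← h]⟩)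
  · rw [gauss_eq_fract]; exact Int.fract_lt_one _

lemma gauss_identity (x : ℝ) (hx : x ∈ Set.Ioo (0:ℝ) 1) :
    x = ((pq x 1 : ℝ) + gaussMap x)⁻¹ := by
  have : (pq x 1 : ℝ) + gaussMap x = 1 / x := by
    rw [pq_one_cast x hx, gaussMap]; ring
  rw [this, one_div, inv_inv]

lemma pq_shift (x : ℝ) (i : ℕ) : pq x (i + 2) = pq (gaussMap x) (i + 1) := by
  simp only [pq, Nat.add_sub_cancel]
  rw [show i + 2 - 1 = i + 1 by omega, Function.iterate_succ_apply]

lemma dist_le_prod : ∀ (m : ℕ) (x y : ℝ), x ∈ Set.Ioo (0:ℝ) 1 → Irrational x →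
    y ∈ Set.Ioo (0:ℝ) 1 → Irrational y → (∀ i < m, pq x (i+1) = pq y (i+1)) →
    |x - y| ≤ ∏ i ∈ Finset.range m, (((pq x (i+1) : ℝ))^2)⁻¹ := by
  intro m
  induction m with
  | zero =>
    intro x y hx _ hy _ _
    simp only [Finset.range_zero, Finset.prod_empty]
    rw [abs_sub_le_iff]
    constructor <;> nlinarith [hx.1, hx.2, hy.1, hy.2]
  | succ m ih =>
    intro x y hx hxi hy hyi hdig
    obtain ⟨hx', hxi'⟩ := gauss_mem x hx hxi
    obtain ⟨hy', hyi'⟩ := gauss_mem y hy hyi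
    have ha : pq x 1 = pq y 1 := hdig 0 (Nat.succ_pos m)
    have hdig' : ∀ i < m, pq (gaussMap x) (i+1) = pq (gaussMap y) (i+1) := by
      intro i hi
      rw [← pq_shift, ← pq_shift]
      exact hdig (i+1) (by omega)
    have IH := ih (gaussMap x) (gaussMap y) hx' hxi' hy' hyi' hdig'
    set u := gaussMap x with hu
    set v := gaussMap y with hv
    set a : ℝ := (pq x 1 : ℝ) with hadef
    have ha1 : (1:ℝ) ≤ a := by
      rw [hadef]; exact_mod_cast pq_one_pos x hx
    have hxe : x = (a + u)⁻¹ := gauss_identity x hx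
    have hye : y = (a + v)⁻¹ := by
      rw [hadef, ha]; exact gauss_identity y hy
    have hgx := hx'.1; have hgy := hy'.1
    have hX : (0:ℝ) < a + u := by linarith
    have hY : (0:ℝ) < a + v := by linarith
    have key : x - y = (v - u) / ((a + u) * (a + v)) := by
      rw [hxe, hye]
      field_simp
      ring
    have hquot : |x - y| ≤ (a^2)⁻¹ * |u - v| := by
      rw [key, abs_div, abs_of_pos (mul_pos hX hY), abs_sub_comm v u, div_eq_inv_mul]
      have h2 : a^2 ≤ (a + u) * (a + v) := by nlinarith
      gcongr
    calc |x - y| ≤ (a^2)⁻¹ * |u - v| := hquot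
      _ ≤ (a^2)⁻¹ * ∏ i ∈ Finset.range m, (((pq u (i+1) : ℝ))^2)⁻¹ := by
          have : (0:ℝ) ≤ (a^2)⁻¹ := by positivity
          exact mul_le_mul_of_nonneg_left IH this
      _ = ∏ i ∈ Finset.range (m+1), (((pq x (i+1) : ℝ))^2)⁻¹ := by
          rw [Finset.prod_range_succ', mul_comm]
          simp only [zero_add]
          rfl

lemma Jset_pq_pos (x : ℝ) (hx : x ∈ Jset) : ∀ n, 1 ≤ n → n ≤ pq x n := by
  intro n hn
  induction n with
  | zero => omega
  | succ k ih =>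
    rcases Nat.eq_or_lt_of_le hn with h | h
    · rw [← h]; exact pq_one_pos x hx.1
    · have hk : 1 ≤ k := by omega
      have := hx.2.2 k hk
      have := ih hk
      omega

lemma Jset_pq_strict (x : ℝ) (hx : x ∈ Jset) {i j : ℕ} (hi : 1 ≤ i) (hij : i < j) :
    pq x i < pq x j := by
  induction j with
  | zero => omega
  | succ k ih =>
    rcases Nat.lt_or_ge i k with h | h
    · exact lt_trans (ih h) (hx.2.2 k (by omega))
    · have : i = k := by omega
      subst this
      exact hx.2.2 i hi


/-- The finite sequence `b start, b (start+1), …, b (start+len-1)` is an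
arithmetic progression. -/
def IsAPAt (b : ℕ → ℕ) (start len : ℕ) : Prop :=
  ∃ d : ℤ, ∀ i : ℕ, i + 2 ≤ len → (b (start + i + 1) : ℤ) - (b (start + i) : ℤ) = d

/-- The `F`-set: points of `J` such that for infinitely many `n ≥ 1` the partial
quotients `a_n(x), …, a_{n+ν_n-1}(x)` form an arithmetic progression. -/
def Fset (ν : ℕ → ℕ) : Set ℝ :=
  {x | x ∈ Jset ∧ ∀ N : ℕ, ∃ n : ℕ, N ≤ n ∧ 1 ≤ n ∧ IsAPAt (pq x) n (ν n)}

/-- The `G`-set: points of `J` such that for all sufficiently large `n` the partial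
quotients `a_{σ_n}(x), …, a_{σ_n+n-1}(x)` form an arithmetic progression. -/
def Gset (σ : ℕ → ℕ) : Set ℝ :=
  {x | x ∈ Jset ∧ ∃ N : ℕ, ∀ n : ℕ, N ≤ n → IsAPAt (pq x) (σ n) n}

/-- The basic covering sets. -/
def Sset (ν : ℕ → ℕ) (n a d : ℕ) (w : Fin (n-1) → Fin a) : Set ℝ :=
  {x | x ∈ Fset ν ∧ pq x n = a ∧ (∀ i : Fin (n-1), pq x (i.1+1) = (w i).1) ∧
       ∀ j, j < ν n → pq x (n+j) = a + j*d}

lemma ofReal_inv_sq (k : ℕ) (hk : 1 ≤ k) :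
    ENNReal.ofReal (((k:ℝ))^2)⁻¹ = (((k:ℝ≥0∞))^2)⁻¹ := by
  have hk' : (0:ℝ) < (k:ℝ) := by exact_mod_cast hk
  rw [ENNReal.ofReal_inv_of_pos (by positivity), ENNReal.ofReal_pow (by positivity),
    ENNReal.ofReal_natCast]

lemma diam_S_le_prod (ν : ℕ → ℕ) (n a d : ℕ) (w : Fin (n-1) → Fin a) (x₀ : ℝ)
    (hx₀ : x₀ ∈ Sset ν n a d w) (hn : 1 ≤ n) :
    EMetric.diam (Sset ν n a d w) ≤
      ∏ i ∈ Finset.range (n - 1 + ν n), (((pq x₀ (i+1) : ℝ≥0∞))^2)⁻¹ := by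
  apply EMetric.diam_le
  intro x hx y hy
  have hJx : x ∈ Jset := hx.1.1
  have hJy : y ∈ Jset := hy.1.1
  have hdig : ∀ z : ℝ, z ∈ Sset ν n a d w → ∀ i < n - 1 + ν n, pq z (i+1) = pq x₀ (i+1) := by
    intro z hz i hi
    rcases Nat.lt_or_ge i (n-1) with h | h
    · rw [hz.2.2.1 ⟨i, h⟩, hx₀.2.2.1 ⟨i, h⟩]
    · have hj : i + 1 - n < ν n := by omega
      have hni : n + (i + 1 - n) = i + 1 := by omega
      rw [← hni, hz.2.2.2 _ hj, hx₀.2.2.2 _ hj]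
  have hdxy : ∀ i < n - 1 + ν n, pq x (i+1) = pq y (i+1) := by
    intro i hi; rw [hdig x hx i hi, hdig y hy i hi]
  have hreal := dist_le_prod (n - 1 + ν n) x y hJx.1 hJx.2.1 hJy.1 hJy.2.1 hdxy
  have hedist : edist x y = ENNReal.ofReal |x - y| := by
    rw [edist_dist, Real.dist_eq]
  rw [hedist]
  calc ENNReal.ofReal |x - y|
      ≤ ENNReal.ofReal (∏ i ∈ Finset.range (n - 1 + ν n), (((pq x (i+1) : ℝ))^2)⁻¹) :=
        ENNReal.ofReal_le_ofReal hreal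
    _ = ∏ i ∈ Finset.range (n - 1 + ν n), (((pq x (i+1) : ℝ≥0∞))^2)⁻¹ := by
        rw [ENNReal.ofReal_prod_of_nonneg (fun i _ => by positivity)]
        exact Finset.prod_congr rfl fun i _ =>
          ofReal_inv_sq _ (Nat.one_le_iff_ne_zero.mpr (by
            have := Jset_pq_pos x hJx (i+1) (by omega); omega))
    _ = ∏ i ∈ Finset.range (n - 1 + ν n), (((pq x₀ (i+1) : ℝ≥0∞))^2)⁻¹ :=
        Finset.prod_congr rfl fun i hi => by rw [hdig x hx i (Finset.mem_range.mp hi)]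

lemma factor_le_one (k : ℕ) (hk : 1 ≤ k) : (((k:ℝ≥0∞))^2)⁻¹ ≤ 1 := by
  rw [ENNReal.inv_le_one]
  exact one_le_pow_of_one_le' (by exact_mod_cast hk) 2

/-- Mesh bound. -/
lemma diam_S_le_mesh (ν : ℕ → ℕ) (n a d : ℕ) (w : Fin (n-1) → Fin a) (hn : 1 ≤ n)
    (hν1 : 1 ≤ ν n) :
    EMetric.diam (Sset ν n a d w) ≤ (((n:ℝ≥0∞))^2)⁻¹ := by
  rcases Set.eq_empty_or_nonempty (Sset ν n a d w) with h | ⟨x₀, hx₀⟩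
  · simp [h, EMetric.diam]
  calc EMetric.diam (Sset ν n a d w)
      ≤ ∏ i ∈ Finset.range (n - 1 + ν n), (((pq x₀ (i+1) : ℝ≥0∞))^2)⁻¹ :=
        diam_S_le_prod ν n a d w x₀ hx₀ hn
    _ ≤ (((pq x₀ n : ℝ≥0∞))^2)⁻¹ := by
        have hmem : n - 1 ∈ Finset.range (n - 1 + ν n) := Finset.mem_range.mpr (by omega)
        have hn1 : n - 1 + 1 = n := by omega
        calc ∏ i ∈ Finset.range (n - 1 + ν n), (((pq x₀ (i+1) : ℝ≥0∞))^2)⁻¹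
            = (((pq x₀ (n-1+1) : ℝ≥0∞))^2)⁻¹ *
              ∏ i ∈ (Finset.range (n - 1 + ν n)).erase (n-1), (((pq x₀ (i+1) : ℝ≥0∞))^2)⁻¹ :=
              (Finset.mul_prod_erase _ _ hmem).symm
          _ ≤ (((pq x₀ (n-1+1) : ℝ≥0∞))^2)⁻¹ * 1 := by
              gcongr
              apply Finset.prod_le_one (fun _ _ => zero_le)
              intro i _
              apply factor_le_one
              have := Jset_pq_pos x₀ hx₀.1.1 (i+1) (by omega)
              omega
          _ = (((pq x₀ n : ℝ≥0∞))^2)⁻¹ := by rw [mul_one, hn1]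
    _ ≤ (((n:ℝ≥0∞))^2)⁻¹ := by
        have := Jset_pq_pos x₀ hx₀.1.1 n hn
        gcongr

lemma pow_rpow_comm (x : ℝ≥0∞) (m : ℕ) (t : ℝ) : (x ^ m) ^ t = (x ^ t) ^ m := by
  rw [← ENNReal.rpow_natCast x m, ← ENNReal.rpow_mul, mul_comm, ENNReal.rpow_mul,
    ENNReal.rpow_natCast]

lemma rpow_third (x : ℝ≥0∞) (t : ℝ) : (x ^ (3:ℕ)) ^ (t/3) = x ^ t := by
  rw [← ENNReal.rpow_natCast x 3, ← ENNReal.rpow_mul]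
  congr 1
  push_cast
  ring

lemma inv_sq_anti {k m : ℕ} (h : m ≤ k) : (((k:ℝ≥0∞))^2)⁻¹ ≤ (((m:ℝ≥0∞))^2)⁻¹ := by
  gcongr

/-- The geometric ratio. -/
noncomputable def rr (t : ℝ) : ℝ≥0∞ := ((((2:ℕ):ℝ≥0∞))^2)⁻¹ ^ t

lemma rr_lt_one {t : ℝ} (ht : 0 < t) : rr t < 1 := by
  apply ENNReal.rpow_lt_one _ ht
  rw [ENNReal.inv_lt_one]
  norm_num

/-- Key bound: the `t`-power of the diameter of a covering set. -/
lemma diam_S_rpow_le (ν : ℕ → ℕ) (n a d : ℕ) (w : Fin (n-1) → Fin a) (t : ℝ)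
    (ht : 0 < t) (hn : 1 ≤ n) (ha : 1 ≤ a) (hd : 1 ≤ d)
    (hcond : (n + 1 : ℝ) ≤ 2*t/3 * ((ν n : ℝ) - 1)) :
    (EMetric.diam (Sset ν n a d w)) ^ t ≤
      rr t ^ (n - 2) * ((((a:ℝ≥0∞))^(n+1))⁻¹ * (((d:ℝ≥0∞))^(n+1))⁻¹) := by
  rcases Set.eq_empty_or_nonempty (Sset ν n a d w) with h | ⟨x₀, hx₀⟩
  · rw [h]
    simp [EMetric.diam, EMetric.diam_empty, ENNReal.zero_rpow_of_pos ht]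
  have hJ : x₀ ∈ Jset := hx₀.1.1
  have hpos : ∀ i : ℕ, 1 ≤ pq x₀ (i+1) := fun i => by
    have := Jset_pq_pos x₀ hJ (i+1) (by omega); omega
  have hν2 : 2 ≤ ν n := by
    by_contra hcon
    have h1 : ((ν n : ℝ) - 1) ≤ 0 := by
      have : (ν n : ℝ) ≤ 1 := by exact_mod_cast Nat.lt_succ_iff.mp (by omega)
      linarith
    nlinarith [hcond, ht, (by positivity : (0:ℝ) < 2*t/3),
      (by exact_mod_cast hn : (1:ℝ) ≤ (n:ℝ))]
  set f : ℕ → ℝ≥0∞ := fun i => (((pq x₀ (i+1) : ℝ≥0∞))^2)⁻¹ with hf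
  set M : ℕ := ν n - 1 with hM
  have hmaster := diam_S_le_prod ν n a d w x₀ hx₀ hn
  have hsplit : ∏ i ∈ Finset.range (n - 1 + ν n), f i =
      (∏ i ∈ Finset.range (n-1), f i) * ∏ i ∈ Finset.range (ν n), f (n - 1 + i) :=
    Finset.prod_range_add f (n-1) (ν n)
  -- prefix bound
  have hP1 : ∏ i ∈ Finset.range (n-1), f i ≤ ((((2:ℕ):ℝ≥0∞))^2)⁻¹ ^ (n - 2) := by
    rcases Nat.lt_or_ge n 2 with h2 | h2
    · have : n = 1 := by omega
      subst this
      simp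
    · have hn1 : n - 1 = (n - 2) + 1 := by omega
      have e1 : ∏ i ∈ Finset.range (n-2), f (i+1) ≤ ((((2:ℕ):ℝ≥0∞))^2)⁻¹ ^ (n-2) := by
        have h := Finset.prod_le_pow_card (Finset.range (n-2)) (fun i => f (i+1))
          ((((2:ℕ):ℝ≥0∞))^2)⁻¹ (fun i _ => by
            simp only [hf]
            apply inv_sq_anti
            have := Jset_pq_pos x₀ hJ (i+1+1) (by omega)
            omega)
        simpa using h
      rw [hn1, Finset.prod_range_succ']
      calc (∏ i ∈ Finset.range (n-2), f (i+1)) * f 0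
          ≤ ((((2:ℕ):ℝ≥0∞))^2)⁻¹ ^ (n-2) * 1 :=
            mul_le_mul' e1 (factor_le_one _ (hpos 0))
        _ = ((((2:ℕ):ℝ≥0∞))^2)⁻¹ ^ (n - 2) := mul_one _
  -- block bound
  have hap : ∀ j, j < ν n → pq x₀ (n+j) = a + j*d := hx₀.2.2.2
  set u : ℝ≥0∞ := ((a*d : ℕ) : ℝ≥0∞) with hu
  have hu1 : 1 ≤ u := by
    rw [hu]
    exact_mod_cast Nat.one_le_iff_ne_zero.mpr (by positivity)
  set Q : ℝ≥0∞ := ∏ i ∈ Finset.range M, f (n - 1 + (i+1)) with hQ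
  have hP2 : ∏ i ∈ Finset.range (ν n), f (n - 1 + i) ≤ Q := by
    have hν1 : ν n = M + 1 := by omega
    rw [hν1, Finset.prod_range_succ', hQ]
    calc (∏ i ∈ Finset.range M, f (n-1+(i+1))) * f (n-1+0)
        ≤ (∏ i ∈ Finset.range M, f (n-1+(i+1))) * 1 :=
          mul_le_mul' le_rfl (factor_le_one _ (hpos _))
      _ = _ := mul_one _
  have hQcube : Q ^ (3:ℕ) ≤ ((u^2)⁻¹) ^ M := by
    have hb : ∀ i ∈ Finset.range M, f (n-1+(i+1)) ^ (3:ℕ) ≤ (u^2)⁻¹ := by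
      intro i hi
      have hin : n - 1 + (i+1) + 1 = n + (i+1) := by omega
      have hlt : i + 1 < ν n := by
        have := Finset.mem_range.mp hi; omega
      have hdig : pq x₀ (n - 1 + (i+1) + 1) = a + (i+1)*d := by
        rw [hin]; exact hap (i+1) hlt
      simp only [hf, hdig]
      rw [← ENNReal.inv_pow, ← pow_mul, ENNReal.inv_le_inv]
      set A : ℕ := a + (i+1)*d with hA
      have hA1 : a ≤ A := Nat.le_add_right _ _
      have hA2 : d ≤ A := le_trans (Nat.le_mul_of_pos_left d (by omega)) (Nat.le_add_left _ _)
      have hA3 : 1 ≤ A := by omega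
      have hnat : (a*d)^2 ≤ A ^ (2*3) := by
        have h1 : a * d ≤ A^3 := by
          calc a * d = a * d * 1 := by ring
            _ ≤ A * A * A := Nat.mul_le_mul (Nat.mul_le_mul hA1 hA2) hA3
            _ = A^3 := by ring
        calc (a*d)^2 ≤ (A^3)^2 := Nat.pow_le_pow_left h1 2
          _ = A^(2*3) := by ring
      calc u^2 = (((a*d)^2 : ℕ) : ℝ≥0∞) := by rw [hu]; push_cast; ring
        _ ≤ ((A^(2*3) : ℕ) : ℝ≥0∞) := by exact_mod_cast hnat
        _ = ((A : ℕ) : ℝ≥0∞)^(2*3) := by push_cast; ring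
    calc Q ^ (3:ℕ) = ∏ i ∈ Finset.range M, f (n-1+(i+1)) ^ (3:ℕ) := by
          rw [hQ, Finset.prod_pow]
      _ ≤ ∏ _i ∈ Finset.range M, (u^2)⁻¹ := Finset.prod_le_prod' hb
      _ = ((u^2)⁻¹) ^ M := by rw [Finset.prod_const, Finset.card_range]
  have hD : EMetric.diam (Sset ν n a d w) ≤
      (∏ i ∈ Finset.range (n-1), f i) * Q := by
    calc EMetric.diam (Sset ν n a d w) ≤ ∏ i ∈ Finset.range (n - 1 + ν n), f i := hmaster
      _ = (∏ i ∈ Finset.range (n-1), f i) * ∏ i ∈ Finset.range (ν n), f (n - 1 + i) := hsplit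
      _ ≤ (∏ i ∈ Finset.range (n-1), f i) * Q := mul_le_mul' le_rfl hP2
  have haz : ((a:ℝ≥0∞)) ≠ 0 := by
    exact_mod_cast (by omega : a ≠ 0)
  have hQt : Q ^ t ≤ (((a:ℝ≥0∞))^(n+1))⁻¹ * (((d:ℝ≥0∞))^(n+1))⁻¹ := by
    have h1 : (Q ^ (3:ℕ)) ^ (t/3) ≤ (((u^2)⁻¹) ^ M) ^ (t/3) :=
      ENNReal.rpow_le_rpow hQcube (by positivity)
    rw [rpow_third] at h1
    have h2 : (((u^2)⁻¹) ^ M) ^ (t/3) = u ^ (-((2*M:ℝ) * (t/3))) := by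
      rw [← ENNReal.inv_pow, ← pow_mul, ← ENNReal.rpow_natCast u (2*M),
        ← ENNReal.rpow_neg, ← ENNReal.rpow_mul]
      congr 1
      push_cast
      ring
    have h3 : u ^ (-((2*M:ℝ) * (t/3))) ≤ u ^ (-((n:ℝ)+1)) := by
      apply ENNReal.rpow_le_rpow_of_exponent_le hu1
      have hMcast : (M:ℝ) = (ν n : ℝ) - 1 := by
        rw [hM]
        push_cast [Nat.cast_sub (by omega : 1 ≤ ν n)]
        ring
      rw [neg_le_neg_iff]
      calc (n:ℝ)+1 ≤ 2*t/3 * ((ν n : ℝ) - 1) := hcond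
        _ = 2*(M:ℝ)*(t/3) := by rw [hMcast]; ring
    have h4 : u ^ (-((n:ℝ)+1)) = (((a:ℝ≥0∞))^(n+1))⁻¹ * (((d:ℝ≥0∞))^(n+1))⁻¹ := by
      rw [show -((n:ℝ)+1) = -(((n+1:ℕ):ℝ)) by push_cast; ring,
        ENNReal.rpow_neg, ENNReal.rpow_natCast, hu]
      push_cast
      rw [mul_pow, ENNReal.mul_inv (Or.inl (pow_ne_zero _ haz))
        (Or.inl (ENNReal.pow_ne_top (ENNReal.natCast_ne_top a)))]
    calc Q ^ t ≤ (((u^2)⁻¹) ^ M) ^ (t/3) := h1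
      _ = u ^ (-((2*M:ℝ) * (t/3))) := h2
      _ ≤ u ^ (-((n:ℝ)+1)) := h3
      _ = _ := h4
  calc (EMetric.diam (Sset ν n a d w)) ^ t
      ≤ ((∏ i ∈ Finset.range (n-1), f i) * Q) ^ t := ENNReal.rpow_le_rpow hD ht.le
    _ = (∏ i ∈ Finset.range (n-1), f i) ^ t * Q ^ t := ENNReal.mul_rpow_of_nonneg _ _ ht.le
    _ ≤ (((((2:ℕ):ℝ≥0∞))^2)⁻¹ ^ (n-2)) ^ t *
        ((((a:ℝ≥0∞))^(n+1))⁻¹ * (((d:ℝ≥0∞))^(n+1))⁻¹) :=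
        mul_le_mul' (ENNReal.rpow_le_rpow hP1 ht.le) hQt
    _ = rr t ^ (n - 2) * ((((a:ℝ≥0∞))^(n+1))⁻¹ * (((d:ℝ≥0∞))^(n+1))⁻¹) := by
        rw [pow_rpow_comm, rr]

lemma tsum_triple (g1 g2 g3 : ℕ → ℝ≥0∞) :
    ∑' p : ℕ × ℕ × ℕ, g1 p.1 * (g2 p.2.1 * g3 p.2.2) =
      (∑' m : ℕ, g1 m) * ((∑' k : ℕ, g2 k) * (∑' l : ℕ, g3 l)) := by
  have h1 : ∑' p : ℕ × ℕ × ℕ, g1 p.1 * (g2 p.2.1 * g3 p.2.2) =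
      ∑' (m : ℕ) (q : ℕ × ℕ), g1 m * (g2 q.1 * g3 q.2) :=
    ENNReal.tsum_prod (f := fun (m : ℕ) (q : ℕ × ℕ) => g1 m * (g2 q.1 * g3 q.2))
  have h2 : ∀ m : ℕ, ∑' q : ℕ × ℕ, g1 m * (g2 q.1 * g3 q.2) =
      g1 m * ((∑' k : ℕ, g2 k) * (∑' l : ℕ, g3 l)) := by
    intro m
    rw [ENNReal.tsum_mul_left]
    congr 1
    have h3 : ∑' q : ℕ × ℕ, g2 q.1 * g3 q.2 = ∑' (k : ℕ) (l : ℕ), g2 k * g3 l :=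
      ENNReal.tsum_prod (f := fun (k : ℕ) (l : ℕ) => g2 k * g3 l)
    rw [h3]
    simp only [ENNReal.tsum_mul_left, ENNReal.tsum_mul_right]
  rw [h1]
  simp only [h2]
  rw [ENNReal.tsum_mul_right]

/-- Existence of a covering set containing a given point of `Fset`. -/
lemma exists_S (ν : ℕ → ℕ) (x : ℝ) (hx : x ∈ Fset ν) (N : ℕ)
    (h2 : ∀ n, N ≤ n → 2 ≤ ν n) :
    ∃ n a d, N ≤ n ∧ 1 ≤ n ∧ 1 ≤ a ∧ 1 ≤ d ∧
      ∃ w : Fin (n-1) → Fin a, x ∈ Sset ν n a d w := by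
  obtain ⟨n, hNn, hn1, d', hAP⟩ := hx.2 N
  have hJ : x ∈ Jset := hx.1
  set a := pq x n with hadef
  have hss : pq x n < pq x (n+1) := hJ.2.2 n hn1
  set d := pq x (n+1) - pq x n with hddef
  have hd1 : 1 ≤ d := by omega
  have ha1 : 1 ≤ a := le_trans hn1 (Jset_pq_pos x hJ n hn1)
  have hd' : d' = (d : ℤ) := by
    have h0 := hAP 0 (by have := h2 n hNn; omega)
    simp only [Nat.add_zero] at h0
    omega
  have hval : ∀ j, j < ν n → pq x (n+j) = a + j*d := by
    intro j
    induction j with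
    | zero => intro _; simp [hadef]
    | succ k ih =>
      intro hk
      have hk' : k < ν n := by omega
      have hik := ih hk'
      have h0 := hAP k (by omega)
      rw [hd'] at h0
      have : (pq x (n+k+1) : ℤ) = (pq x (n+k) : ℤ) + d := by omega
      have hcast : (pq x (n+(k+1)) : ℤ) = ((a + (k+1)*d : ℕ) : ℤ) := by
        rw [show n+(k+1) = n+k+1 from rfl, this, hik]
        push_cast
        ring
      exact_mod_cast hcast
  refine ⟨n, a, d, hNn, hn1, ha1, hd1, ?_⟩
  have hw : ∀ i : Fin (n-1), pq x (i.1+1) < a := by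
    intro i
    exact Jset_pq_strict x hJ (by omega) (by omega)
  exact ⟨fun i => ⟨pq x (i.1+1), hw i⟩, hx, rfl, fun i => rfl, hval⟩

/-- The index type of the stage-`N` cover. -/
def covIdx (N : ℕ) : Type := Σ p : ℕ × ℕ × ℕ, (Fin (N + p.1 - 1) → Fin (p.2.1 + 1))

instance covIdx_countable (N : ℕ) : Countable (covIdx N) := by
  unfold covIdx; infer_instance

def covSet (ν : ℕ → ℕ) (N : ℕ) (i : covIdx N) : Set ℝ :=
  Sset ν (N + i.1.1) (i.1.2.1 + 1) (i.1.2.2 + 1) i.2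

lemma cover_subset (ν : ℕ → ℕ) (N : ℕ) (h2 : ∀ n, N ≤ n → 2 ≤ ν n) :
    Fset ν ⊆ ⋃ i : covIdx N, covSet ν N i := by
  intro x hx
  obtain ⟨n, a, d, hNn, hn1, ha, hd, w₀, hmem⟩ := exists_S ν x hx N h2
  refine Set.mem_iUnion.mpr ?_
  obtain ⟨m, rfl⟩ : ∃ m, n = N + m := ⟨n - N, by omega⟩
  obtain ⟨a', rfl⟩ : ∃ a', a = a' + 1 := ⟨a - 1, by omega⟩
  obtain ⟨d', rfl⟩ : ∃ d', d = d' + 1 := ⟨d - 1, by omega⟩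
  exact ⟨⟨(m, a', d'), w₀⟩, hmem⟩

/-- The tail series. -/
noncomputable def Etail : ℝ≥0∞ := ∑' k : ℕ, ((((k+1:ℕ)):ℝ≥0∞)^2)⁻¹

lemma Etail_ne_top : Etail ≠ ⊤ := by
  have heq : ∀ k : ℕ, ((((k+1:ℕ)):ℝ≥0∞)^2)⁻¹ = (((((k+1:ℕ):ℝ≥0))^2)⁻¹ : ℝ≥0) := by
    intro k
    rw [ENNReal.coe_inv (by positivity), ENNReal.coe_pow, ENNReal.coe_natCast]
  rw [Etail]
  simp only [heq]
  rw [ENNReal.tsum_coe_ne_top_iff_summable]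
  have : Summable (fun k : ℕ => (((k:ℝ≥0)+1)^2)⁻¹) := by
    rw [← NNReal.summable_coe]
    have h2 : Summable (fun k : ℕ => 1/((k:ℝ))^2) := Real.summable_one_div_nat_pow.mpr one_lt_two
    have h3 := (summable_nat_add_iff 1).mpr h2
    apply h3.congr
    intro k
    push_cast
    rw [one_div]
  apply this.congr
  intro k
  congr 1
  push_cast
  ring

lemma covSum_le (ν : ℕ → ℕ) (t : ℝ) (ht : 0 < t) (N : ℕ) (hN : 2 ≤ N)
    (hcond : ∀ n, N ≤ n → (n + 1 : ℝ) ≤ 2*t/3 * ((ν n : ℝ) - 1)) :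
    ∑' i : covIdx N, (EMetric.diam (covSet ν N i)) ^ t ≤
      (1 - rr t)⁻¹ * (Etail * Etail) := by
  have key : ∀ p : ℕ × ℕ × ℕ,
      ∑' w : (Fin (N + p.1 - 1) → Fin (p.2.1 + 1)),
        (EMetric.diam (covSet ν N ⟨p, w⟩)) ^ t ≤
      rr t ^ p.1 * (((((p.2.1+1:ℕ)):ℝ≥0∞)^2)⁻¹ * ((((p.2.2+1:ℕ)):ℝ≥0∞)^2)⁻¹) := by
    rintro ⟨m, a', d'⟩
    set n := N + m with hn
    set a := a' + 1 with ha
    set d := d' + 1 with hd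
    have hn1 : 1 ≤ n := by omega
    have hbound : ∀ w : Fin (n - 1) → Fin a,
        (EMetric.diam (covSet ν N ⟨(m,a',d'), w⟩)) ^ t ≤
        rr t ^ (n-2) * ((((a:ℝ≥0∞))^(n+1))⁻¹ * (((d:ℝ≥0∞))^(n+1))⁻¹) := by
      intro w
      exact diam_S_rpow_le ν n a d w t ht hn1 (by omega) (by omega)
        (hcond n (by omega))
    have hcard : Fintype.card (Fin (n-1) → Fin a) = a ^ (n-1) := by
      rw [Fintype.card_fun, Fintype.card_fin, Fintype.card_fin]
    calc ∑' w : (Fin (n-1) → Fin a), (EMetric.diam (covSet ν N ⟨(m,a',d'), w⟩)) ^ t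
        ≤ ∑' _w : (Fin (n-1) → Fin a),
            rr t ^ (n-2) * ((((a:ℝ≥0∞))^(n+1))⁻¹ * (((d:ℝ≥0∞))^(n+1))⁻¹) :=
          ENNReal.tsum_le_tsum hbound
      _ = (a:ℝ≥0∞) ^ (n-1) * (rr t ^ (n-2) * ((((a:ℝ≥0∞))^(n+1))⁻¹ * (((d:ℝ≥0∞))^(n+1))⁻¹)) := by
          rw [tsum_fintype, Finset.sum_const, Finset.card_univ, hcard]
          rw [nsmul_eq_mul]
          congr 1
          push_cast
          ring
      _ ≤ rr t ^ m * (((((a:ℕ)):ℝ≥0∞)^2)⁻¹ * ((((d:ℕ)):ℝ≥0∞)^2)⁻¹) := by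
          have haz : ((a:ℝ≥0∞)) ≠ 0 := by exact_mod_cast (by omega : a ≠ 0)
          have hat : ((a:ℝ≥0∞)) ≠ ⊤ := ENNReal.natCast_ne_top a
          have e1 : (a:ℝ≥0∞) ^ (n-1) * (((a:ℝ≥0∞))^(n+1))⁻¹ = (((a:ℝ≥0∞))^2)⁻¹ := by
            have hsplit : (a:ℝ≥0∞)^(n+1) = (a:ℝ≥0∞)^(n-1) * ((a:ℝ≥0∞))^2 := by
              rw [← pow_add]
              congr 1
              omega
            rw [hsplit, ENNReal.mul_inv (Or.inl (pow_ne_zero _ haz))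
                (Or.inl (ENNReal.pow_ne_top hat)), ← mul_assoc,
              ENNReal.mul_inv_cancel (pow_ne_zero _ haz) (ENNReal.pow_ne_top hat), one_mul]
          have e2 : (((d:ℝ≥0∞))^(n+1))⁻¹ ≤ (((d:ℝ≥0∞))^2)⁻¹ := by
            apply ENNReal.inv_le_inv.mpr
            apply pow_le_pow_right₀ (by exact_mod_cast (by omega : 1 ≤ d)) (by omega)
          have e3 : rr t ^ (n-2) ≤ rr t ^ m := by
            apply pow_le_pow_right_of_le_one' (rr_lt_one ht).le (by omega)
          calc (a:ℝ≥0∞) ^ (n-1) * (rr t ^ (n-2) * ((((a:ℝ≥0∞))^(n+1))⁻¹ * (((d:ℝ≥0∞))^(n+1))⁻¹))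
              = rr t ^ (n-2) * (((a:ℝ≥0∞) ^ (n-1) * (((a:ℝ≥0∞))^(n+1))⁻¹) * (((d:ℝ≥0∞))^(n+1))⁻¹) := by
                ring
            _ = rr t ^ (n-2) * ((((a:ℝ≥0∞))^2)⁻¹ * (((d:ℝ≥0∞))^(n+1))⁻¹) := by rw [e1]
            _ ≤ rr t ^ m * ((((a:ℝ≥0∞))^2)⁻¹ * (((d:ℝ≥0∞))^2)⁻¹) := by
                apply mul_le_mul' e3
                exact mul_le_mul' le_rfl e2
  calc ∑' i : covIdx N, (EMetric.diam (covSet ν N i)) ^ t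
      = ∑' p : ℕ × ℕ × ℕ, ∑' w : (Fin (N + p.1 - 1) → Fin (p.2.1 + 1)),
          (EMetric.diam (covSet ν N ⟨p, w⟩)) ^ t := ENNReal.tsum_sigma' _
    _ ≤ ∑' p : ℕ × ℕ × ℕ,
          rr t ^ p.1 * (((((p.2.1+1:ℕ)):ℝ≥0∞)^2)⁻¹ * ((((p.2.2+1:ℕ)):ℝ≥0∞)^2)⁻¹) :=
        ENNReal.tsum_le_tsum key
    _ = (∑' m : ℕ, rr t ^ m) * (Etail * Etail) :=
        tsum_triple (fun m => rr t ^ m) (fun k => ((((k+1:ℕ)):ℝ≥0∞)^2)⁻¹)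
          (fun l => ((((l+1:ℕ)):ℝ≥0∞)^2)⁻¹)
    _ = (1 - rr t)⁻¹ * (Etail * Etail) := by rw [ENNReal.tsum_geometric]

/-- Theorem 1.1 (case `α = ∞`): if `liminf ν_n / n = ∞` then the `F`-set has
Hausdorff dimension `0`. -/
theorem stmt1 (ν : ℕ → ℕ) (hν1 : ∀ n, 1 ≤ ν n) (hmono : Monotone ν)
    (hα : Filter.liminf (fun n : ℕ => (ν n : ℝ≥0∞) / (n : ℝ≥0∞)) Filter.atTop = ⊤) :
    dimH (Fset ν) = 0 := by
  have main : ∀ t : ℝ≥0, 0 < t → t ≤ 1 → dimH (Fset ν) ≤ (t : ℝ≥0∞) := by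
    intro t ht ht1
    set tr : ℝ := (t : ℝ) with htr
    have htr0 : 0 < tr := ht
    obtain ⟨K, hKr, hK2⟩ : ∃ K : ℕ, 3/tr + 1 ≤ (K : ℝ) ∧ 2 ≤ K := by
      refine ⟨⌈3/tr⌉₊ + 1, ?_, ?_⟩
      · push_cast
        have := Nat.le_ceil (3/tr)
        linarith
      · have h0 : 0 < 3/tr := by positivity
        have := Nat.ceil_pos.mpr h0
        omega
    have hev : ∀ᶠ n in atTop, K * n ≤ ν n ∧ 1 ≤ n := by
      have h1 : ∀ᶠ n in atTop, ((K:ℕ):ℝ≥0∞) < (ν n : ℝ≥0∞) / (n : ℝ≥0∞) := by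
        apply Filter.eventually_lt_of_lt_liminf _ Filter.isBounded_ge_of_bot
        rw [hα]
        exact ENNReal.natCast_lt_top K
      filter_upwards [h1, Filter.eventually_ge_atTop 1] with n hn h1n
      refine ⟨?_, h1n⟩
      have h2 : ((K:ℕ):ℝ≥0∞) * (n : ℝ≥0∞) < (ν n : ℝ≥0∞) :=
        (ENNReal.lt_div_iff_mul_lt (Or.inl (by exact_mod_cast (by omega : n ≠ 0)))
          (Or.inl (ENNReal.natCast_ne_top n))).mp hn
      have h3 : ((K * n : ℕ) : ℝ≥0∞) < ((ν n : ℕ) : ℝ≥0∞) := by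
        rw [Nat.cast_mul]
        exact h2
      exact_mod_cast h3.le
    obtain ⟨N₀, hN₀⟩ := Filter.eventually_atTop.mp hev
    have hcond : ∀ n, N₀ ≤ n → (n + 1 : ℝ) ≤ 2*tr/3 * ((ν n : ℝ) - 1) := by
      intro n hn
      obtain ⟨hKn, hn1⟩ := hN₀ n hn
      have hν : ((K:ℝ) * n) ≤ (ν n : ℝ) := by exact_mod_cast hKn
      have hn1' : (1:ℝ) ≤ (n:ℝ) := by exact_mod_cast hn1
      have hfield : (2*tr/3) * ((3/tr) * n) = 2 * n := by
        field_simp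
      have h5 : (3/tr) * n + n - 1 ≤ (ν n : ℝ) - 1 := by nlinarith
      have h6 : (2*tr/3) * ((3/tr) * n + n - 1) ≤ 2*tr/3 * ((ν n : ℝ) - 1) := by
        apply mul_le_mul_of_nonneg_left _ (by positivity)
        linarith
      have h7 : (2*tr/3) * ((3/tr) * n + n - 1) = 2*n + (2*tr/3) * (n - 1) := by
        have : (2*tr/3) * ((3/tr) * n + n - 1) = (2*tr/3) * ((3/tr)*n) + (2*tr/3)*(n-1) := by
          ring
        rw [this, hfield]
      have h8 : 0 ≤ (2*tr/3) * (n - 1) := by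
        apply mul_nonneg (by positivity)
        linarith
      linarith
    have h2ν : ∀ N, N₀ ≤ N → ∀ n, N ≤ n → 2 ≤ ν n := by
      intro N hN n hn
      obtain ⟨hKn, hn1⟩ := hN₀ n (le_trans hN hn)
      nlinarith
    apply dimH_le_of_hausdorffMeasure_ne_top (d := t)
    have hC : (1 - rr tr)⁻¹ * (Etail * Etail) ≠ ⊤ := by
      apply ENNReal.mul_ne_top
      · rw [Ne, ENNReal.inv_eq_top]
        intro h
        exact absurd (tsub_eq_zero_iff_le.mp h) (not_le.mpr (rr_lt_one htr0))
      · exact ENNReal.mul_ne_top Etail_ne_top Etail_ne_top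
    have hμ : μH[tr] (Fset ν) ≤ (1 - rr tr)⁻¹ * (Etail * Etail) := by
      have hmain := MeasureTheory.Measure.hausdorffMeasure_le_liminf_tsum
        (ι := covIdx) tr (Fset ν) (l := Filter.atTop)
        (fun N : ℕ => ((N:ℝ≥0∞))⁻¹) ENNReal.tendsto_inv_nat_nhds_zero
        (fun N => covSet ν N) ?_ ?_
      · refine hmain.trans ?_
        apply Filter.liminf_le_of_frequently_le'
        apply Filter.Eventually.frequently
        filter_upwards [Filter.eventually_ge_atTop N₀, Filter.eventually_ge_atTop 2]
          with N h1 h2'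
        exact covSum_le ν tr htr0 N h2' (fun n hn => hcond n (le_trans h1 hn))
      · -- diameters
        filter_upwards [Filter.eventually_ge_atTop 1] with N hN1
        intro i
        have hn1 : 1 ≤ N + i.1.1 := by omega
        calc EMetric.diam (covSet ν N i)
            ≤ (((N + i.1.1 : ℕ):ℝ≥0∞)^2)⁻¹ :=
              diam_S_le_mesh ν _ _ _ i.2 hn1 (hν1 _)
          _ ≤ (((N:ℕ):ℝ≥0∞)^2)⁻¹ := inv_sq_anti (by omega)
          _ ≤ ((N:ℝ≥0∞))⁻¹ := by
              apply ENNReal.inv_le_inv.mpr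
              exact le_self_pow₀ (by exact_mod_cast hN1) (by norm_num)
      · -- covering
        filter_upwards [Filter.eventually_ge_atTop N₀] with N h1
        exact cover_subset ν N (h2ν N h1)
    exact ne_top_of_le_ne_top hC hμ
  by_contra hne
  obtain ⟨j, hj⟩ := ENNReal.exists_inv_nat_lt hne
  have hle := main ((j:ℝ≥0)+1)⁻¹ (by positivity) (by
    rw [inv_le_one₀ (by positivity)]
    exact le_add_of_nonneg_left (by positivity))
  have hcast : ((((j:ℝ≥0)+1)⁻¹ : ℝ≥0) : ℝ≥0∞) = ((j:ℝ≥0∞)+1)⁻¹ := by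
    rw [ENNReal.coe_inv (by positivity)]
    push_cast
    rfl
  rw [hcast] at hle
  have hmono2 : ((j:ℝ≥0∞)+1)⁻¹ ≤ (j:ℝ≥0∞)⁻¹ :=
    ENNReal.inv_le_inv.mpr (le_add_of_nonneg_right (by positivity))
  exact absurd hj (not_lt.mpr (hle.trans hmono2))
end

section
/- Let s ∈ (0, 1/2] be a real number and let a, ℓ be positive integers with 2sℓ > 1. Then ∑_{M=1}^{∞} ∏_{i=0}^{ℓ} (a + iM)^{−2s} ≤ a^{−(2sℓ−1)} · (2sℓ)/(2sℓ − 1). -/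
open scoped ENNReal NNReal

/-- Lemma 2.2: for `s ∈ (0,1/2]` and positive integers `a, ℓ` with `2sℓ > 1`,
`∑_{M=1}^∞ ∏_{i=0}^{ℓ} (a+iM)^{-2s} ≤ a^{-(2sℓ-1)} · (2sℓ)/(2sℓ-1)`. -/
theorem stmt9 (s : ℝ) (hs0 : 0 < s) (hs : s ≤ 1 / 2) (a ℓ : ℕ) (ha : 1 ≤ a) (hℓ : 1 ≤ ℓ)
    (h : 1 < 2 * s * (ℓ : ℝ)) :
    (∑' M : ℕ, ∏ i ∈ Finset.range (ℓ + 1),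
        ((a + i * (M + 1) : ℕ) : ℝ≥0∞) ^ (-(2 * s))) ≤
      (a : ℝ≥0∞) ^ (-(2 * s * (ℓ : ℝ) - 1)) *
        ENNReal.ofReal ((2 * s * (ℓ : ℝ)) / (2 * s * (ℓ : ℝ) - 1)) := by
  set p : ℝ := 2 * s * (ℓ : ℝ) with hp
  have hp1 : 1 < p := h
  have hp0 : 0 < p - 1 := by linarith
  have ha0 : (0:ℝ) < (a:ℝ) := by exact_mod_cast Nat.pos_of_ne_zero (by omega)
  have ha1 : (1:ℝ) ≤ (a:ℝ) := by exact_mod_cast ha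
  -- real version of the summand
  set f : ℕ → ℝ := fun M => ∏ i ∈ Finset.range (ℓ + 1),
      ((a + i * (M + 1) : ℕ) : ℝ) ^ (-(2 * s)) with hf
  have hfnn : ∀ M, 0 ≤ f M := fun M =>
    Finset.prod_nonneg fun i _ => Real.rpow_nonneg (by positivity) _
  -- bound each summand
  have key : ∀ M : ℕ, f M ≤ ((a:ℝ) + (M + 1)) ^ (-p) := by
    intro M
    have hX0 : (0:ℝ) < (a:ℝ) + (M + 1) := by positivity
    have hstep : ∀ i ∈ Finset.range ℓ,
        ((a + (i+1) * (M + 1) : ℕ) : ℝ) ^ (-(2 * s)) ≤ ((a:ℝ) + (M + 1)) ^ (-(2 * s)) := by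
      intro i _
      apply Real.rpow_le_rpow_of_nonpos hX0
      · push_cast
        nlinarith [Nat.cast_nonneg (α := ℝ) i, Nat.cast_nonneg (α := ℝ) M]
      · linarith
    calc f M = (∏ i ∈ Finset.range ℓ, ((a + (i+1) * (M + 1) : ℕ) : ℝ) ^ (-(2 * s)))
          * ((a + 0 * (M + 1) : ℕ) : ℝ) ^ (-(2 * s)) := Finset.prod_range_succ' _ _
      _ ≤ (∏ _i ∈ Finset.range ℓ, ((a:ℝ) + (M + 1)) ^ (-(2 * s))) * 1 := by
          apply mul_le_mul
          · exact Finset.prod_le_prod (fun i _ => Real.rpow_nonneg (by positivity) _) hstep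
          · apply Real.rpow_le_one_of_one_le_of_nonpos
            · simpa using ha1
            · linarith
          · exact Real.rpow_nonneg (by positivity) _
          · exact Finset.prod_nonneg fun i _ => Real.rpow_nonneg (by positivity) _
      _ = (((a:ℝ) + (M + 1)) ^ (-(2 * s))) ^ (ℓ:ℕ) := by
          rw [Finset.prod_const, mul_one, Finset.card_range]
      _ = ((a:ℝ) + (M + 1)) ^ (-p) := by
          rw [← Real.rpow_natCast (((a:ℝ) + (M + 1)) ^ (-(2 * s))) ℓ,
            ← Real.rpow_mul hX0.le]
          congr 1
          rw [hp]; ring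
  -- partial sums of the majorant are bounded by the integral
  set C : ℝ := (a:ℝ) ^ (1 - p) / (p - 1) with hC
  have hsum : ∀ n : ℕ, ∑ M ∈ Finset.range n, ((a:ℝ) + (M + 1)) ^ (-p) ≤ C := by
    intro n
    have hanti : AntitoneOn (fun x : ℝ => x ^ (-p)) (Set.Icc (a:ℝ) ((a:ℝ) + n)) := by
      intro x hx y hy hxy
      exact Real.rpow_le_rpow_of_nonpos (lt_of_lt_of_le ha0 hx.1) hxy (by linarith)
    have hint := hanti.sum_le_integral
    have hval : (∫ x in (a:ℝ)..((a:ℝ) + n), x ^ (-p))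
        = (((a:ℝ) + n) ^ (-p + 1) - (a:ℝ) ^ (-p + 1)) / (-p + 1) := by
      apply integral_rpow
      right
      constructor
      · intro hcon; rw [neg_eq_iff_eq_neg] at hcon; linarith
      · intro hcon
        rw [Set.mem_uIcc] at hcon
        rcases hcon with ⟨h1, _⟩ | ⟨_, h2⟩ <;> [linarith; nlinarith [Nat.cast_nonneg (α := ℝ) n]]
    calc ∑ M ∈ Finset.range n, ((a:ℝ) + (M + 1)) ^ (-p)
        = ∑ M ∈ Finset.range n, (fun x : ℝ => x ^ (-p)) ((a:ℝ) + ((M:ℕ) + 1 : ℕ)) := by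
          apply Finset.sum_congr rfl; intro i _; push_cast; ring_nf
      _ ≤ ∫ x in (a:ℝ)..((a:ℝ) + n), x ^ (-p) := hint
      _ = (((a:ℝ) + n) ^ (-p + 1) - (a:ℝ) ^ (-p + 1)) / (-p + 1) := hval
      _ = ((a:ℝ) ^ (1 - p) - ((a:ℝ) + n) ^ (1 - p)) / (p - 1) := by
          rw [div_eq_div_iff (by linarith) (by positivity)]
          ring_nf
      _ ≤ C := by
          rw [hC]
          gcongr
          have := Real.rpow_nonneg (by positivity : (0:ℝ) ≤ (a:ℝ) + n) (1 - p)
          linarith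
  have hsummable : Summable f :=
    summable_of_sum_range_le hfnn fun n =>
      (Finset.sum_le_sum fun i _ => key i).trans (hsum n)
  have htsum : ∑' M, f M ≤ C :=
    Real.tsum_le_of_sum_range_le hfnn fun n =>
      (Finset.sum_le_sum fun i _ => key i).trans (hsum n)
  -- rewrite LHS in terms of ofReal
  have hterm : ∀ M : ℕ, (∏ i ∈ Finset.range (ℓ + 1),
      ((a + i * (M + 1) : ℕ) : ℝ≥0∞) ^ (-(2 * s))) = ENNReal.ofReal (f M) := by
    intro M
    rw [hf]
    rw [ENNReal.ofReal_prod_of_nonneg fun i _ => Real.rpow_nonneg (by positivity) _]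
    apply Finset.prod_congr rfl
    intro i _
    have hpos : (0:ℝ) < ((a + i * (M + 1) : ℕ) : ℝ) := by
      have : 0 < a + i * (M + 1) := by omega
      exact_mod_cast this
    rw [← ENNReal.ofReal_rpow_of_pos hpos, ENNReal.ofReal_natCast]
  calc (∑' M : ℕ, ∏ i ∈ Finset.range (ℓ + 1),
        ((a + i * (M + 1) : ℕ) : ℝ≥0∞) ^ (-(2 * s)))
      = ∑' M : ℕ, ENNReal.ofReal (f M) := by exact tsum_congr hterm
    _ = ENNReal.ofReal (∑' M, f M) := (ENNReal.ofReal_tsum_of_nonneg hfnn hsummable).symm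
    _ ≤ ENNReal.ofReal ((a:ℝ) ^ (-(p - 1)) * (p / (p - 1))) := by
        apply ENNReal.ofReal_le_ofReal
        refine htsum.trans ?_
        rw [hC, div_eq_mul_one_div]
        have he : (a:ℝ) ^ (1 - p) = (a:ℝ) ^ (-(p - 1)) := by ring_nf
        rw [he]
        gcongr
        all_goals first
          | exact Real.rpow_nonneg ha0.le _
          | linarith
    _ = (a : ℝ≥0∞) ^ (-(2 * s * (ℓ : ℝ) - 1)) *
        ENNReal.ofReal ((2 * s * (ℓ : ℝ)) / (2 * s * (ℓ : ℝ) - 1)) := by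
        rw [ENNReal.ofReal_mul (Real.rpow_nonneg ha0.le _),
          ← ENNReal.ofReal_rpow_of_pos ha0, ENNReal.ofReal_natCast]
end

section
/- Let c, n be integers with c ≥ 2 and n ≥ 2, let s ∈ (0, 1/2] be a real number, and let γ be a real number with γ ≥ 2 − (n−1)(2s−1). Then the sum of 1/((a_1 a_2 ⋯ a_{n−1})^{2s} · a_n^{γ}) over all n-tuples (a_1, …, a_n) of positive integers satisfying c ≤ a_1 < a_2 < ⋯ < a_n is at most (c−1)^{−(γ + n(2s−1) − 2s)}. -/
open scoped ENNReal NNReal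

private lemma tele_le (g : ℕ → ℝ≥0∞) (hg : ∀ k, g (k + 1) ≤ g k) :
    (∑' k, (g k - g (k + 1))) ≤ g 0 := by
  rw [ENNReal.tsum_eq_iSup_nat]
  refine iSup_le fun N => ?_
  have h : ∀ N, (∑ k ∈ Finset.range N, (g k - g (k + 1))) + g N = g 0 := by
    intro N
    induction N with
    | zero => simp
    | succ N ih =>
      rw [Finset.sum_range_succ, add_assoc, tsub_add_cancel_of_le (hg N), ih]
  calc (∑ k ∈ Finset.range N, (g k - g (k + 1))) ≤ _ + g N := le_self_add
    _ = g 0 := h N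

private lemma lemA (t : ℝ) (ht : 2 ≤ t) (m : ℕ) (hm : 1 ≤ m) :
    (∑' a : ℕ, if m < a then ((a : ℝ≥0∞)) ^ (-t) else 0) ≤ (m : ℝ≥0∞) ^ (-(t - 1)) := by
  have hm0 : ((m : ℝ≥0∞)) ≠ 0 := by
    simp; omega
  have hre : (∑' a : ℕ, if m < a then ((a : ℝ≥0∞)) ^ (-t) else 0)
      = ∑' k : ℕ, (((k + m + 1 : ℕ) : ℝ≥0∞)) ^ (-t) := by
    apply tsum_eq_tsum_of_ne_zero_bij (fun x => x.1 + m + 1)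
    · intro x y hxy
      ext
      simpa using hxy
    · intro a ha
      simp only [Function.mem_support] at ha
      have hma : m < a := by by_contra h; simp [h] at ha
      refine ⟨⟨a - (m + 1), ?_⟩, by simp; omega⟩
      simp only [Function.mem_support]
      simp [ENNReal.rpow_eq_zero_iff]
    · intro x
      rw [if_pos (by omega)]
  rw [hre]
  set g : ℕ → ℝ≥0∞ := fun k => ((k + m : ℕ) : ℝ≥0∞)⁻¹ with hgdef
  have hganti : ∀ k, g (k + 1) ≤ g k := by
    intro k
    apply ENNReal.inv_le_inv.mpr
    exact Nat.cast_le.mpr (by omega)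
  have key : ∀ k : ℕ, (((k + m + 1 : ℕ) : ℝ≥0∞)) ^ (-t)
      ≤ (m : ℝ≥0∞) ^ (-(t - 2)) * (g k - g (k + 1)) := by
    intro k
    have hx1 : (1 : ℝ) ≤ ((k + m : ℕ) : ℝ) := by exact_mod_cast by omega
    have h1 : (((k + m + 1 : ℕ)) : ℝ≥0∞) ^ (-t)
        = ENNReal.ofReal (((k + m + 1 : ℕ) : ℝ) ^ (-t)) := by
      rw [← ENNReal.ofReal_rpow_of_pos (by positivity), ENNReal.ofReal_natCast]
    have h2 : (m : ℝ≥0∞) ^ (-(t - 2)) = ENNReal.ofReal (((m : ℕ) : ℝ) ^ (-(t - 2))) := by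
      rw [← ENNReal.ofReal_rpow_of_pos (by exact_mod_cast by omega), ENNReal.ofReal_natCast]
    have h3 : g k - g (k + 1)
        = ENNReal.ofReal (((k + m : ℕ) : ℝ)⁻¹ - ((k + 1 + m : ℕ) : ℝ)⁻¹) := by
      rw [ENNReal.ofReal_sub _ (by positivity), ENNReal.ofReal_inv_of_pos (by exact_mod_cast by omega),
        ENNReal.ofReal_inv_of_pos (by exact_mod_cast by omega), ENNReal.ofReal_natCast,
        ENNReal.ofReal_natCast]
    rw [h1, h2, h3, ← ENNReal.ofReal_mul (by positivity)]
    apply ENNReal.ofReal_le_ofReal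
    -- real inequality
    set x : ℝ := ((k + m : ℕ) : ℝ) with hxdef
    have hx0 : (0 : ℝ) < x := by linarith
    have hA : ((k + m + 1 : ℕ) : ℝ) = x + 1 := by push_cast [hxdef]; ring
    have hB : ((k + 1 + m : ℕ) : ℝ) = x + 1 := by push_cast [hxdef]; ring
    rw [hA, hB]
    have hxm : ((m : ℕ) : ℝ) ≤ x := by exact_mod_cast Nat.cast_le.mpr (by omega)
    have e1 : (x + 1) ^ (-t) = (x + 1) ^ (-(t - 2)) * (x + 1) ^ (-(2:ℝ)) := by
      rw [← Real.rpow_add (by linarith)]; ring_nf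
    have e2 : (x + 1) ^ (-(t - 2)) ≤ ((m : ℕ) : ℝ) ^ (-(t - 2)) := by
      apply Real.rpow_le_rpow_of_nonpos (by exact_mod_cast by omega) (by linarith) (by linarith)
    have hxne : x ≠ 0 := ne_of_gt hx0
    have hx1ne : x + 1 ≠ 0 := by positivity
    have e3 : (x + 1) ^ (-(2:ℝ)) ≤ x⁻¹ - (x + 1)⁻¹ := by
      calc (x + 1) ^ (-(2:ℝ)) = ((x + 1) ^ (2:ℕ))⁻¹ := by
            rw [Real.rpow_neg (by linarith), ← Real.rpow_natCast (x+1) 2]; norm_num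
        _ ≤ (x * (x + 1))⁻¹ := by
            apply inv_anti₀ (by positivity); nlinarith
        _ = x⁻¹ - (x + 1)⁻¹ := by
            field_simp
            ring
    calc (x + 1) ^ (-t) = (x + 1) ^ (-(t - 2)) * (x + 1) ^ (-(2:ℝ)) := e1
      _ ≤ ((m : ℕ) : ℝ) ^ (-(t - 2)) * (x⁻¹ - (x + 1)⁻¹) := by
          apply mul_le_mul e2 e3 (by positivity) (by positivity)
  calc (∑' k : ℕ, (((k + m + 1 : ℕ) : ℝ≥0∞)) ^ (-t))
      ≤ ∑' k : ℕ, (m : ℝ≥0∞) ^ (-(t - 2)) * (g k - g (k + 1)) :=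
        ENNReal.tsum_le_tsum key
    _ = (m : ℝ≥0∞) ^ (-(t - 2)) * ∑' k, (g k - g (k + 1)) := ENNReal.tsum_mul_left
    _ ≤ (m : ℝ≥0∞) ^ (-(t - 2)) * g 0 := mul_le_mul_right (tele_le g hganti) _
    _ = (m : ℝ≥0∞) ^ (-(t - 1)) := by
        have : g 0 = (m : ℝ≥0∞) ^ (-(1:ℝ)) := by
          rw [hgdef]; simp [ENNReal.rpow_neg_one]
        rw [this, ← ENNReal.rpow_add _ _ hm0 (ENNReal.natCast_ne_top m)]
        ring_nf


private lemma cons_strictMono_iff {n : ℕ} (x : ℕ) (b : Fin (n + 1) → ℕ) :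
    StrictMono (Fin.cons x b : Fin (n + 2) → ℕ) ↔ x < b 0 ∧ StrictMono b := by
  rw [Fin.strictMono_iff_lt_succ, Fin.strictMono_iff_lt_succ]
  constructor
  · intro h
    refine ⟨by simpa using h 0, fun i => ?_⟩
    have := h i.succ
    rwa [← Fin.succ_castSucc, Fin.cons_succ, Fin.cons_succ] at this
  · rintro ⟨h0, h⟩ i
    induction i using Fin.cases with
    | zero => simpa using h0
    | succ j =>
      rw [← Fin.succ_castSucc, Fin.cons_succ, Fin.cons_succ]
      exact h j

private noncomputable def Wt (n : ℕ) (s γ : ℝ) (a : Fin (n + 1) → ℕ) : ℝ≥0∞ :=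
  ∏ i : Fin (n + 1), if (i : ℕ) = n then ((a i : ℝ≥0∞)) ^ (-γ)
    else ((a i : ℝ≥0∞)) ^ (-(2 * s))

private def SS (n c : ℕ) : Set (Fin (n + 1) → ℕ) := {a | StrictMono a ∧ c ≤ a 0}

private lemma prod_cons_eq {n : ℕ} (s γ : ℝ) (x : ℕ) (b : Fin (n + 1) → ℕ) :
    Wt (n + 1) s γ (Fin.cons x b) = ((x : ℝ≥0∞)) ^ (-(2 * s)) * Wt n s γ b := by
  unfold Wt
  rw [Fin.prod_univ_succ]
  have h0 : (if ((0 : Fin (n + 2)) : ℕ) = n + 1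
        then (((Fin.cons x b : Fin (n + 2) → ℕ) 0 : ℝ≥0∞)) ^ (-γ)
        else (((Fin.cons x b : Fin (n + 2) → ℕ) 0 : ℝ≥0∞)) ^ (-(2 * s)))
      = ((x : ℝ≥0∞)) ^ (-(2 * s)) := by
    rw [if_neg (by simp), Fin.cons_zero]
  rw [h0]
  congr 1
  apply Finset.prod_congr rfl
  intro i _
  rw [Fin.cons_succ]
  exact if_congr (by rw [Fin.val_succ]; omega) rfl rfl

private lemma mem_SS_cons_iff {n c : ℕ} (x : ℕ) (b : Fin (n + 1) → ℕ) :
    (Fin.cons x b : Fin (n + 2) → ℕ) ∈ SS (n + 1) c ↔ (c ≤ x ∧ b ∈ SS n (x + 1)) := by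
  unfold SS
  simp only [Set.mem_setOf_eq, cons_strictMono_iff, Fin.cons_zero]
  constructor
  · rintro ⟨⟨h1, h2⟩, h3⟩
    exact ⟨h3, h2, h1⟩
  · rintro ⟨h1, h2, h3⟩
    exact ⟨⟨h3, h2⟩, h1⟩

private lemma main_ind (s : ℝ) (hs0 : 0 < s) (hs : s ≤ 1 / 2) :
    ∀ n c : ℕ, 2 ≤ c → ∀ γ : ℝ, 2 ≤ γ + (n : ℝ) * (2 * s - 1) →
    (∑' a : Fin (n + 1) → ℕ, (SS n c).indicator (Wt n s γ) a) ≤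
      ((c - 1 : ℕ) : ℝ≥0∞) ^ (-(γ + (n : ℝ) * (2 * s - 1) - 1)) := by
  intro n
  induction n with
  | zero =>
    intro c hc γ hγ
    have hγ2 : 2 ≤ γ := by push_cast at hγ; linarith
    have hexp : -(γ + ((0 : ℕ) : ℝ) * (2 * s - 1) - 1) = -(γ - 1) := by push_cast; ring
    rw [hexp]
    refine le_trans (ENNReal.summable.tsum_le_tsum_of_inj (fun a : Fin 1 → ℕ => a 0)
      (fun a a' h => funext fun i => by rw [Fin.fin_one_eq_zero i]; exact h)
      (fun _ _ => zero_le) (fun a => ?_) ENNReal.summable)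
      (lemA γ hγ2 (c - 1) (by omega))
    by_cases hmem : a ∈ SS 0 c
    · rw [Set.indicator_of_mem hmem]
      rw [if_pos (show c - 1 < a 0 by have := hmem.2; omega)]
      apply le_of_eq
      unfold Wt
      rw [Fin.prod_univ_one]
      simp
    · rw [Set.indicator_of_notMem hmem]
      exact zero_le
  | succ n ih =>
    intro c hc γ hγ
    have hn0 : (0:ℝ) ≤ (n : ℝ) := Nat.cast_nonneg n
    have hγ' : 2 ≤ γ + (n : ℝ) * (2 * s - 1) := by push_cast at hγ; nlinarith
    set t : ℝ := γ + ((n : ℝ) + 1) * (2 * s - 1) with htdef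
    have ht2 : 2 ≤ t := by push_cast at hγ; linarith
    have hpt : ∀ (x : ℕ) (b : Fin (n + 1) → ℕ),
        (SS (n + 1) c).indicator (Wt (n + 1) s γ) (Fin.cons x b)
          = (if c ≤ x then ((x : ℝ≥0∞)) ^ (-(2 * s)) else 0)
            * (SS n (x + 1)).indicator (Wt n s γ) b := by
      intro x b
      by_cases hcx : c ≤ x
      · by_cases hb : b ∈ SS n (x + 1)
        · rw [Set.indicator_of_mem ((mem_SS_cons_iff x b).mpr ⟨hcx, hb⟩),
            Set.indicator_of_mem hb, if_pos hcx, prod_cons_eq]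
        · rw [Set.indicator_of_notMem (fun hmem => hb ((mem_SS_cons_iff x b).mp hmem).2),
            Set.indicator_of_notMem hb, mul_zero]
      · rw [Set.indicator_of_notMem (fun hmem => hcx ((mem_SS_cons_iff x b).mp hmem).1),
          if_neg hcx, zero_mul]
    calc (∑' a : Fin (n + 2) → ℕ, (SS (n + 1) c).indicator (Wt (n + 1) s γ) a)
        = ∑' p : ℕ × (Fin (n + 1) → ℕ),
            (SS (n + 1) c).indicator (Wt (n + 1) s γ) (Fin.cons p.1 p.2) := by
          rw [← (Fin.consEquiv (fun _ : Fin (n + 2) => ℕ)).tsum_eq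
            ((SS (n + 1) c).indicator (Wt (n + 1) s γ))]
          rfl
      _ = ∑' (x : ℕ) (b : Fin (n + 1) → ℕ),
            (SS (n + 1) c).indicator (Wt (n + 1) s γ) (Fin.cons x b) := by
          rw [ENNReal.tsum_prod']
      _ = ∑' x : ℕ, (if c ≤ x then ((x : ℝ≥0∞)) ^ (-(2 * s)) else 0)
            * ∑' b : Fin (n + 1) → ℕ, (SS n (x + 1)).indicator (Wt n s γ) b := by
          refine tsum_congr fun x => ?_
          rw [← ENNReal.tsum_mul_left]
          exact tsum_congr fun b => hpt x b
      _ ≤ ∑' x : ℕ, (if c - 1 < x then ((x : ℝ≥0∞)) ^ (-t) else 0) := by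
          refine ENNReal.tsum_le_tsum fun x => ?_
          by_cases hcx : c ≤ x
          · rw [if_pos hcx, if_pos (by omega)]
            have hIH := ih (x + 1) (by omega) γ hγ'
            rw [Nat.add_sub_cancel] at hIH
            have hx0 : ((x : ℝ≥0∞)) ≠ 0 := by simp; omega
            calc ((x : ℝ≥0∞)) ^ (-(2 * s))
                  * ∑' b : Fin (n + 1) → ℕ, (SS n (x + 1)).indicator (Wt n s γ) b
                ≤ ((x : ℝ≥0∞)) ^ (-(2 * s))
                    * ((x : ℝ≥0∞)) ^ (-(γ + (n : ℝ) * (2 * s - 1) - 1)) :=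
                  mul_le_mul_right hIH _
              _ = ((x : ℝ≥0∞)) ^ (-t) := by
                  rw [← ENNReal.rpow_add _ _ hx0 (ENNReal.natCast_ne_top x)]
                  congr 1
                  rw [htdef]; ring
          · rw [if_neg hcx, zero_mul]
            exact zero_le
      _ ≤ ((c - 1 : ℕ) : ℝ≥0∞) ^ (-(t - 1)) := lemA t ht2 (c - 1) (by omega)
      _ = ((c - 1 : ℕ) : ℝ≥0∞) ^ (-(γ + ((n + 1 : ℕ) : ℝ) * (2 * s - 1) - 1)) := by
          congr 1
          rw [htdef]; push_cast; ring

/-- Lemma 2.3: for integers `c, n ≥ 2`, `s ∈ (0,1/2]` and `γ ≥ 2 - (n-1)(2s-1)`,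
the sum of `(a_1 ⋯ a_{n-1})^{-2s} a_n^{-γ}` over all strictly increasing `n`-tuples
of positive integers with `a_1 ≥ c` is at most `(c-1)^{-(γ + n(2s-1) - 2s)}`. -/
theorem stmt10 (c n : ℕ) (hc : 2 ≤ c) (hn : 2 ≤ n) (s γ : ℝ)
    (hs0 : 0 < s) (hs : s ≤ 1 / 2)
    (hγ : 2 - ((n : ℝ) - 1) * (2 * s - 1) ≤ γ) :
    (∑' a : {a : Fin n → ℕ // StrictMono a ∧ c ≤ a ⟨0, by omega⟩},
        ∏ i : Fin n,
          if (i : ℕ) = n - 1 then ((a.1 i : ℝ≥0∞)) ^ (-γ)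
          else ((a.1 i : ℝ≥0∞)) ^ (-(2 * s))) ≤
      ((c - 1 : ℕ) : ℝ≥0∞) ^ (-(γ + (n : ℝ) * (2 * s - 1) - 2 * s)) := by
  
  obtain ⟨m, rfl⟩ : ∃ m, n = m + 1 := ⟨n - 1, by omega⟩
  have hγ' : 2 ≤ γ + (m : ℝ) * (2 * s - 1) := by push_cast at hγ ⊢; linarith
  have hexp : -(γ + ((m + 1 : ℕ) : ℝ) * (2 * s - 1) - 2 * s)
      = -(γ + (m : ℝ) * (2 * s - 1) - 1) := by push_cast; ring
  rw [hexp]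
  refine le_trans (ENNReal.summable.tsum_le_tsum_of_inj (fun a => a.1) Subtype.val_injective
    (fun _ _ => zero_le) (fun a => ?_) ENNReal.summable)
    (main_ind s hs0 hs m c hc γ hγ')
  have hmem : a.1 ∈ SS m c := ⟨a.2.1, a.2.2⟩
  rw [Set.indicator_of_mem hmem]
  apply le_of_eq
  unfold Wt
  rfl
end

section
/- Let {V_1, W_1, V_2, W_2, …} be a partition of the positive integers into nonempty bounded intervals such that max V_k + 1 = min W_k and max W_k + 1 = min V_{k+1} for all k ≥ 1, and let (L_n)_{n≥1} be a sequence of nonempty bounded intervals in the positive integers. Define Λ = {x ∈ (0,1) irrational : a_n(x) ∈ L_n for every n ∈ V_k and every k ≥ 1, and a_n(x) = a_{max V_k}(x) + n − max V_k for every n ∈ W_k and every k ≥ 1}. Then there exists a Borel probability measure μ on [0,1] such that μ(Λ) = 1 and, for every n ≥ 1 and every (a_1,…,a_n) ∈ ℕ^n with I_n(a_1,…,a_n) ∩ Λ ≠ ∅: μ(I_n(a_1,…,a_n)) = ∏_{i=1}^{n} 1/#L_i if n ∈ V_1; μ(I_n(a_1,…,a_n)) = ∏_{m=1}^{k} ∏_{i∈V_m}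 1/#L_i if n ∈ W_k for some k ≥ 1; and μ(I_n(a_1,…,a_n)) = (∏_{m=1}^{k} ∏_{i∈V_m} 1/#L_i) · ∏_{i=min V_{k+1}}^{n} 1/#L_i if n ∈ V_{k+1} for some k ≥ 1. -/
open Filter MeasureTheory Set
open scoped ENNReal NNReal Topology

/-- The fundamental interval (cylinder) `I_n(a_1, …, a_n)`: points of `(0,1]` whose
first `n` partial quotients are `a 1, …, a n`. -/
def cyl (n : ℕ) (a : ℕ → ℕ) : Set ℝ :=
  {x | x ∈ Set.Ioc (0 : ℝ) 1 ∧ ∀ i : ℕ, 1 ≤ i → i ≤ n → pq x i = a i}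

/-- The set `Λ` of Lemma 2.6: irrationals in `(0,1)` whose partial quotients lie in
`L n` at positions `n ∈ V k` and continue the arithmetic progression of common
difference `1` started at `max V k` at positions `n ∈ W k`. -/
def Lam (V W : ℕ → Set ℕ) (L : ℕ → Finset ℕ) : Set ℝ :=
  {x | x ∈ Set.Ioo (0 : ℝ) 1 ∧ Irrational x ∧
    (∀ k : ℕ, 1 ≤ k → ∀ n ∈ V k, pq x n ∈ L n) ∧
    (∀ k : ℕ, 1 ≤ k → ∀ n ∈ W k, pq x n = pq x (sSup (V k)) + (n - sSup (V k)))}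

namespace CFAux


/-- Finite continued fraction approximants: `cfA n d = [0; d 0, d 1, …, d (n-1)]`. -/
noncomputable def cfA : ℕ → (ℕ → ℕ) → ℝ
  | 0, _ => 0
  | n + 1, d => 1 / ((d 0 : ℝ) + cfA n (fun i => d (i + 1)))

lemma cfA_mem (n : ℕ) : ∀ d : ℕ → ℕ, (∀ i, 1 ≤ d i) → cfA n d ∈ Set.Icc (0 : ℝ) 1 := by
  induction n with
  | zero => intro d _; simp [cfA]
  | succ n ih =>
    intro d hd
    have h1 : (1 : ℝ) ≤ (d 0 : ℝ) := by exact_mod_cast hd 0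
    have h2 := ih (fun i => d (i + 1)) (fun i => hd (i + 1))
    have hden : (1 : ℝ) ≤ (d 0 : ℝ) + cfA n (fun i => d (i + 1)) := by
      have := h2.1; linarith
    have hden0 : (0 : ℝ) < (d 0 : ℝ) + cfA n (fun i => d (i + 1)) :=
      lt_of_lt_of_le zero_lt_one hden
    rw [Set.mem_Icc, cfA]
    constructor
    · exact le_of_lt (one_div_pos.mpr hden0)
    · rw [div_le_one hden0]; exact hden

lemma cfA_succ_le (n : ℕ) (d : ℕ → ℕ) (hd : ∀ i, 1 ≤ d i) :
    1 / ((d 0 : ℝ) + 1) ≤ cfA (n + 1) d ∧ cfA (n + 1) d ≤ 1 / (d 0 : ℝ) := by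
  have h1 : (1 : ℝ) ≤ (d 0 : ℝ) := by exact_mod_cast hd 0
  have h2 := cfA_mem n (fun i => d (i + 1)) (fun i => hd (i + 1))
  rw [cfA]
  constructor
  · apply one_div_le_one_div_of_le (by linarith [h2.1]) (by linarith [h2.2])
  · apply one_div_le_one_div_of_le (by linarith [h2.1]) (by linarith [h2.1])

lemma abs_one_div_sub_one_div {x y : ℝ} (hx : 0 < x) (hy : 0 < y) :
    |1 / x - 1 / y| = |y - x| / (x * y) := by
  rw [div_sub_div _ _ hx.ne' hy.ne', abs_div, abs_of_pos (mul_pos hx hy)]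
  ring_nf

lemma cfA_dist (n : ℕ) : ∀ d : ℕ → ℕ, (∀ i, 1 ≤ d i) →
    |cfA (n + 1) d - cfA n d| ≤ (2 : ℝ)⁻¹ ^ n := by
  induction n using Nat.strong_induction_on with
  | _ n ih =>
    match n with
    | 0 =>
      intro d hd
      have h1 : (1 : ℝ) ≤ (d 0 : ℝ) := by exact_mod_cast hd 0
      simp only [cfA, pow_zero]
      rw [sub_zero, abs_of_pos (by positivity)]
      rw [div_le_one (by positivity)]
      have := (cfA_mem 0 (fun i => d (i + 1)) (fun i => hd (i + 1))).1
      linarith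
    | 1 =>
      intro d hd
      have h0 : (1 : ℝ) ≤ (d 0 : ℝ) := by exact_mod_cast hd 0
      have h1 : (1 : ℝ) ≤ (d 1 : ℝ) := by exact_mod_cast hd 1
      have e2 : cfA 2 d = 1 / ((d 0 : ℝ) + 1 / ((d 1 : ℝ) + 0)) := rfl
      have e1 : cfA 1 d = 1 / ((d 0 : ℝ) + 0) := rfl
      rw [e1, e2, add_zero, add_zero]
      have hy : (0:ℝ) < (d 0 : ℝ) := by linarith
      have hx : (0:ℝ) < (d 0 : ℝ) + 1 / (d 1 : ℝ) := by positivity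
      rw [abs_one_div_sub_one_div hx hy]
      have hxy : ((d 0 : ℝ) + 1 / (d 1 : ℝ)) * (d 0 : ℝ) ≥ 1 + 1 / (d 1 : ℝ) := by
        nlinarith [one_div_pos.mpr (show (0:ℝ) < (d 1 : ℝ) by linarith)]
      have habs : |(d 0 : ℝ) - ((d 0 : ℝ) + 1 / (d 1 : ℝ))| = 1 / (d 1 : ℝ) := by
        rw [abs_sub_comm]; rw [add_sub_cancel_left, abs_of_pos (by positivity)]
      rw [habs]
      have hd1 : (0:ℝ) < (d 1 : ℝ) := by linarith
      rw [div_le_iff₀ (by positivity)]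
      have : (1:ℝ) / (d 1 : ℝ) ≤ 1 := by rw [div_le_one hd1]; linarith
      have h2 : (2:ℝ)⁻¹ ^ 1 = 1/2 := by norm_num
      rw [h2]
      nlinarith [one_div_pos.mpr hd1]
    | (m + 2) =>
      intro d hd
      set d' : ℕ → ℕ := fun i => d (i + 1) with hd'def
      set d'' : ℕ → ℕ := fun i => d (i + 2) with hd''def
      have hd' : ∀ i, 1 ≤ d' i := fun i => hd (i + 1)
      have hd'' : ∀ i, 1 ≤ d'' i := fun i => hd (i + 2)
      have hc0 : (1:ℝ) ≤ (d 0 : ℝ) := by exact_mod_cast hd 0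
      have hc1 : (1:ℝ) ≤ (d 1 : ℝ) := by exact_mod_cast hd 1
      set A' := cfA (m + 1) d'' with hA'
      set B' := cfA m d'' with hB'
      have hA'm : A' ∈ Set.Icc (0:ℝ) 1 := cfA_mem _ _ hd''
      have hB'm : B' ∈ Set.Icc (0:ℝ) 1 := cfA_mem _ _ hd''
      have hd'0 : (d' 0 : ℝ) = (d 1 : ℝ) := by norm_num [hd'def]
      have hd''eq : (fun i => d' (i + 1)) = d'' := by funext i; simp [hd'def, hd''def]
      have eA : cfA (m + 2) d' = 1 / ((d 1 : ℝ) + A') := by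
        rw [show cfA (m + 2) d' = 1 / ((d' 0 : ℝ) + cfA (m+1) (fun i => d' (i + 1))) from rfl,
          hd'0, hd''eq]
      have eB : cfA (m + 1) d' = 1 / ((d 1 : ℝ) + B') := by
        rw [show cfA (m + 1) d' = 1 / ((d' 0 : ℝ) + cfA m (fun i => d' (i + 1))) from rfl,
          hd'0, hd''eq]
      set A := cfA (m + 2) d' with hA
      set B := cfA (m + 1) d' with hB
      have hApos : 0 < A := by
        rw [eA]; exact one_div_pos.mpr (by linarith [hA'm.1])
      have hBpos : 0 < B := by
        rw [eB]; exact one_div_pos.mpr (by linarith [hB'm.1])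
      have goalEq1 : cfA (m + 3) d = 1 / ((d 0 : ℝ) + A) := rfl
      have goalEq2 : cfA (m + 2) d = 1 / ((d 0 : ℝ) + B) := rfl
      rw [goalEq1, goalEq2, abs_one_div_sub_one_div (by linarith) (by linarith)]
      have hx : (0:ℝ) < (d 1 : ℝ) + B' := by linarith [hB'm.1]
      have hy : (0:ℝ) < (d 1 : ℝ) + A' := by linarith [hA'm.1]
      have key : |(d 0 : ℝ) + B - ((d 0 : ℝ) + A)|
          = |A' - B'| / (((d 1 : ℝ) + B') * ((d 1 : ℝ) + A')) := by
        have h1 : (d 0 : ℝ) + B - ((d 0 : ℝ) + A) = B - A := by ring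
        rw [h1, eA, eB, abs_one_div_sub_one_div hx hy, add_sub_add_left_eq_sub]
      rw [key, div_div]
      have ihm : |A' - B'| ≤ (2:ℝ)⁻¹ ^ m := by
        have := ih m (by omega) d'' hd''
        rwa [← hA', ← hB'] at this
      have hAval : A = 1 / ((d 1 : ℝ) + A') := eA
      have hBval : B = 1 / ((d 1 : ℝ) + B') := eB
      have h2A : ((d 0 : ℝ) + A) * ((d 1 : ℝ) + A') ≥ 2 := by
        rw [hAval, add_mul, one_div_mul_cancel hy.ne']
        nlinarith [hA'm.1, hc0, hc1]
      have h2B : ((d 0 : ℝ) + B) * ((d 1 : ℝ) + B') ≥ 2 := by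
        rw [hBval, add_mul, one_div_mul_cancel hx.ne']
        nlinarith [hB'm.1, hc0, hc1]
      have hbig : (4:ℝ) ≤ ((d 1 : ℝ) + B') * ((d 1 : ℝ) + A') * (((d 0 : ℝ) + A) * ((d 0 : ℝ) + B)) := by
        nlinarith [h2A, h2B, hx, hy, hApos, hBpos, hc0]
      calc |A' - B'| / (((d 1 : ℝ) + B') * ((d 1 : ℝ) + A') * (((d 0 : ℝ) + A) * ((d 0 : ℝ) + B)))
          ≤ |A' - B'| / 4 := by gcongr
        _ ≤ (2:ℝ)⁻¹ ^ m / 4 := by gcongr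
        _ = (2:ℝ)⁻¹ ^ (m + 2) := by ring

lemma cfA_cauchy (d : ℕ → ℕ) (hd : ∀ i, 1 ≤ d i) : CauchySeq (fun n => cfA n d) := by
  apply cauchySeq_of_le_geometric (2:ℝ)⁻¹ 1 (by norm_num)
  intro n
  rw [Real.dist_eq, abs_sub_comm, one_mul]
  exact cfA_dist n d hd

/-- The infinite continued fraction `[0; d 0, d 1, …]` (digits forced to be `≥ 1`). -/
noncomputable def cfFun (d : ℕ → ℕ) : ℝ :=
  limUnder atTop (fun n => cfA n (fun i => max 1 (d i)))

lemma cfFun_tendsto_aux (d : ℕ → ℕ) :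
    Tendsto (fun n => cfA n (fun i => max 1 (d i))) atTop (𝓝 (cfFun d)) :=
  (cfA_cauchy _ (fun i => le_max_left _ _)).tendsto_limUnder

lemma max_eq_self {d : ℕ → ℕ} (hd : ∀ i, 1 ≤ d i) : (fun i => max 1 (d i)) = d := by
  funext i; exact max_eq_right (hd i)

lemma cfFun_tendsto (d : ℕ → ℕ) (hd : ∀ i, 1 ≤ d i) :
    Tendsto (fun n => cfA n d) atTop (𝓝 (cfFun d)) := by
  have := cfFun_tendsto_aux d
  rwa [max_eq_self hd] at this

lemma cfFun_mem (d : ℕ → ℕ) (hd : ∀ i, 1 ≤ d i) :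
    cfFun d ∈ Set.Icc (1 / ((d 0 : ℝ) + 1)) (1 / (d 0 : ℝ)) := by
  have h := (cfFun_tendsto d hd).comp (tendsto_add_atTop_nat 1)
  constructor
  · exact ge_of_tendsto h (Eventually.of_forall fun n => (cfA_succ_le n d hd).1)
  · exact le_of_tendsto h (Eventually.of_forall fun n => (cfA_succ_le n d hd).2)

lemma cfFun_pos (d : ℕ → ℕ) (hd : ∀ i, 1 ≤ d i) : 0 < cfFun d := by
  have h := (cfFun_mem d hd).1
  have h1 : (1:ℝ) ≤ (d 0 : ℝ) := by exact_mod_cast hd 0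
  have : (0:ℝ) < 1 / ((d 0 : ℝ) + 1) := by positivity
  linarith

lemma cfFun_eq (d : ℕ → ℕ) (hd : ∀ i, 1 ≤ d i) :
    cfFun d = 1 / ((d 0 : ℝ) + cfFun (fun i => d (i + 1))) := by
  have hd' : ∀ i, 1 ≤ (fun i => d (i + 1)) i := fun i => hd (i + 1)
  have h1 : Tendsto (fun n => cfA n (fun i => d (i + 1))) atTop
      (𝓝 (cfFun (fun i => d (i + 1)))) := cfFun_tendsto _ hd'
  have hden : (0:ℝ) < (d 0 : ℝ) + cfFun (fun i => d (i + 1)) := by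
    have h1' : (1:ℝ) ≤ (d 0 : ℝ) := by exact_mod_cast hd 0
    have := cfFun_pos _ hd'
    linarith
  have h2 : Tendsto (fun n => cfA (n + 1) d) atTop
      (𝓝 (1 / ((d 0 : ℝ) + cfFun (fun i => d (i + 1))))) := by
    simp only [cfA]
    exact (tendsto_const_nhds.div (tendsto_const_nhds.add h1) hden.ne')
  have h3 : Tendsto (fun n => cfA (n + 1) d) atTop (𝓝 (cfFun d)) :=
    (cfFun_tendsto d hd).comp (tendsto_add_atTop_nat 1)
  exact tendsto_nhds_unique h3 h2

lemma cfFun_lt_one (d : ℕ → ℕ) (hd : ∀ i, 1 ≤ d i) : cfFun d < 1 := by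
  rw [cfFun_eq d hd]
  have hd' : ∀ i, 1 ≤ (fun i => d (i + 1)) i := fun i => hd (i + 1)
  have h1 : (1:ℝ) ≤ (d 0 : ℝ) := by exact_mod_cast hd 0
  have h2 := cfFun_pos _ hd'
  rw [div_lt_one (by linarith)]
  linarith

lemma cfFun_inv (d : ℕ → ℕ) (hd : ∀ i, 1 ≤ d i) :
    1 / cfFun d = (d 0 : ℝ) + cfFun (fun i => d (i + 1)) := by
  rw [cfFun_eq d hd, one_div_one_div]

lemma cfFun_floor (d : ℕ → ℕ) (hd : ∀ i, 1 ≤ d i) : ⌊1 / cfFun d⌋ = (d 0 : ℤ) := by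
  rw [cfFun_inv d hd]
  have hd' : ∀ i, 1 ≤ (fun i => d (i + 1)) i := fun i => hd (i + 1)
  have h2 := cfFun_pos _ hd'
  have h3 := cfFun_lt_one _ hd'
  rw [Int.floor_eq_iff]
  push_cast
  constructor <;> linarith

lemma cfFun_gauss (d : ℕ → ℕ) (hd : ∀ i, 1 ≤ d i) :
    gaussMap (cfFun d) = cfFun (fun i => d (i + 1)) := by
  unfold gaussMap
  rw [cfFun_floor d hd, cfFun_inv d hd]
  push_cast; ring

lemma cfFun_gauss_iter (d : ℕ → ℕ) (hd : ∀ i, 1 ≤ d i) (k : ℕ) :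
    gaussMap^[k] (cfFun d) = cfFun (fun i => d (i + k)) := by
  induction k generalizing d with
  | zero => simp
  | succ k ih =>
    rw [Function.iterate_succ_apply, cfFun_gauss d hd]
    exact ih (fun i => d (i + 1)) (fun i => hd (i + 1))

lemma cfFun_pq (d : ℕ → ℕ) (hd : ∀ i, 1 ≤ d i) (n : ℕ) (hn : 1 ≤ n) :
    pq (cfFun d) n = d (n - 1) := by
  unfold pq
  rw [cfFun_gauss_iter d hd (n - 1),
    cfFun_floor (fun i => d (i + (n - 1))) (fun i => hd (i + (n - 1)))]
  simp

lemma gauss_rat (q : ℚ) : gaussMap (q : ℝ) = ((Int.fract q⁻¹ : ℚ) : ℝ) := by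
  unfold gaussMap
  rw [one_div, ← Rat.cast_inv, Rat.floor_cast, Int.fract]
  push_cast
  ring

lemma escape : ∀ N : ℕ, ∀ q : ℚ, q.num.toNat ≤ N → 0 < q → q < 1 →
    ∃ n, gaussMap^[n] (q : ℝ) ∉ Set.Ioo (0:ℝ) 1 := by
  intro N
  induction N with
  | zero =>
    intro q hq hq0 _
    have := Rat.num_pos.mpr hq0
    omega
  | succ N ih =>
    intro q hqN hq0 hq1
    set r := Int.fract q⁻¹ with hr
    by_cases hcase : 0 < r ∧ r < 1
    · have hnum : r.num < q.num := Rat.fract_inv_num_lt_num_of_pos hq0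
      have hrpos := Rat.num_pos.mpr hcase.1
      obtain ⟨n, hn⟩ := ih r (by omega) hcase.1 hcase.2
      refine ⟨n + 1, ?_⟩
      rwa [Function.iterate_succ_apply, gauss_rat]
    · refine ⟨1, ?_⟩
      rw [Function.iterate_one, gauss_rat]
      intro hmem
      exact hcase ⟨by exact_mod_cast hmem.1, by exact_mod_cast hmem.2⟩

lemma cfFun_irrational (d : ℕ → ℕ) (hd : ∀ i, 1 ≤ d i) : Irrational (cfFun d) := by
  rintro ⟨q, hq⟩
  have hq0 : 0 < q := by
    have := cfFun_pos d hd; rw [← hq] at this; exact_mod_cast this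
  have hq1 : q < 1 := by
    have := cfFun_lt_one d hd; rw [← hq] at this; exact_mod_cast this
  obtain ⟨n, hn⟩ := escape q.num.toNat q le_rfl hq0 hq1
  apply hn
  rw [hq, cfFun_gauss_iter d hd n]
  exact ⟨cfFun_pos _ (fun i => hd (i + n)), cfFun_lt_one _ (fun i => hd (i + n))⟩

lemma cfA_measurable : ∀ n, Measurable (fun d : ℕ → ℕ => cfA n d) := by
  intro n
  induction n with
  | zero => simpa [cfA] using measurable_const
  | succ n ih =>
    simp only [cfA]
    apply Measurable.div measurable_const
    apply Measurable.add
    · exact measurable_from_top.comp (measurable_pi_apply 0)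
    · exact ih.comp (measurable_pi_lambda _ (fun i => measurable_pi_apply (i + 1)))

lemma cfFun_measurable : Measurable cfFun := by
  have hmax : Measurable (fun d : ℕ → ℕ => (fun i => max 1 (d i))) :=
    measurable_pi_lambda _ (fun i => measurable_from_top.comp (measurable_pi_apply i))
  apply measurable_of_tendsto_metrizable
    (f := fun n => fun d : ℕ → ℕ => cfA n (fun i => max 1 (d i)))
  · exact fun n => (cfA_measurable n).comp hmax
  · rw [tendsto_pi_nhds]
    exact cfFun_tendsto_aux

/-! ### Digits extracted from a point of `[0,1)` -/

noncomputable def remSeq (c : ℕ → ℕ) (t : ℝ) : ℕ → ℝ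
  | 0 => t
  | n + 1 => Int.fract ((c (n + 1) : ℝ) * remSeq c t n)

noncomputable def digSeq (c : ℕ → ℕ) (t : ℝ) (n : ℕ) : ℕ :=
  (⌊(c n : ℝ) * remSeq c t (n - 1)⌋).toNat

lemma remSeq_mem (c : ℕ → ℕ) {t : ℝ} (ht : t ∈ Set.Ico (0:ℝ) 1) (n : ℕ) :
    remSeq c t n ∈ Set.Ico (0:ℝ) 1 := by
  induction n with
  | zero => exact ht
  | succ n _ => exact ⟨Int.fract_nonneg _, Int.fract_lt_one _⟩

lemma digSeq_lt (c : ℕ → ℕ) {t : ℝ} (ht : t ∈ Set.Ico (0:ℝ) 1) (n : ℕ)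
    (hc : 1 ≤ c n) : digSeq c t n < c n := by
  have hr := remSeq_mem c ht (n - 1)
  have hcpos : (0:ℝ) < (c n : ℝ) := by exact_mod_cast hc
  have h0 : 0 ≤ ⌊(c n : ℝ) * remSeq c t (n - 1)⌋ :=
    Int.floor_nonneg.mpr (mul_nonneg hcpos.le hr.1)
  have hlt : ⌊(c n : ℝ) * remSeq c t (n - 1)⌋ < (c n : ℤ) := by
    rw [Int.floor_lt]
    push_cast
    nlinarith [hr.2, hr.1]
  unfold digSeq
  omega

lemma remSeq_shift (c : ℕ → ℕ) (t : ℝ) (n : ℕ) :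
    remSeq c t (n + 1) = remSeq (fun i => c (i + 1)) (remSeq c t 1) n := by
  induction n with
  | zero => rfl
  | succ n ih =>
    show Int.fract ((c (n + 2) : ℝ) * remSeq c t (n + 1)) = _
    rw [ih]
    rfl

lemma digSeq_shift (c : ℕ → ℕ) (t : ℝ) (n : ℕ) (hn : 1 ≤ n) :
    digSeq c t (n + 1) = digSeq (fun i => c (i + 1)) (remSeq c t 1) n := by
  unfold digSeq
  have h1 : n + 1 - 1 = (n - 1) + 1 := by omega
  rw [h1, remSeq_shift]

lemma remSeq_measurable (c : ℕ → ℕ) (n : ℕ) : Measurable (fun t => remSeq c t n) := by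
  induction n with
  | zero => exact measurable_id
  | succ n ih => exact ((measurable_const_mul _).comp ih).fract

lemma digSeq_measurable (c : ℕ → ℕ) (n : ℕ) : Measurable (fun t => digSeq c t n) :=
  measurable_from_top.comp
    (Int.measurable_floor.comp ((measurable_const_mul _).comp (remSeq_measurable c (n - 1))))

lemma digSet_measurable (c e : ℕ → ℕ) (n : ℕ) :
    MeasurableSet {t : ℝ | t ∈ Set.Ico (0:ℝ) 1 ∧ ∀ i, 1 ≤ i → i ≤ n → digSeq c t i = e i} := by
  have : {t : ℝ | t ∈ Set.Ico (0:ℝ) 1 ∧ ∀ i, 1 ≤ i → i ≤ n → digSeq c t i = e i}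
      = Set.Ico (0:ℝ) 1 ∩ ⋂ i ∈ Set.Icc 1 n, {t | digSeq c t i = e i} := by
    ext t
    constructor
    · rintro ⟨h1, h2⟩
      exact ⟨h1, Set.mem_iInter₂.mpr fun i hi => h2 i hi.1 hi.2⟩
    · rintro ⟨h1, h2⟩
      exact ⟨h1, fun i hi1 hi2 => Set.mem_iInter₂.mp h2 i ⟨hi1, hi2⟩⟩
  rw [this]
  exact measurableSet_Ico.inter
    (MeasurableSet.biInter (Set.to_countable _)
      (fun i _ => (digSeq_measurable c i) (measurableSet_singleton (e i))))

lemma vol_digs : ∀ (n : ℕ) (c e : ℕ → ℕ), (∀ i, 1 ≤ c i) →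
    (∀ i, 1 ≤ i → i ≤ n → e i < c i) →
    volume {t : ℝ | t ∈ Set.Ico (0:ℝ) 1 ∧ ∀ i, 1 ≤ i → i ≤ n → digSeq c t i = e i}
      = ∏ i ∈ Finset.Icc 1 n, ((c i : ℝ≥0∞))⁻¹ := by
  intro n
  induction n with
  | zero =>
    intro c e _ _
    have hset : {t : ℝ | t ∈ Set.Ico (0:ℝ) 1 ∧ ∀ i, 1 ≤ i → i ≤ 0 → digSeq c t i = e i}
        = Set.Ico (0:ℝ) 1 := by
      ext t
      simp only [Set.mem_setOf_eq, and_iff_left_iff_imp]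
      intro _ i h1 h0
      omega
    rw [hset]
    simp [Real.volume_Ico]
  | succ n ih =>
    intro c e hc he
    set c' : ℕ → ℕ := fun i => c (i + 1) with hc'def
    set e' : ℕ → ℕ := fun i => e (i + 1) with he'def
    have hc1 : (0:ℝ) < (c 1 : ℝ) := by exact_mod_cast hc 1
    have he1 : e 1 < c 1 := he 1 le_rfl (by omega)
    have hkey : {t : ℝ | t ∈ Set.Ico (0:ℝ) 1 ∧ ∀ i, 1 ≤ i → i ≤ n + 1 → digSeq c t i = e i}
        = (fun t => (c 1 : ℝ) * t - (e 1 : ℝ)) ⁻¹'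
          {s : ℝ | s ∈ Set.Ico (0:ℝ) 1 ∧ ∀ i, 1 ≤ i → i ≤ n → digSeq c' s i = e' i} := by
      ext t
      simp only [Set.mem_preimage, Set.mem_setOf_eq, Set.mem_Ico]
      constructor
      · rintro ⟨⟨ht0, ht1⟩, hdig⟩
        have hd1 := hdig 1 le_rfl (by omega)
        have hfl : ⌊(c 1 : ℝ) * t⌋ = (e 1 : ℤ) := by
          have h0 : 0 ≤ ⌊(c 1 : ℝ) * t⌋ := Int.floor_nonneg.mpr (by positivity)
          have : (⌊(c 1 : ℝ) * remSeq c t 0⌋).toNat = e 1 := hd1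
          unfold remSeq at this
          omega
        have hr1 : remSeq c t 1 = (c 1 : ℝ) * t - (e 1 : ℝ) := by
          show Int.fract ((c 1 : ℝ) * remSeq c t 0) = _
          have hrem0 : remSeq c t 0 = t := rfl
          rw [hrem0, Int.fract, hfl]
          push_cast
          rfl
        have hmem : (c 1 : ℝ) * t - (e 1 : ℝ) ∈ Set.Ico (0:ℝ) 1 := by
          rw [← hr1]; exact remSeq_mem c ⟨ht0, ht1⟩ 1
        refine ⟨hmem, fun i hi1 hin => ?_⟩
        have := hdig (i + 1) (by omega) (by omega)
        rw [digSeq_shift c t i hi1, hr1] at this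
        exact this
      · rintro ⟨⟨hs0, hs1⟩, hdig⟩
        have hct : (e 1 : ℝ) ≤ (c 1 : ℝ) * t ∧ (c 1 : ℝ) * t < (e 1 : ℝ) + 1 := by
          constructor <;> linarith
        have hec : ((e 1 : ℝ) + 1) ≤ (c 1 : ℝ) := by exact_mod_cast he1
        have ht0 : 0 ≤ t := by
          by_contra h
          push_neg at h
          have : (c 1 : ℝ) * t < 0 := mul_neg_of_pos_of_neg hc1 h
          have : (0:ℝ) ≤ (e 1 : ℝ) := by positivity
          linarith [hct.1]
        have ht1 : t < 1 := by
          by_contra h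
          push_neg at h
          have : (c 1 : ℝ) ≤ (c 1 : ℝ) * t := by nlinarith
          linarith [hct.2]
        have hfl : ⌊(c 1 : ℝ) * t⌋ = (e 1 : ℤ) := by
          rw [Int.floor_eq_iff]
          constructor
          · exact_mod_cast hct.1
          · push_cast; exact hct.2
        have hr1 : remSeq c t 1 = (c 1 : ℝ) * t - (e 1 : ℝ) := by
          show Int.fract ((c 1 : ℝ) * remSeq c t 0) = _
          have hrem0 : remSeq c t 0 = t := rfl
          rw [hrem0, Int.fract, hfl]
          push_cast
          rfl
        refine ⟨⟨ht0, ht1⟩, fun i hi1 hin => ?_⟩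
        rcases Nat.exists_eq_add_of_le hi1 with ⟨j, rfl⟩
        rcases Nat.eq_zero_or_pos j with rfl | hj
        · show digSeq c t 1 = e 1
          unfold digSeq
          have : remSeq c t (1 - 1) = t := rfl
          rw [this, hfl]
          simp
        · have h1j : 1 ≤ j := hj
          rw [show 1 + j = j + 1 from by omega]
          rw [digSeq_shift c t j h1j, hr1]
          exact hdig j h1j (by omega)
    rw [hkey]
    have hcomp : (fun t => (c 1 : ℝ) * t - (e 1 : ℝ))
        = (fun y => -(e 1 : ℝ) + y) ∘ (fun t => (c 1 : ℝ) * t) := by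
      funext t; simp; ring
    rw [hcomp, Set.preimage_comp]
    rw [Real.volume_preimage_mul_left hc1.ne']
    rw [measure_preimage_add]
    rw [ih c' e' (fun i => hc (i + 1)) (fun i h1 h2 => he (i + 1) (by omega) (by omega))]
    have hprod : ∏ i ∈ Finset.Icc 1 (n + 1), ((c i : ℝ≥0∞))⁻¹
        = ((c 1 : ℝ≥0∞))⁻¹ * ∏ i ∈ Finset.Icc 1 n, ((c' i : ℝ≥0∞))⁻¹ := by
      have hmap : (Finset.Icc 1 n).map (addRightEmbedding 1) = Finset.Icc 2 (n + 1) :=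
        Finset.map_add_right_Icc 1 n 1
      rw [show ∏ i ∈ Finset.Icc 1 n, ((c' i : ℝ≥0∞))⁻¹
          = ∏ i ∈ Finset.Icc 2 (n + 1), ((c i : ℝ≥0∞))⁻¹ from by
        rw [← hmap, Finset.prod_map]; rfl]
      rw [show Finset.Icc 1 (n + 1) = insert 1 (Finset.Icc 2 (n + 1)) from by
        ext i; simp [Finset.mem_Icc, Finset.mem_insert]; omega]
      rw [Finset.prod_insert (by simp)]
    rw [hprod]
    congr 1
    rw [abs_of_pos (by positivity)]
    rw [ENNReal.ofReal_inv_of_pos hc1, ENNReal.ofReal_natCast]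

/-! ### Combinatorics of the block structure -/

section Blocks

variable (v s w : ℕ → ℕ)
variable (hvs : ∀ k, 1 ≤ k → v k ≤ s k) (hsw : ∀ k, 1 ≤ k → s k < w k)
  (hwv : ∀ k, 1 ≤ k → w k < v (k + 1))

include hvs hsw hwv in
lemma chain_mono : ∀ k m, 1 ≤ k → k ≤ m → s k ≤ s m ∧ v k ≤ v m ∧ w k ≤ w m := by
  intro k m hk hkm
  induction m with
  | zero => omega
  | succ m ih =>
    rcases Nat.lt_or_ge k (m + 1) with h | h
    · have hm1 : 1 ≤ m := by omega
      have := ih (by omega)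
      have h1 := hvs (m + 1) (by omega)
      have h2 := hsw (m + 1) (by omega)
      have h3 := hwv m hm1
      have h4 := hsw m hm1
      have h5 := hvs m hm1
      omega
    · have : k = m + 1 := by omega
      subst this
      omega

include hvs hsw hwv in
lemma w_lt_v : ∀ k m, 1 ≤ k → k < m → w k < v m := by
  intro k m hk hkm
  have h1 := hwv k hk
  have h2 := chain_mono v s w hvs hsw hwv (k + 1) m (by omega) (by omega)
  omega

end Blocks

section ProdBlocks

variable (v s w : ℕ → ℕ) (g c : ℕ → ℝ≥0∞) (isV : ℕ → Prop)
variable (hv1 : ∀ k, 1 ≤ k → 1 ≤ v k)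
  (hvs : ∀ k, 1 ≤ k → v k ≤ s k) (hsw : ∀ k, 1 ≤ k → s k < w k)
  (hwv : ∀ k, 1 ≤ k → w k < v (k + 1)) (hv11 : v 1 = 1)
  (hiff : ∀ i, isV i ↔ ∃ k, 1 ≤ k ∧ v k ≤ i ∧ i ≤ s k)
  (hcV : ∀ i, isV i → c i = g i) (hcW : ∀ i, ¬ isV i → c i = 1)

include hv1 hvs hsw hwv hv11 hiff hcV hcW in
lemma prod_caseV1 (n : ℕ) (hn1 : 1 ≤ n) (hns : n ≤ s 1) :
    ∏ i ∈ Finset.Icc 1 n, c i = ∏ i ∈ Finset.Icc 1 n, g i := by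
  apply Finset.prod_congr rfl
  intro i hi
  rw [Finset.mem_Icc] at hi
  exact hcV i ((hiff i).mpr ⟨1, le_rfl, by omega, by omega⟩)

include hv1 hvs hsw hwv hv11 hiff hcV hcW in
lemma prod_caseW (k : ℕ) (hk : 1 ≤ k) (n : ℕ) (hn1 : s k < n) (hn2 : n ≤ w k) :
    ∏ i ∈ Finset.Icc 1 n, c i
      = ∏ m ∈ Finset.Icc 1 k, ∏ i ∈ Finset.Icc (v m) (s m), g i := by
  classical
  set B := (Finset.Icc 1 k).biUnion (fun m => Finset.Icc (v m) (s m)) with hB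
  have hmemB : ∀ i, i ∈ B ↔ ∃ m, 1 ≤ m ∧ m ≤ k ∧ v m ≤ i ∧ i ≤ s m := by
    intro i
    simp only [hB, Finset.mem_biUnion, Finset.mem_Icc]
    constructor
    · rintro ⟨m, hm, hi⟩; exact ⟨m, hm.1, hm.2, hi⟩
    · rintro ⟨m, h1, h2, h3, h4⟩; exact ⟨m, ⟨h1, h2⟩, h3, h4⟩
  have hBsub : B ⊆ Finset.Icc 1 n := by
    intro i hi
    rw [hmemB] at hi
    obtain ⟨m, hm1, hmk, hvi, his⟩ := hi
    rw [Finset.mem_Icc]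
    have := (chain_mono v s w hvs hsw hwv m k hm1 hmk).1
    have := hv1 m hm1
    omega
  have hVinB : ∀ i, 1 ≤ i → i ≤ n → isV i → i ∈ B := by
    intro i hi1 hin hV
    obtain ⟨m, hm1, hvi, his⟩ := (hiff i).mp hV
    rw [hmemB]
    refine ⟨m, hm1, ?_, hvi, his⟩
    by_contra h
    push_neg at h
    have := w_lt_v v s w hvs hsw hwv k m hk h
    have := hvs m hm1
    omega
  have step1 : ∏ i ∈ Finset.Icc 1 n, c i = ∏ i ∈ B, c i := by
    symm
    apply Finset.prod_subset hBsub
    intro i hi hni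
    rw [Finset.mem_Icc] at hi
    apply hcW
    intro hV
    exact hni (hVinB i hi.1 hi.2 hV)
  have step2 : ∏ i ∈ B, c i = ∏ i ∈ B, g i := by
    apply Finset.prod_congr rfl
    intro i hi
    rw [hmemB] at hi
    obtain ⟨m, hm1, _, hvi, his⟩ := hi
    exact hcV i ((hiff i).mpr ⟨m, hm1, hvi, his⟩)
  have hdisj : ∀ m ∈ Finset.Icc 1 k, ∀ m' ∈ Finset.Icc 1 k, m ≠ m' →
      Disjoint (Finset.Icc (v m) (s m)) (Finset.Icc (v m') (s m')) := by
    intro m hm m' hm' hne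
    rw [Finset.mem_Icc] at hm hm'
    rw [Finset.disjoint_left]
    intro i hi hi'
    rw [Finset.mem_Icc] at hi hi'
    rcases Nat.lt_or_ge m m' with h | h
    · have h1 := w_lt_v v s w hvs hsw hwv m m' hm.1 h
      have h2 := hsw m hm.1
      omega
    · have hlt : m' < m := by omega
      have h1 := w_lt_v v s w hvs hsw hwv m' m hm'.1 hlt
      have h2 := hsw m' hm'.1
      omega
  rw [step1, step2, hB, Finset.prod_biUnion hdisj]

include hv1 hvs hsw hwv hv11 hiff hcV hcW in
lemma prod_caseV (k : ℕ) (hk : 1 ≤ k) (n : ℕ) (hn1 : v (k + 1) ≤ n) (hn2 : n ≤ s (k + 1)) :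
    ∏ i ∈ Finset.Icc 1 n, c i
      = (∏ m ∈ Finset.Icc 1 k, ∏ i ∈ Finset.Icc (v m) (s m), g i)
          * ∏ i ∈ Finset.Icc (v (k + 1)) n, g i := by
  classical
  have hwk : s k < w k := hsw k hk
  have hwk2 : w k < v (k + 1) := hwv k hk
  have hprev : ∏ i ∈ Finset.Icc 1 (w k), c i
      = ∏ m ∈ Finset.Icc 1 k, ∏ i ∈ Finset.Icc (v m) (s m), g i :=
    prod_caseW v s w g c isV hv1 hvs hsw hwv hv11 hiff hcV hcW k hk (w k) hwk le_rfl
  have hsplit : Finset.Icc 1 n = Finset.Icc 1 (w k) ∪ Finset.Icc (w k + 1) n := by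
    ext i
    simp only [Finset.mem_union, Finset.mem_Icc]
    omega
  have hdisj : Disjoint (Finset.Icc 1 (w k)) (Finset.Icc (w k + 1) n) := by
    rw [Finset.disjoint_left]
    intro i hi hi'
    rw [Finset.mem_Icc] at hi hi'
    omega
  rw [hsplit, Finset.prod_union hdisj, hprev]
  congr 1
  -- ∏ i ∈ Icc (w k + 1) n, c i = ∏ i ∈ Icc (v (k+1)) n, g i
  have hsub : Finset.Icc (v (k + 1)) n ⊆ Finset.Icc (w k + 1) n := by
    intro i hi
    rw [Finset.mem_Icc] at hi ⊢
    omega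
  have step1 : ∏ i ∈ Finset.Icc (w k + 1) n, c i = ∏ i ∈ Finset.Icc (v (k + 1)) n, c i := by
    symm
    apply Finset.prod_subset hsub
    intro i hi hni
    rw [Finset.mem_Icc] at hi hni
    apply hcW
    intro hV
    obtain ⟨m, hm1, hvi, his⟩ := (hiff i).mp hV
    -- i < v (k+1), i > w k: contradiction with any block m
    rcases Nat.lt_or_ge m (k + 1) with h | h
    · have h1 := (chain_mono v s w hvs hsw hwv m k hm1 (by omega)).1
      have h2 := hsw k hk
      omega
    · have h1 := (chain_mono v s w hvs hsw hwv (k + 1) m (by omega) h).2.1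
      omega
  rw [step1]
  apply Finset.prod_congr rfl
  intro i hi
  rw [Finset.mem_Icc] at hi
  exact hcV i ((hiff i).mpr ⟨k + 1, by omega, hi.1, by omega⟩)

end ProdBlocks

end CFAux

/-! ### Data for the measure construction -/

def isVpos (V : ℕ → Set ℕ) (n : ℕ) : Prop := ∃ k, 1 ≤ k ∧ n ∈ V k
def isWpos (W : ℕ → Set ℕ) (n : ℕ) : Prop := ∃ k, 1 ≤ k ∧ n ∈ W k

open scoped Classical in
noncomputable def PLFun (L : ℕ → Finset ℕ) (n : ℕ) : ℕ × ℕ :=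
  if h : ∃ p : ℕ × ℕ, 1 ≤ p.1 ∧ p.1 ≤ p.2 ∧ (L n : Set ℕ) = Set.Icc p.1 p.2 then h.choose
  else (1, 1)

open scoped Classical in
noncomputable def cFun (V : ℕ → Set ℕ) (L : ℕ → Finset ℕ) (n : ℕ) : ℕ :=
  if isVpos V n then (L n).card else 1

open scoped Classical in
noncomputable def DFun (V W : ℕ → Set ℕ) (L : ℕ → Finset ℕ) (t : ℝ) (n : ℕ) : ℕ :=
  if h : isWpos W n then
    (PLFun L (sSup (V h.choose))).1 + CFAux.digSeq (cFun V L) t (sSup (V h.choose))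
      + (n - sSup (V h.choose))
  else (PLFun L n).1 + CFAux.digSeq (cFun V L) t n

noncomputable def PhiFun (V W : ℕ → Set ℕ) (L : ℕ → Finset ℕ) (t : ℝ) : ℝ :=
  CFAux.cfFun (fun j => DFun V W L t (j + 1))

lemma PLFun_fst_pos (L : ℕ → Finset ℕ) (n : ℕ) : 1 ≤ (PLFun L n).1 := by
  unfold PLFun
  split_ifs with h
  · exact h.choose_spec.1
  · exact le_rfl

lemma PLFun_spec (L : ℕ → Finset ℕ) (n : ℕ)
    (h : ∃ p : ℕ × ℕ, 1 ≤ p.1 ∧ p.1 ≤ p.2 ∧ (L n : Set ℕ) = Set.Icc p.1 p.2) :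
    1 ≤ (PLFun L n).1 ∧ (PLFun L n).1 ≤ (PLFun L n).2 ∧
      (L n : Set ℕ) = Set.Icc (PLFun L n).1 (PLFun L n).2 := by
  unfold PLFun
  rw [dif_pos h]
  exact h.choose_spec

lemma DFun_pos (V W : ℕ → Set ℕ) (L : ℕ → Finset ℕ) (t : ℝ) (n : ℕ) : 1 ≤ DFun V W L t n := by
  unfold DFun
  split_ifs with h
  · have := PLFun_fst_pos L (sSup (V h.choose)); omega
  · have := PLFun_fst_pos L n; omega

lemma DFun_measurable (V W : ℕ → Set ℕ) (L : ℕ → Finset ℕ) (n : ℕ) :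
    Measurable (fun t => DFun V W L t n) := by
  unfold DFun
  by_cases h : isWpos W n
  · simp only [dif_pos h]
    have : (fun t => (PLFun L (sSup (V h.choose))).1
          + CFAux.digSeq (cFun V L) t (sSup (V h.choose)) + (n - sSup (V h.choose)))
        = (fun d : ℕ => (PLFun L (sSup (V h.choose))).1 + d + (n - sSup (V h.choose)))
          ∘ (fun t => CFAux.digSeq (cFun V L) t (sSup (V h.choose))) := rfl
    rw [this]
    exact measurable_from_top.comp (CFAux.digSeq_measurable _ _)
  · simp only [dif_neg h]
    have : (fun t => (PLFun L n).1 + CFAux.digSeq (cFun V L) t n)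
        = (fun d : ℕ => (PLFun L n).1 + d) ∘ (fun t => CFAux.digSeq (cFun V L) t n) := rfl
    rw [this]
    exact measurable_from_top.comp (CFAux.digSeq_measurable _ _)

lemma PhiFun_measurable (V W : ℕ → Set ℕ) (L : ℕ → Finset ℕ) :
    Measurable (PhiFun V W L) :=
  CFAux.cfFun_measurable.comp (measurable_pi_lambda _ (fun j => DFun_measurable V W L (j + 1)))

lemma PhiFun_pq (V W : ℕ → Set ℕ) (L : ℕ → Finset ℕ) (t : ℝ) (m : ℕ) (hm : 1 ≤ m) :
    pq (PhiFun V W L t) m = DFun V W L t m := by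
  unfold PhiFun
  rw [CFAux.cfFun_pq _ (fun j => DFun_pos V W L t (j + 1)) m hm]
  congr 1
  omega

lemma PhiFun_mem (V W : ℕ → Set ℕ) (L : ℕ → Finset ℕ) (t : ℝ) :
    PhiFun V W L t ∈ Set.Ioo (0:ℝ) 1 :=
  ⟨CFAux.cfFun_pos _ (fun j => DFun_pos V W L t (j + 1)),
    CFAux.cfFun_lt_one _ (fun j => DFun_pos V W L t (j + 1))⟩

lemma PhiFun_irrational (V W : ℕ → Set ℕ) (L : ℕ → Finset ℕ) (t : ℝ) :
    Irrational (PhiFun V W L t) :=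
  CFAux.cfFun_irrational _ (fun j => DFun_pos V W L t (j + 1))

lemma gaussMap_measurable : Measurable gaussMap := by
  have hinv : Measurable (fun x : ℝ => 1 / x) := by
    simpa [one_div] using (measurable_inv : Measurable (fun x : ℝ => x⁻¹))
  exact hinv.sub (measurable_from_top.comp (Int.measurable_floor.comp hinv))

lemma pq_measurable (m : ℕ) : Measurable (fun x => pq x m) := by
  have hinv : Measurable (fun x : ℝ => 1 / x) := by
    simpa [one_div] using (measurable_inv : Measurable (fun x : ℝ => x⁻¹))
  exact measurable_from_top.comp
    (Int.measurable_floor.comp (hinv.comp (gaussMap_measurable.iterate (m - 1))))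

lemma cyl_measurable (n : ℕ) (a : ℕ → ℕ) : MeasurableSet (cyl n a) := by
  have : cyl n a = Set.Ioc (0:ℝ) 1 ∩ ⋂ i, ⋂ (_ : 1 ≤ i), ⋂ (_ : i ≤ n), {x | pq x i = a i} := by
    ext x
    simp only [cyl, Set.mem_setOf_eq, Set.mem_inter_iff, Set.mem_iInter]
  rw [this]
  exact measurableSet_Ioc.inter
    (MeasurableSet.iInter fun i => MeasurableSet.iInter fun _ => MeasurableSet.iInter fun _ =>
      pq_measurable i (measurableSet_singleton (a i)))

lemma natEq_measurable {f g : ℝ → ℕ} (hf : Measurable f) (hg : Measurable g) (d : ℕ) :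
    MeasurableSet {x | f x = g x + d} := by
  have : {x | f x = g x + d} = ⋃ m : ℕ, ({x | g x = m} ∩ {x | f x = m + d}) := by
    ext x
    simp only [Set.mem_setOf_eq, Set.mem_iUnion, Set.mem_inter_iff]
    constructor
    · intro h; exact ⟨g x, rfl, h⟩
    · rintro ⟨m, h1, h2⟩; rw [h1]; exact h2
  rw [this]
  exact MeasurableSet.iUnion fun m =>
    (hg (measurableSet_singleton m)).inter (hf (measurableSet_singleton (m + d)))

lemma Lam_measurable (V W : ℕ → Set ℕ) (L : ℕ → Finset ℕ) : MeasurableSet (Lam V W L) := by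
  have : Lam V W L = (Set.Ioo (0:ℝ) 1 ∩ {x | Irrational x})
      ∩ ((⋂ k, ⋂ (_ : 1 ≤ k), ⋂ n, ⋂ (_ : n ∈ V k), {x | pq x n ∈ (L n : Set ℕ)})
        ∩ (⋂ k, ⋂ (_ : 1 ≤ k), ⋂ n, ⋂ (_ : n ∈ W k),
            {x | pq x n = pq x (sSup (V k)) + (n - sSup (V k))})) := by
    ext x
    simp only [Lam, Set.mem_setOf_eq, Set.mem_inter_iff, Set.mem_iInter, Finset.mem_coe]
    tauto
  rw [this]
  have hirr : MeasurableSet {x : ℝ | Irrational x} := by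
    have : {x : ℝ | Irrational x} = (Set.range ((↑) : ℚ → ℝ))ᶜ := rfl
    rw [this]
    exact (Set.countable_range _).measurableSet.compl
  refine (measurableSet_Ioo.inter hirr).inter (MeasurableSet.inter ?_ ?_)
  · exact MeasurableSet.iInter fun k => MeasurableSet.iInter fun _ =>
      MeasurableSet.iInter fun n => MeasurableSet.iInter fun _ =>
        pq_measurable n ((L n : Set ℕ).to_countable.measurableSet)
  · exact MeasurableSet.iInter fun k => MeasurableSet.iInter fun _ =>
      MeasurableSet.iInter fun n => MeasurableSet.iInter fun _ =>
        natEq_measurable (pq_measurable n) (pq_measurable (sSup (V k))) (n - sSup (V k))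

/-- Lemma 2.6(a): existence of a Borel probability measure giving full measure to `Λ`
and with the prescribed values on fundamental intervals meeting `Λ`. -/
theorem stmt12 (V W : ℕ → Set ℕ) (L : ℕ → Finset ℕ)
    (hV : ∀ k : ℕ, 1 ≤ k → ∃ a b : ℕ, 1 ≤ a ∧ a ≤ b ∧ V k = Set.Icc a b)
    (hW : ∀ k : ℕ, 1 ≤ k → ∃ a b : ℕ, 1 ≤ a ∧ a ≤ b ∧ W k = Set.Icc a b)
    (hVW : ∀ k : ℕ, 1 ≤ k → sSup (V k) + 1 = sInf (W k))
    (hWV : ∀ k : ℕ, 1 ≤ k → sSup (W k) + 1 = sInf (V (k + 1)))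
    (hpart : (⋃ k ∈ Set.Ici 1, (V k ∪ W k)) = {n : ℕ | 1 ≤ n})
    (hL : ∀ n : ℕ, 1 ≤ n → ∃ a b : ℕ, 1 ≤ a ∧ a ≤ b ∧ (L n : Set ℕ) = Set.Icc a b) :
    ∃ μ : MeasureTheory.Measure ℝ, MeasureTheory.IsProbabilityMeasure μ ∧
      μ (Lam V W L) = 1 ∧
      ∀ n : ℕ, 1 ≤ n → ∀ a : ℕ → ℕ, (∀ i : ℕ, 1 ≤ i → i ≤ n → 1 ≤ a i) →
        (cyl n a ∩ Lam V W L).Nonempty →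
        ((n ∈ V 1 →
            μ (cyl n a) = ∏ i ∈ Finset.Icc 1 n, (1 / ((L i).card : ℝ≥0∞))) ∧
         (∀ k : ℕ, 1 ≤ k → n ∈ W k →
            μ (cyl n a) = ∏ m ∈ Finset.Icc 1 k,
              ∏ i ∈ Finset.Icc (sInf (V m)) (sSup (V m)), (1 / ((L i).card : ℝ≥0∞))) ∧
         (∀ k : ℕ, 1 ≤ k → n ∈ V (k + 1) →
            μ (cyl n a) = (∏ m ∈ Finset.Icc 1 k,
                ∏ i ∈ Finset.Icc (sInf (V m)) (sSup (V m)), (1 / ((L i).card : ℝ≥0∞))) *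
              ∏ i ∈ Finset.Icc (sInf (V (k + 1))) n, (1 / ((L i).card : ℝ≥0∞)))) := by
  classical
  -- interval structure facts
  have hVfact : ∀ k, 1 ≤ k → V k = Set.Icc (sInf (V k)) (sSup (V k))
      ∧ 1 ≤ sInf (V k) ∧ sInf (V k) ≤ sSup (V k) := by
    intro k hk
    obtain ⟨a, b, ha, hab, hEq⟩ := hV k hk
    have h1 : sInf (V k) = a := by rw [hEq]; exact csInf_Icc hab
    have h2 : sSup (V k) = b := by rw [hEq]; exact csSup_Icc hab
    exact ⟨by rw [h1, h2, hEq], by omega, by omega⟩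
  have hWfact : ∀ k, 1 ≤ k → W k = Set.Icc (sSup (V k) + 1) (sSup (W k))
      ∧ sSup (V k) + 1 ≤ sSup (W k) := by
    intro k hk
    obtain ⟨a, b, ha, hab, hEq⟩ := hW k hk
    have h1 : sInf (W k) = a := by rw [hEq]; exact csInf_Icc hab
    have h2 : sSup (W k) = b := by rw [hEq]; exact csSup_Icc hab
    have h3 := hVW k hk
    exact ⟨by rw [h2, hEq, show sSup (V k) + 1 = a by omega], by omega⟩
  have hvs : ∀ k, 1 ≤ k → sInf (V k) ≤ sSup (V k) := fun k hk => (hVfact k hk).2.2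
  have hv1' : ∀ k, 1 ≤ k → 1 ≤ sInf (V k) := fun k hk => (hVfact k hk).2.1
  have hsw : ∀ k, 1 ≤ k → sSup (V k) < sSup (W k) := by
    intro k hk; have := (hWfact k hk).2; omega
  have hwv : ∀ k, 1 ≤ k → sSup (W k) < sInf (V (k + 1)) := by
    intro k hk; have := hWV k hk; omega
  have hmemV : ∀ k, 1 ≤ k → ∀ n, n ∈ V k ↔ (sInf (V k) ≤ n ∧ n ≤ sSup (V k)) := by
    intro k hk n
    have := Set.ext_iff.mp (hVfact k hk).1 n
    rwa [Set.mem_Icc] at this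
  have hmemW : ∀ k, 1 ≤ k → ∀ n, n ∈ W k ↔ (sSup (V k) + 1 ≤ n ∧ n ≤ sSup (W k)) := by
    intro k hk n
    have := Set.ext_iff.mp (hWfact k hk).1 n
    rwa [Set.mem_Icc] at this
  have hchain := CFAux.chain_mono (fun k => sInf (V k)) (fun k => sSup (V k))
    (fun k => sSup (W k)) hvs hsw hwv
  have hwlt := CFAux.w_lt_v (fun k => sInf (V k)) (fun k => sSup (V k))
    (fun k => sSup (W k)) hvs hsw hwv
  have hchain' : ∀ k m, 1 ≤ k → k ≤ m → sSup (V k) ≤ sSup (V m) ∧ sInf (V k) ≤ sInf (V m)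
      ∧ sSup (W k) ≤ sSup (W m) := hchain
  have hwlt' : ∀ k m, 1 ≤ k → k < m → sSup (W k) < sInf (V m) := hwlt
  have hcover : ∀ n, 1 ≤ n → (∃ k, 1 ≤ k ∧ n ∈ V k) ∨ (∃ k, 1 ≤ k ∧ n ∈ W k) := by
    intro n hn
    have hmem : n ∈ ⋃ k ∈ Set.Ici 1, (V k ∪ W k) := by rw [hpart]; exact hn
    simp only [Set.mem_iUnion, Set.mem_union, Set.mem_Ici] at hmem
    obtain ⟨k, hk, h | h⟩ := hmem
    · exact Or.inl ⟨k, hk, h⟩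
    · exact Or.inr ⟨k, hk, h⟩
  have hv11 : sInf (V 1) = 1 := by
    have h1 := hcover 1 le_rfl
    have hle : sInf (V 1) ≤ 1 := by
      rcases h1 with ⟨k, hk, hmem⟩ | ⟨k, hk, hmem⟩
      · rw [hmemV k hk 1] at hmem
        have := (hchain' 1 k le_rfl hk).2.1
        omega
      · rw [hmemW k hk 1] at hmem
        have := (hchain' 1 k le_rfl hk).2.1
        have := hvs k hk
        omega
    have := hv1' 1 le_rfl
    omega
  have hVWdisj : ∀ k k', 1 ≤ k → 1 ≤ k' → ∀ n, n ∈ V k → n ∈ W k' → False := by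
    intro k k' hk hk' n h1 h2
    rw [hmemV k hk n] at h1
    rw [hmemW k' hk' n] at h2
    rcases le_or_gt k k' with h | h
    · have := (hchain' k k' hk h).1
      omega
    · have := hwlt' k' k hk' h
      omega
  have hWWdisj : ∀ k k', 1 ≤ k → 1 ≤ k' → ∀ n, n ∈ W k → n ∈ W k' → k = k' := by
    intro k k' hk hk' n h1 h2
    rw [hmemW k hk n] at h1
    rw [hmemW k' hk' n] at h2
    by_contra hne
    rcases Nat.lt_or_ge k k' with h | h
    · have := hwlt' k k' hk h
      have := hvs k' hk'
      omega
    · have hlt : k' < k := by omega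
      have := hwlt' k' k hk' hlt
      have := hvs k hk
      omega
  have hVpos : ∀ n, isVpos V n → 1 ≤ n := by
    rintro n ⟨k, hk, hmem⟩
    rw [hmemV k hk n] at hmem
    have := hv1' k hk
    omega
  have hnotW : ∀ n, isVpos V n → ¬ isWpos W n := by
    rintro n ⟨k, hk, hmem⟩ ⟨k', hk', hmem'⟩
    exact hVWdisj k k' hk hk' n hmem hmem'
  -- L structure
  have hLex : ∀ n, 1 ≤ n →
      ∃ p : ℕ × ℕ, 1 ≤ p.1 ∧ p.1 ≤ p.2 ∧ (L n : Set ℕ) = Set.Icc p.1 p.2 := by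
    intro n hn
    obtain ⟨a, b, h1, h2, h3⟩ := hL n hn
    exact ⟨(a, b), h1, h2, h3⟩
  have hPL : ∀ n, 1 ≤ n → 1 ≤ (PLFun L n).1 ∧ (PLFun L n).1 ≤ (PLFun L n).2 ∧
      (L n : Set ℕ) = Set.Icc (PLFun L n).1 (PLFun L n).2 :=
    fun n hn => PLFun_spec L n (hLex n hn)
  have hcard : ∀ n, 1 ≤ n → (L n).card = (PLFun L n).2 + 1 - (PLFun L n).1 := by
    intro n hn
    have h := (hPL n hn).2.2
    have : L n = Finset.Icc (PLFun L n).1 (PLFun L n).2 :=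
      Finset.coe_injective (by rw [h, Finset.coe_Icc])
    rw [this, Nat.card_Icc]
  have hc1 : ∀ i, 1 ≤ cFun V L i := by
    intro i
    unfold cFun
    split_ifs with h
    · have hi := hVpos i h
      have := hcard i hi
      have := (hPL i hi).2.1
      omega
    · exact le_rfl
  have hcV : ∀ i, isVpos V i → cFun V L i = (L i).card := by
    intro i h; unfold cFun; rw [if_pos h]
  have hcW : ∀ i, ¬ isVpos V i → cFun V L i = 1 := by
    intro i h; unfold cFun; rw [if_neg h]
  -- DFun computations
  have hDV : ∀ t n, isVpos V n →
      DFun V W L t n = (PLFun L n).1 + CFAux.digSeq (cFun V L) t n := by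
    intro t n h
    unfold DFun
    rw [dif_neg (hnotW n h)]
  have hsV : ∀ k, 1 ≤ k → sSup (V k) ∈ V k := by
    intro k hk
    rw [hmemV k hk]
    exact ⟨hvs k hk, le_rfl⟩
  have hDW : ∀ t n k, 1 ≤ k → n ∈ W k →
      DFun V W L t n = DFun V W L t (sSup (V k)) + (n - sSup (V k)) := by
    intro t n k hk hmem
    have hw : isWpos W n := ⟨k, hk, hmem⟩
    have hch : hw.choose = k := by
      obtain ⟨hk', hmem'⟩ := hw.choose_spec
      exact hWWdisj _ k hk' hk n hmem' hmem
    unfold DFun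
    rw [dif_pos hw, hch, dif_neg (hnotW _ ⟨k, hk, hsV k hk⟩)]
  have hDVval : ∀ t ∈ Set.Ico (0:ℝ) 1, ∀ n k, 1 ≤ k → n ∈ V k → DFun V W L t n ∈ L n := by
    intro t ht n k hk hmem
    have hVn : isVpos V n := ⟨k, hk, hmem⟩
    have hn1 := hVpos n hVn
    rw [hDV t n hVn]
    have hdig := CFAux.digSeq_lt (cFun V L) ht n (hc1 n)
    rw [hcV n hVn, hcard n hn1] at hdig
    have hs := (hPL n hn1).2.1
    rw [← Finset.mem_coe, (hPL n hn1).2.2, Set.mem_Icc]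
    omega
  -- Φ ∈ Λ
  have hΛ : ∀ t ∈ Set.Ico (0:ℝ) 1, PhiFun V W L t ∈ Lam V W L := by
    intro t ht
    refine ⟨PhiFun_mem V W L t, PhiFun_irrational V W L t, ?_, ?_⟩
    · intro k hk n hmem
      have hn1 : 1 ≤ n := hVpos n ⟨k, hk, hmem⟩
      rw [PhiFun_pq V W L t n hn1]
      exact hDVval t ht n k hk hmem
    · intro k hk n hmem
      have hn1 : 1 ≤ n := by
        rw [hmemW k hk n] at hmem; omega
      have hsk1 : 1 ≤ sSup (V k) := le_trans (hv1' k hk) (hvs k hk)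
      rw [PhiFun_pq V W L t n hn1, PhiFun_pq V W L t (sSup (V k)) hsk1]
      exact hDW t n k hk hmem
  -- the measure
  set μ : Measure ℝ := (volume.restrict (Set.Ico (0:ℝ) 1)).map (PhiFun V W L) with hμ
  have hΦm := PhiFun_measurable V W L
  have hprob : IsProbabilityMeasure μ := by
    constructor
    rw [hμ, Measure.map_apply hΦm MeasurableSet.univ, Set.preimage_univ,
      Measure.restrict_apply MeasurableSet.univ, Set.univ_inter, Real.volume_Ico]
    norm_num
  refine ⟨μ, hprob, ?_, ?_⟩
  · rw [hμ, Measure.map_apply hΦm (Lam_measurable V W L),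
      Measure.restrict_apply (hΦm (Lam_measurable V W L))]
    have hsub : PhiFun V W L ⁻¹' Lam V W L ∩ Set.Ico 0 1 = Set.Ico (0:ℝ) 1 := by
      exact Set.inter_eq_self_of_subset_right (fun t ht => hΛ t ht)
    rw [hsub, Real.volume_Ico]
    norm_num
  · rintro n hn a ha ⟨xb, hxbcyl, hxbΛ⟩
    obtain ⟨hxbIoo, hxbirr, hxbV, hxbW⟩ := hxbΛ
    have hax : ∀ i, 1 ≤ i → i ≤ n → pq xb i = a i := hxbcyl.2
    have haV : ∀ i, 1 ≤ i → i ≤ n → isVpos V i →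
        ((PLFun L i).1 ≤ a i ∧ a i ≤ (PLFun L i).2) := by
      rintro i h1 h2 ⟨k, hk, hmem⟩
      have hmemL := hxbV k hk i hmem
      rw [hax i h1 h2] at hmemL
      have : a i ∈ (L i : Set ℕ) := hmemL
      rw [(hPL i h1).2.2, Set.mem_Icc] at this
      exact this
    have haW : ∀ i, 1 ≤ i → i ≤ n → ∀ k, 1 ≤ k → i ∈ W k →
        a i = a (sSup (V k)) + (i - sSup (V k)) := by
      intro i h1 h2 k hk hmem
      have h3 := hxbW k hk i hmem
      have hski : sSup (V k) < i := by
        rw [hmemW k hk i] at hmem; omega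
      have hsk1 : 1 ≤ sSup (V k) := le_trans (hv1' k hk) (hvs k hk)
      rw [hax i h1 h2, hax (sSup (V k)) hsk1 (by omega)] at h3
      exact h3
    set e : ℕ → ℕ := fun i => if isVpos V i then a i - (PLFun L i).1 else 0 with he_def
    have he : ∀ i, 1 ≤ i → i ≤ n → e i < cFun V L i := by
      intro i h1 h2
      by_cases h : isVpos V i
      · rw [he_def]
        simp only [if_pos h]
        rw [hcV i h, hcard i h1]
        have := haV i h1 h2 h
        have := (hPL i h1).2.1
        omega
      · rw [he_def]
        simp only [if_neg h]
        rw [hcW i h]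
        omega
    -- the key set identity
    have hDiff : ∀ t ∈ Set.Ico (0:ℝ) 1,
        ((∀ i, 1 ≤ i → i ≤ n → DFun V W L t i = a i) ↔
          (∀ i, 1 ≤ i → i ≤ n → CFAux.digSeq (cFun V L) t i = e i)) := by
      intro t ht
      constructor
      · intro hD i h1 h2
        by_cases h : isVpos V i
        · have := hD i h1 h2
          rw [hDV t i h] at this
          rw [he_def]
          simp only [if_pos h]
          omega
        · have hdig := CFAux.digSeq_lt (cFun V L) ht i (hc1 i)
          rw [hcW i h] at hdig
          rw [he_def]
          simp only [if_neg h]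
          omega
      · intro hdig i h1 h2
        have hVcase : ∀ j, 1 ≤ j → j ≤ n → isVpos V j → DFun V W L t j = a j := by
          intro j hj1 hj2 hj
          rw [hDV t j hj]
          have := hdig j hj1 hj2
          rw [he_def] at this
          simp only [if_pos hj] at this
          have := (haV j hj1 hj2 hj).1
          omega
        by_cases h : isVpos V i
        · exact hVcase i h1 h2 h
        · rcases hcover i h1 with hc | ⟨k, hk, hmem⟩
          · exact absurd ⟨hc.choose, hc.choose_spec⟩ h
          · have hski : sSup (V k) < i := by
              rw [hmemW k hk i] at hmem; omega
            have hsk1 : 1 ≤ sSup (V k) := le_trans (hv1' k hk) (hvs k hk)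
            rw [hDW t i k hk hmem,
              hVcase (sSup (V k)) hsk1 (by omega) ⟨k, hk, hsV k hk⟩,
              haW i h1 h2 k hk hmem]
    have hset : PhiFun V W L ⁻¹' (cyl n a) ∩ Set.Ico (0:ℝ) 1
        = {t : ℝ | t ∈ Set.Ico (0:ℝ) 1 ∧
            ∀ i, 1 ≤ i → i ≤ n → CFAux.digSeq (cFun V L) t i = e i} := by
      ext t
      simp only [Set.mem_inter_iff, Set.mem_preimage, Set.mem_setOf_eq]
      constructor
      · rintro ⟨hcylmem, ht⟩
        refine ⟨ht, ?_⟩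
        rw [← hDiff t ht]
        intro i h1 h2
        rw [← PhiFun_pq V W L t i h1]
        exact hcylmem.2 i h1 h2
      · rintro ⟨ht, hdig⟩
        refine ⟨⟨?_, ?_⟩, ht⟩
        · have := PhiFun_mem V W L t
          exact ⟨this.1, le_of_lt this.2⟩
        · intro i h1 h2
          rw [PhiFun_pq V W L t i h1]
          exact (hDiff t ht).mpr hdig i h1 h2
    have hval : μ (cyl n a) = ∏ i ∈ Finset.Icc 1 n, ((cFun V L i : ℝ≥0∞))⁻¹ := by
      rw [hμ, Measure.map_apply hΦm (cyl_measurable n a),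
        Measure.restrict_apply (hΦm (cyl_measurable n a)), hset]
      exact CFAux.vol_digs n (cFun V L) e hc1 he
    -- product conversion hypotheses
    have hcV' : ∀ i, isVpos V i → ((cFun V L i : ℝ≥0∞))⁻¹ = 1 / ((L i).card : ℝ≥0∞) := by
      intro i h
      rw [hcV i h, one_div]
    have hcW' : ∀ i, ¬ isVpos V i → ((cFun V L i : ℝ≥0∞))⁻¹ = 1 := by
      intro i h
      rw [hcW i h]
      simp
    have hiff : ∀ i, isVpos V i ↔ ∃ k, 1 ≤ k ∧ sInf (V k) ≤ i ∧ i ≤ sSup (V k) := by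
      intro i
      constructor
      · rintro ⟨k, hk, hmem⟩
        rw [hmemV k hk i] at hmem
        exact ⟨k, hk, hmem⟩
      · rintro ⟨k, hk, h1, h2⟩
        exact ⟨k, hk, (hmemV k hk i).mpr ⟨h1, h2⟩⟩
    refine ⟨?_, ?_, ?_⟩
    · intro hnV1
      rw [hmemV 1 le_rfl n] at hnV1
      rw [hval]
      exact CFAux.prod_caseV1 (fun k => sInf (V k)) (fun k => sSup (V k))
        (fun k => sSup (W k)) (fun i => 1 / ((L i).card : ℝ≥0∞))
        (fun i => ((cFun V L i : ℝ≥0∞))⁻¹) (isVpos V)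
        hv1' hvs hsw hwv hv11 hiff hcV' hcW' n hn hnV1.2
    · intro k hk hnW
      rw [hmemW k hk n] at hnW
      rw [hval]
      exact CFAux.prod_caseW (fun k => sInf (V k)) (fun k => sSup (V k))
        (fun k => sSup (W k)) (fun i => 1 / ((L i).card : ℝ≥0∞))
        (fun i => ((cFun V L i : ℝ≥0∞))⁻¹) (isVpos V)
        hv1' hvs hsw hwv hv11 hiff hcV' hcW' k hk n (by show sSup (V k) < n; omega) hnW.2
    · intro k hk hnV
      rw [hmemV (k + 1) (by omega) n] at hnV
      rw [hval]
      exact CFAux.prod_caseV (fun k => sInf (V k)) (fun k => sSup (V k))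
        (fun k => sSup (W k)) (fun i => 1 / ((L i).card : ℝ≥0∞))
        (fun i => ((cFun V L i : ℝ≥0∞))⁻¹) (isVpos V)
        hv1' hvs hsw hwv hv11 hiff hcV' hcW' k hk n hnV.1 hnV.2
end

section
/- Let x ∈ (0,1) be irrational and suppose that a_n(x) → ∞ as n → ∞ and that log a_n(x) / log a_{n+1}(x) → 1 as n → ∞. Then log |I_n(x)| / log |I_{n+1}(x)| → 1 as n → ∞. -/
open Filter MeasureTheory Set
open scoped ENNReal NNReal Topology

/-- convergent numerators/denominators -/
def cnum (a : ℕ → ℕ) : ℕ → ℕ × ℕ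
  | 0 => (0, 1)
  | 1 => (1, a 1)
  | (n+2) => (a (n+2) * (cnum a (n+1)).1 + (cnum a n).1,
              a (n+2) * (cnum a (n+1)).2 + (cnum a n).2)

def cp (a : ℕ → ℕ) (n : ℕ) : ℕ := (cnum a n).1
def cq (a : ℕ → ℕ) (n : ℕ) : ℕ := (cnum a n).2

lemma cp_zero (a : ℕ → ℕ) : cp a 0 = 0 := rfl
lemma cq_zero (a : ℕ → ℕ) : cq a 0 = 1 := rfl
lemma cp_one (a : ℕ → ℕ) : cp a 1 = 1 := rfl
lemma cq_one (a : ℕ → ℕ) : cq a 1 = a 1 := rfl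
lemma cp_succ (a : ℕ → ℕ) (n : ℕ) : cp a (n+2) = a (n+2) * cp a (n+1) + cp a n := rfl
lemma cq_succ (a : ℕ → ℕ) (n : ℕ) : cq a (n+2) = a (n+2) * cq a (n+1) + cq a n := rfl

variable {a : ℕ → ℕ}

lemma cq_pos (ha : ∀ i, 1 ≤ i → 1 ≤ a i) : ∀ n, 1 ≤ cq a n := by
  intro n
  induction n using Nat.twoStepInduction with
  | zero => simp [cq_zero]
  | one => simpa [cq_one] using ha 1 le_rfl
  | more n ih1 ih2 =>
    rw [cq_succ]
    have := ha (n+2) (by omega)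
    nlinarith

lemma cq_mono (ha : ∀ i, 1 ≤ i → 1 ≤ a i) : ∀ n, cq a n ≤ cq a (n+1) := by
  intro n
  match n with
  | 0 => simpa [cq_zero, cq_one] using ha 1 le_rfl
  | (n+1) =>
    rw [cq_succ]
    have := ha (n+2) (by omega)
    nlinarith [cq_pos ha n, cq_pos ha (n+1)]

lemma cp_le_cq (ha : ∀ i, 1 ≤ i → 1 ≤ a i) : ∀ n, cp a n ≤ cq a n := by
  intro n
  induction n using Nat.twoStepInduction with
  | zero => simp [cp_zero, cq_zero]
  | one => simpa [cp_one, cq_one] using ha 1 le_rfl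
  | more n ih1 ih2 =>
    rw [cq_succ, cp_succ]
    have := ha (n+2) (by omega)
    nlinarith

lemma cdet : ∀ n, (cp a (n+1) : ℤ) * cq a n - cp a n * cq a (n+1) = (-1)^n := by
  intro n
  induction n with
  | zero => simp [cp_zero, cq_zero, cp_one, cq_one]
  | succ n ih =>
    rw [cp_succ, cq_succ]
    push_cast
    rw [pow_succ]
    nlinarith [ih]

def shft (a : ℕ → ℕ) : ℕ → ℕ := fun i => a (i+1)

lemma cnum_shift : ∀ n, cp a (n+1) = cq (shft a) n ∧
    cq a (n+1) = a 1 * cq (shft a) n + cp (shft a) n := by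
  intro n
  induction n using Nat.twoStepInduction with
  | zero => simp [cp_one, cq_one, cq_zero, cp_zero]
  | one =>
    constructor
    · simp [cp_succ, cp_one, cp_zero, cq_one, shft]
    · simp [cq_succ, cq_one, cq_zero, cp_one, shft]; ring
  | more n ih1 ih2 =>
    have e1 : a (n + 3) = (shft a) (n+2) := rfl
    have h2q : cq a (n+3) = a (n+3) * cq a (n+2) + cq a (n+1) := rfl
    have h2p : cp a (n+3) = a (n+3) * cp a (n+2) + cp a (n+1) := rfl
    constructor
    · show cp a (n+3) = cq (shft a) (n+2)
      rw [h2p, ih1.1, ih2.1, e1, cq_succ]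
    · show cq a (n+3) = a 1 * cq (shft a) (n+2) + cp (shft a) (n+2)
      rw [h2q, ih1.2, ih2.2, e1, cq_succ, cp_succ]; ring

/-! ### cylinder basics -/

lemma one_le_floor_inv {y : ℝ} (hy0 : 0 < y) (hy1 : y ≤ 1) : 1 ≤ ⌊1/y⌋ := by
  have : (1:ℝ) ≤ 1/y := by rw [le_div_iff₀ hy0]; linarith
  exact_mod_cast Int.le_floor.mpr (by exact_mod_cast this)

lemma floor_inv_eq {y : ℝ} {k : ℕ} (hk : 1 ≤ k)
    (hy : y ∈ Set.Ioc (1/((k:ℝ)+1)) (1/(k:ℝ))) : ⌊1/y⌋ = (k:ℤ) := by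
  have hk0 : (0:ℝ) < k := by exact_mod_cast hk
  have hy0 : 0 < y := lt_trans (by positivity) hy.1
  rw [Int.floor_eq_iff]
  constructor
  · push_cast
    rw [le_div_iff₀ hy0]
    have h2 : y * k ≤ 1 := (le_div_iff₀ hk0).mp hy.2
    nlinarith
  · push_cast
    rw [div_lt_iff₀ hy0]
    have h2 : 1 < y * ((k:ℝ)+1) := (div_lt_iff₀ (by positivity)).mp hy.1
    nlinarith

lemma pq_one_eq_iff {y : ℝ} (hy0 : 0 < y) (hy1 : y ≤ 1) {k : ℕ} (hk : 1 ≤ k) :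
    pq y 1 = k ↔ y ∈ Set.Ioc (1/((k:ℝ)+1)) (1/(k:ℝ)) := by
  have hpq : pq y 1 = (⌊1/y⌋).toNat := rfl
  constructor
  · intro h
    rw [hpq] at h
    have hfl : ⌊1/y⌋ = (k:ℤ) := by
      have := one_le_floor_inv hy0 hy1
      omega
    rw [Int.floor_eq_iff] at hfl
    have hk0 : (0:ℝ) < k := by exact_mod_cast hk
    push_cast at hfl
    constructor
    · rw [div_lt_iff₀ (by positivity)]
      have := hfl.2
      rw [div_lt_iff₀ hy0] at this
      nlinarith
    · rw [le_div_iff₀ hk0]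
      have := hfl.1
      rw [le_div_iff₀ hy0] at this
      nlinarith
  · intro h
    rw [hpq, floor_inv_eq hk h]
    simp

lemma gauss_pq_shift (y : ℝ) (i : ℕ) (hi : 1 ≤ i) : pq y (i+1) = pq (gaussMap y) i := by
  unfold pq
  have h : i + 1 - 1 = (i - 1) + 1 := by omega
  rw [h, Function.iterate_succ_apply]

lemma gauss_zero : gaussMap 0 = 0 := by simp [gaussMap]

lemma gauss_eq {y : ℝ} {k : ℕ} (hk : 1 ≤ k)
    (hy : y ∈ Set.Ioc (1/((k:ℝ)+1)) (1/(k:ℝ))) : gaussMap y = 1/y - (k:ℝ) := by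
  unfold gaussMap
  rw [floor_inv_eq hk hy]
  norm_num

lemma cyl_one (a : ℕ → ℕ) (ha : ∀ i, 1 ≤ i → 1 ≤ a i) :
    cyl 1 a = Set.Ioc (1/((a 1 : ℝ)+1)) (1/(a 1 : ℝ)) := by
  have hk0 : (0:ℝ) < a 1 := by exact_mod_cast ha 1 le_rfl
  ext y
  constructor
  · rintro ⟨hy, hall⟩
    exact (pq_one_eq_iff hy.1 hy.2 (ha 1 le_rfl)).mp (hall 1 le_rfl le_rfl)
  · intro hy
    have hy0 : 0 < y := lt_trans (by positivity) hy.1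
    have hy1 : y ≤ 1 := le_trans hy.2 (by rw [div_le_one hk0]; exact_mod_cast ha 1 le_rfl)
    refine ⟨⟨hy0, hy1⟩, ?_⟩
    intro i hi1 hi2
    have : i = 1 := le_antisymm hi2 hi1
    subst this
    exact (pq_one_eq_iff hy0 hy1 (ha 1 le_rfl)).mpr hy

lemma cyl_shift (n : ℕ) (hn : 1 ≤ n) (a : ℕ → ℕ) (ha : ∀ i, 1 ≤ i → 1 ≤ a i) (y : ℝ) :
    y ∈ cyl (n+1) a ↔
      y ∈ Set.Ioc (1/((a 1 : ℝ)+1)) (1/(a 1 : ℝ)) ∧ gaussMap y ∈ cyl n (shft a) := by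
  have ha1 : 1 ≤ a 1 := ha 1 le_rfl
  have hk0 : (0:ℝ) < a 1 := by exact_mod_cast ha1
  constructor
  · rintro ⟨hy, hall⟩
    have h1 : pq y 1 = a 1 := hall 1 le_rfl (by omega)
    have hyIoc := (pq_one_eq_iff hy.1 hy.2 ha1).mp h1
    refine ⟨hyIoc, ?_, ?_⟩
    · -- gaussMap y ∈ Ioc 0 1
      have hfr : gaussMap y = Int.fract (1/y) := by
        unfold gaussMap Int.fract; ring
      have hlt1 : gaussMap y < 1 := by rw [hfr]; exact Int.fract_lt_one _
      have hge0 : 0 ≤ gaussMap y := by rw [hfr]; exact Int.fract_nonneg _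
      rcases eq_or_lt_of_le hge0 with h0 | h0
      · exfalso
        have h2 : pq y 2 = a 2 := hall 2 (by omega) (by omega)
        have : pq y 2 = pq (gaussMap y) 1 := gauss_pq_shift y 1 le_rfl
        rw [this, ← h0] at h2
        have : pq (0:ℝ) 1 = 0 := by
          unfold pq; norm_num
        rw [this] at h2
        have := ha 2 (by omega)
        omega
      · exact ⟨h0, le_of_lt hlt1⟩
    · intro i hi1 hi2
      rw [shft, ← gauss_pq_shift y i hi1]
      exact hall (i+1) (by omega) (by omega)
  · rintro ⟨hyIoc, hz⟩
    have hy0 : 0 < y := lt_trans (by positivity) hyIoc.1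
    have hy1 : y ≤ 1 := le_trans hyIoc.2 (by rw [div_le_one hk0]; exact_mod_cast ha1)
    refine ⟨⟨hy0, hy1⟩, ?_⟩
    intro i hi1 hi2
    match i, hi1 with
    | 1, _ => exact (pq_one_eq_iff hy0 hy1 ha1).mpr hyIoc
    | (j+2), _ =>
      rw [gauss_pq_shift y (j+1) (by omega)]
      exact hz.2 (j+1) (by omega) (by omega)

/-! ### endpoints -/

noncomputable def cA (a : ℕ → ℕ) (n : ℕ) : ℝ := (cp a n : ℝ) / (cq a n : ℝ)
noncomputable def cB (a : ℕ → ℕ) (n : ℕ) : ℝ :=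
  ((cp a n : ℝ) + (cp a (n-1) : ℝ)) / ((cq a n : ℝ) + (cq a (n-1) : ℝ))

lemma cq_posR (ha : ∀ i, 1 ≤ i → 1 ≤ a i) (n : ℕ) : (0:ℝ) < cq a n := by
  exact_mod_cast cq_pos ha n

lemma cA_mem (ha : ∀ i, 1 ≤ i → 1 ≤ a i) (n : ℕ) : cA a n ∈ Set.Icc (0:ℝ) 1 := by
  have h1 := cq_posR ha n
  have h2 : (cp a n : ℝ) ≤ cq a n := by exact_mod_cast cp_le_cq ha n
  unfold cA
  constructor
  · apply div_nonneg <;> positivity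
  · rw [div_le_one h1]; exact h2

lemma cB_mem (ha : ∀ i, 1 ≤ i → 1 ≤ a i) (n : ℕ) : cB a n ∈ Set.Icc (0:ℝ) 1 := by
  have h1 := cq_posR ha n
  have h1' := cq_posR ha (n-1)
  have h2 : (cp a n : ℝ) ≤ cq a n := by exact_mod_cast cp_le_cq ha n
  have h2' : (cp a (n-1) : ℝ) ≤ cq a (n-1) := by exact_mod_cast cp_le_cq ha (n-1)
  unfold cB
  constructor
  · apply div_nonneg <;> positivity
  · rw [div_le_one (by linarith)]; linarith

lemma cA_succ (ha : ∀ i, 1 ≤ i → 1 ≤ a i) (n : ℕ) :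
    cA a (n+1) = 1 / ((a 1 : ℝ) + cA (shft a) n) := by
  have hs := cnum_shift (a := a) n
  have hq' := cq_posR (a := shft a) (fun i hi => ha (i+1) (by omega)) n
  have ha1 : (0:ℝ) < a 1 := by exact_mod_cast ha 1 le_rfl
  have hp' : (0:ℝ) ≤ cp (shft a) n := by positivity
  unfold cA
  rw [hs.1, hs.2]
  have hq0 : (cq (shft a) n : ℝ) ≠ 0 := ne_of_gt hq'
  push_cast
  rw [eq_div_iff (by positivity)]
  field_simp

lemma cB_succ (ha : ∀ i, 1 ≤ i → 1 ≤ a i) (n : ℕ) (hn : 1 ≤ n) :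
    cB a (n+1) = 1 / ((a 1 : ℝ) + cB (shft a) n) := by
  obtain ⟨m, rfl⟩ : ∃ m, n = m + 1 := ⟨n - 1, by omega⟩
  have hs1 := cnum_shift (a := a) (m+1)
  have hs0 := cnum_shift (a := a) m
  have ha' : ∀ i, 1 ≤ i → 1 ≤ (shft a) i := fun i hi => ha (i+1) (by omega)
  have hq1 := cq_posR (a := shft a) ha' (m+1)
  have hq0 := cq_posR (a := shft a) ha' m
  have ha1 : (0:ℝ) < a 1 := by exact_mod_cast ha 1 le_rfl
  have hp1 : (0:ℝ) ≤ cp (shft a) (m+1) := by positivity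
  have hp0 : (0:ℝ) ≤ cp (shft a) m := by positivity
  unfold cB
  simp only [Nat.add_sub_cancel]
  rw [hs1.1, hs1.2, hs0.1, hs0.2]
  have hq0 : (cq (shft a) (m+1) : ℝ) + (cq (shft a) m : ℝ) ≠ 0 := by positivity
  push_cast
  rw [eq_div_iff (by positivity)]
  field_simp
  ring

/-! ### main structural lemma -/

theorem cyl_between : ∀ n, 1 ≤ n → ∀ a : ℕ → ℕ, (∀ i, 1 ≤ i → 1 ≤ a i) →
    Set.Ioo (min (cA a n) (cB a n)) (max (cA a n) (cB a n)) ⊆ cyl n a ∧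
    cyl n a ⊆ Set.Icc (min (cA a n) (cB a n)) (max (cA a n) (cB a n)) := by
  intro n hn
  induction n, hn using Nat.le_induction with
  | base =>
    intro a ha
    have ha1 : (0:ℝ) < a 1 := by exact_mod_cast ha 1 le_rfl
    have hA : cA a 1 = 1/(a 1 : ℝ) := by
      unfold cA; rw [cp_one, cq_one]; push_cast; ring
    have hB : cB a 1 = 1/((a 1 : ℝ)+1) := by
      unfold cB; rw [cp_one, cq_one]
      norm_num [cp_zero, cq_zero]
    have hlt : cB a 1 < cA a 1 := by
      rw [hA, hB]
      apply div_lt_div_of_pos_left one_pos ha1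
      linarith
    rw [cyl_one a ha, min_eq_right hlt.le, max_eq_left hlt.le, hA, hB]
    exact ⟨fun y hy => ⟨hy.1, hy.2.le⟩, fun y hy => ⟨hy.1.le, hy.2⟩⟩
  | succ n hn ih =>
    intro a ha
    have ha' : ∀ i, 1 ≤ i → 1 ≤ (shft a) i := fun i hi => ha (i+1) (by omega)
    obtain ⟨ihl, ihr⟩ := ih (shft a) ha'
    set m' := min (cA (shft a) n) (cB (shft a) n) with hm'
    set M' := max (cA (shft a) n) (cB (shft a) n) with hM'
    have hm0 : 0 ≤ m' := le_min (cA_mem ha' n).1 (cB_mem ha' n).1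
    have hM1 : M' ≤ 1 := max_le (cA_mem ha' n).2 (cB_mem ha' n).2
    have hmM : m' ≤ M' := min_le_max
    have ha1 : (0:ℝ) < a 1 := by exact_mod_cast ha 1 le_rfl
    have hA := cA_succ ha n
    have hB := cB_succ ha n hn
    -- new endpoints
    have hA0 : 0 ≤ cA (shft a) n := (cA_mem ha' n).1
    have hB0 : 0 ≤ cB (shft a) n := (cB_mem ha' n).1
    have hmin : min (cA a (n+1)) (cB a (n+1)) = 1/((a 1 : ℝ) + M') := by
      rw [hA, hB, hM']
      rcases le_total (cA (shft a) n) (cB (shft a) n) with h | h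
      · rw [max_eq_right h, min_eq_right (one_div_le_one_div_of_le (by linarith) (by linarith))]
      · rw [max_eq_left h, min_eq_left (one_div_le_one_div_of_le (by linarith) (by linarith))]
    have hmax : max (cA a (n+1)) (cB a (n+1)) = 1/((a 1 : ℝ) + m') := by
      rw [hA, hB, hm']
      rcases le_total (cA (shft a) n) (cB (shft a) n) with h | h
      · rw [min_eq_left h, max_eq_left (one_div_le_one_div_of_le (by linarith) (by linarith))]
      · rw [min_eq_right h, max_eq_right (one_div_le_one_div_of_le (by linarith) (by linarith))]
    rw [hmin, hmax]
    constructor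
    · -- Ioo ⊆ cyl
      intro y hy
      have hyl : 1/((a 1 : ℝ)+1) ≤ 1/((a 1 : ℝ) + M') := by
        apply one_div_le_one_div_of_le (by linarith) (by linarith)
      have hyu : 1/((a 1 : ℝ) + m') ≤ 1/(a 1 : ℝ) := by
        apply one_div_le_one_div_of_le ha1 (by linarith)
      have hyIoc : y ∈ Set.Ioc (1/((a 1 : ℝ)+1)) (1/(a 1 : ℝ)) :=
        ⟨lt_of_le_of_lt hyl hy.1, le_of_lt (lt_of_lt_of_le hy.2 hyu)⟩
      have hy0 : 0 < y := lt_trans (by positivity) hyIoc.1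
      rw [cyl_shift n hn a ha y]
      refine ⟨hyIoc, ?_⟩
      have hg : gaussMap y = 1/y - (a 1 : ℝ) := gauss_eq (ha 1 le_rfl) hyIoc
      apply ihl
      constructor
      · -- m' < 1/y - a1  from  y < 1/(a1+m')
        have : y * ((a 1 : ℝ) + m') < 1 := (lt_div_iff₀ (by linarith)).mp hy.2
        rw [hg, lt_sub_iff_add_lt, lt_div_iff₀ hy0]
        nlinarith
      · -- 1/y - a1 < M'  from 1/(a1+M') < y
        have : 1 < y * ((a 1 : ℝ) + M') := (div_lt_iff₀ (by linarith)).mp hy.1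
        rw [hg, sub_lt_iff_lt_add, div_lt_iff₀ hy0]
        nlinarith
    · -- cyl ⊆ Icc
      intro y hy
      rw [cyl_shift n hn a ha y] at hy
      obtain ⟨hyIoc, hz⟩ := hy
      have hy0 : 0 < y := lt_trans (by positivity) hyIoc.1
      have hg : gaussMap y = 1/y - (a 1 : ℝ) := gauss_eq (ha 1 le_rfl) hyIoc
      have hzI : gaussMap y ∈ Set.Icc m' M' := ihr hz
      rw [hg] at hzI
      constructor
      · -- 1/(a1+M') ≤ y  from 1/y - a1 ≤ M'
        rw [div_le_iff₀ (by linarith)]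
        have h2 : 1/y ≤ (a 1 : ℝ) + M' := by linarith [hzI.2]
        rw [div_le_iff₀ hy0] at h2
        nlinarith
      · -- y ≤ 1/(a1+m')  from m' ≤ 1/y - a1
        rw [le_div_iff₀ (by linarith)]
        have h2 : (a 1 : ℝ) + m' ≤ 1/y := by linarith [hzI.1]
        rw [le_div_iff₀ hy0] at h2
        nlinarith

/-! ### diameter of cylinders -/

lemma cAB_diff (ha : ∀ i, 1 ≤ i → 1 ≤ a i) (n : ℕ) (hn : 1 ≤ n) :
    |cA a n - cB a n| = 1 / ((cq a n : ℝ) * ((cq a n : ℝ) + (cq a (n-1) : ℝ))) := by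
  obtain ⟨m, rfl⟩ : ∃ m, n = m + 1 := ⟨n - 1, by omega⟩
  have hq1 := cq_posR ha (m+1)
  have hq0 := cq_posR ha m
  have key : (cp a (m+1):ℝ) * cq a m - cp a m * cq a (m+1) = (-1:ℝ)^m := by
    exact_mod_cast cdet (a := a) m
  have e : cA a (m+1) - cB a (m+1) =
      ((cp a (m+1):ℝ) * cq a m - cp a m * cq a (m+1)) /
        ((cq a (m+1):ℝ) * ((cq a (m+1):ℝ) + (cq a m : ℝ))) := by
    unfold cA cB
    simp only [Nat.add_sub_cancel]
    rw [div_sub_div _ _ (ne_of_gt hq1) (by positivity), div_eq_div_iff (by positivity) (by positivity)]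
    ring
  simp only [Nat.add_sub_cancel]
  rw [e, key, abs_div, abs_pow, abs_neg, abs_one, one_pow, abs_of_pos (by positivity)]

theorem diam_cyl (n : ℕ) (hn : 1 ≤ n) (a : ℕ → ℕ) (ha : ∀ i, 1 ≤ i → 1 ≤ a i) :
    Metric.diam (cyl n a) = 1 / ((cq a n : ℝ) * ((cq a n : ℝ) + (cq a (n-1) : ℝ))) := by
  obtain ⟨hl, hr⟩ := cyl_between n hn a ha
  have hd : max (cA a n) (cB a n) - min (cA a n) (cB a n)
      = 1 / ((cq a n : ℝ) * ((cq a n : ℝ) + (cq a (n-1) : ℝ))) := by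
    rw [max_sub_min_eq_abs, abs_sub_comm]; exact cAB_diff ha n hn
  apply le_antisymm
  · calc Metric.diam (cyl n a)
        ≤ Metric.diam (Set.Icc (min (cA a n) (cB a n)) (max (cA a n) (cB a n))) :=
          Metric.diam_mono hr (Metric.isBounded_Icc _ _)
      _ = _ := by rw [Real.diam_Icc min_le_max, hd]
  · rw [← hd, ← Real.diam_Ioo min_le_max]
    exact Metric.diam_mono hl ((Metric.isBounded_Icc _ _).subset hr)

/-! ### growth bounds on cq -/

lemma prod_le_cq (ha : ∀ i, 1 ≤ i → 1 ≤ a i) : ∀ n, ∏ i ∈ Finset.Icc 1 n, a i ≤ cq a n := by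
  intro n
  induction n using Nat.twoStepInduction with
  | zero => simp [cq_zero]
  | one => simp [cq_one]
  | more n ih1 ih2 =>
    rw [Finset.prod_Icc_succ_top (by omega), cq_succ]
    calc (∏ i ∈ Finset.Icc 1 (n+1), a i) * a (n+2) ≤ cq a (n+1) * a (n+2) :=
          Nat.mul_le_mul_right _ ih2
      _ ≤ a (n+2) * cq a (n+1) + cq a n := by rw [Nat.mul_comm]; omega

lemma cq_le_prod (ha : ∀ i, 1 ≤ i → 1 ≤ a i) : ∀ n, cq a n ≤ ∏ i ∈ Finset.Icc 1 n, (2 * a i) := by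
  intro n
  induction n using Nat.twoStepInduction with
  | zero => simp [cq_zero]
  | one => simp [cq_one]; omega
  | more n ih1 ih2 =>
    rw [Finset.prod_Icc_succ_top (by omega), cq_succ]
    have hmono := cq_mono ha n
    have h2 : a (n+2) * cq a (n+1) + cq a n ≤ 2 * a (n+2) * cq a (n+1) := by
      have := ha (n+2) (by omega)
      nlinarith [cq_pos ha (n+1)]
    calc a (n+2) * cq a (n+1) + cq a n ≤ 2 * a (n+2) * cq a (n+1) := h2
      _ ≤ 2 * a (n+2) * ∏ i ∈ Finset.Icc 1 (n+1), (2 * a i) := Nat.mul_le_mul_left _ ih2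
      _ = (∏ i ∈ Finset.Icc 1 (n+1), (2 * a i)) * (2 * a (n+2)) := by ring

/-- partial sums of logs of partial quotients -/
noncomputable def Sl (a : ℕ → ℕ) (n : ℕ) : ℝ := ∑ i ∈ Finset.Icc 1 n, Real.log (a i)

lemma Sl_succ (a : ℕ → ℕ) (n : ℕ) : Sl a (n+1) = Sl a n + Real.log (a (n+1)) :=
  Finset.sum_Icc_succ_top (by omega) _

lemma log_cq_bounds (ha : ∀ i, 1 ≤ i → 1 ≤ a i) (n : ℕ) :
    Sl a n ≤ Real.log (cq a n) ∧ Real.log (cq a n) ≤ Sl a n + n * Real.log 2 := by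
  have hterm : ∀ i ∈ Finset.Icc 1 n, (1:ℝ) ≤ (a i : ℝ) := by
    intro i hi
    rw [Finset.mem_Icc] at hi
    exact_mod_cast ha i hi.1
  have hprodpos : (0:ℝ) < ∏ i ∈ Finset.Icc 1 n, (a i : ℝ) := by
    apply Finset.prod_pos; intro i hi; linarith [hterm i hi]
  constructor
  · have h1 : Real.log (∏ i ∈ Finset.Icc 1 n, (a i : ℝ)) = Sl a n :=
      Real.log_prod (fun i hi => ne_of_gt (by linarith [hterm i hi]))
    rw [← h1]
    apply Real.log_le_log hprodpos
    exact_mod_cast prod_le_cq ha n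
  · have h2 : Real.log (∏ i ∈ Finset.Icc 1 n, ((2 * a i : ℕ) : ℝ))
        = Sl a n + n * Real.log 2 := by
      rw [Real.log_prod (fun i hi => by
        have := hterm i hi; push_cast; nlinarith)]
      have heq : ∀ i ∈ Finset.Icc 1 n, Real.log ((2 * a i : ℕ) : ℝ)
          = Real.log 2 + Real.log (a i) := by
        intro i hi
        push_cast
        rw [Real.log_mul (by norm_num) (by linarith [hterm i hi])]
      rw [Finset.sum_congr rfl heq, Finset.sum_add_distrib, Finset.sum_const,
        Nat.card_Icc]
      simp only [Sl]
      simp only [nsmul_eq_mul]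
      push_cast
      ring_nf
    rw [← h2]
    apply Real.log_le_log (by exact_mod_cast cq_posR ha n)
    exact_mod_cast cq_le_prod ha n

/-! ### facts about iterates of the Gauss map on irrationals -/

lemma gauss_step {y : ℝ} (hy : y ∈ Set.Ioo (0:ℝ) 1) (hirr : Irrational y) :
    gaussMap y ∈ Set.Ioo (0:ℝ) 1 ∧ Irrational (gaussMap y) := by
  have hinv : Irrational (1/y) := by
    rw [one_div]; exact hirr.inv
  have hfr : gaussMap y = Int.fract (1/y) := by unfold gaussMap Int.fract; ring
  have hgi : Irrational (gaussMap y) := by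
    rw [hfr]; exact hinv.sub_intCast _
  have h0 : 0 ≤ gaussMap y := by rw [hfr]; exact Int.fract_nonneg _
  have h1 : gaussMap y < 1 := by rw [hfr]; exact Int.fract_lt_one _
  have hne : gaussMap y ≠ 0 := by
    intro h; rw [h] at hgi; exact hgi ⟨0, by norm_num⟩
  exact ⟨⟨lt_of_le_of_ne h0 (Ne.symm hne), h1⟩, hgi⟩

lemma gauss_iter {x : ℝ} (hx : x ∈ Set.Ioo (0:ℝ) 1) (hirr : Irrational x) :
    ∀ k, gaussMap^[k] x ∈ Set.Ioo (0:ℝ) 1 ∧ Irrational (gaussMap^[k] x) := by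
  intro k
  induction k with
  | zero => exact ⟨hx, hirr⟩
  | succ k ih =>
    rw [Function.iterate_succ_apply']
    exact gauss_step ih.1 ih.2

lemma pq_ge_one {x : ℝ} (hx : x ∈ Set.Ioo (0:ℝ) 1) (hirr : Irrational x) :
    ∀ i, 1 ≤ i → 1 ≤ pq x i := by
  intro i hi
  obtain ⟨hmem, _⟩ := gauss_iter hx hirr (i-1)
  have := one_le_floor_inv hmem.1 hmem.2.le
  unfold pq
  omega

/-! ### analytic lemmas -/

lemma Sl_nonneg_term (ha : ∀ i, 1 ≤ i → 1 ≤ a i) {i : ℕ} (hi : 1 ≤ i) :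
    0 ≤ Real.log (a i) :=
  Real.log_nonneg (by exact_mod_cast ha i hi)

lemma tendsto_Sl_div_n (ha : ∀ i, 1 ≤ i → 1 ≤ a i)
    (hA1 : Filter.Tendsto (fun n : ℕ => (a n : ℝ)) Filter.atTop Filter.atTop) :
    Filter.Tendsto (fun n : ℕ => Sl a (n+1) / ((n:ℝ)+1)) Filter.atTop Filter.atTop := by
  rw [Filter.tendsto_atTop]
  intro C
  set C' : ℝ := max C 0 + 1 with hC'
  have hC'pos : 0 < C' := by positivity
  have hC'C : C ≤ C' := by rw [hC']; linarith [le_max_left C 0]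
  have hev : ∀ᶠ i in Filter.atTop, Real.exp (2*C') ≤ (a i : ℝ) :=
    hA1.eventually_ge_atTop _
  obtain ⟨N₀, hN₀⟩ := Filter.eventually_atTop.mp hev
  set N := max N₀ 1 with hN
  have hN1 : 1 ≤ N := le_max_right _ _
  have hlog : ∀ i, N ≤ i → 2*C' ≤ Real.log (a i) := by
    intro i hi
    have h := hN₀ i (le_trans (le_max_left _ _) hi)
    calc 2*C' = Real.log (Real.exp (2*C')) := (Real.log_exp _).symm
      _ ≤ Real.log (a i) := Real.log_le_log (Real.exp_pos _) h
  rw [Filter.eventually_atTop]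
  refine ⟨2*N+2, fun n hn => ?_⟩
  have hnn : (0:ℝ) < (n:ℝ)+1 := by positivity
  rw [le_div_iff₀ hnn]
  have hsub : Finset.Icc N (n+1) ⊆ Finset.Icc 1 (n+1) := by
    apply Finset.Icc_subset_Icc_left hN1
  have h1 : ∑ i ∈ Finset.Icc N (n+1), Real.log (a i) ≤ Sl a (n+1) := by
    apply Finset.sum_le_sum_of_subset_of_nonneg hsub
    intro i hi _
    exact Sl_nonneg_term ha (Finset.mem_Icc.mp hi).1
  have h2 := Finset.card_nsmul_le_sum (Finset.Icc N (n+1)) (fun i => Real.log (a i)) (2*C')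
    (fun i hi => hlog i (Finset.mem_Icc.mp hi).1)
  rw [nsmul_eq_mul] at h2
  have hcard : (Finset.Icc N (n+1)).card = n + 2 - N := Nat.card_Icc _ _
  have hcardR : ((Finset.Icc N (n+1)).card : ℝ) = (n:ℝ) + 2 - N := by
    rw [hcard]
    have : N ≤ n + 2 := by omega
    push_cast [Nat.cast_sub this]
    ring
  rw [hcardR] at h2
  have hNn : (N:ℝ) ≤ ((n:ℝ)+1)/2 := by
    have : (2*N : ℕ) ≤ n := by omega
    have : ((2*N : ℕ) : ℝ) ≤ (n:ℝ) := by exact_mod_cast this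
    push_cast at this
    linarith
  nlinarith [h1, h2]

lemma tendsto_Sl_div_log (ha : ∀ i, 1 ≤ i → 1 ≤ a i)
    (hA1 : Filter.Tendsto (fun n : ℕ => (a n : ℝ)) Filter.atTop Filter.atTop)
    (hA2 : Filter.Tendsto (fun n : ℕ => Real.log (a n) / Real.log (a (n + 1)))
      Filter.atTop (nhds 1)) :
    Filter.Tendsto (fun n : ℕ => Sl a (n+1) / Real.log (a (n+1))) Filter.atTop Filter.atTop := by
  rw [Filter.tendsto_atTop]
  intro C
  set k : ℕ := 2 * (Nat.ceil (max C 0) + 1) with hk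
  have hk1 : 1 ≤ k := by omega
  have hkC : C ≤ (k:ℝ)/2 := by
    have h1 : max C 0 ≤ Nat.ceil (max C 0) := Nat.le_ceil _
    have : (k:ℝ) = 2 * ((Nat.ceil (max C 0) : ℝ) + 1) := by rw [hk]; push_cast; ring
    rw [this]
    have := le_max_left C 0
    linarith
  set c : ℝ := 1 - 1/(2*k) with hc
  have hkR : (1:ℝ) ≤ (k:ℝ) := by exact_mod_cast hk1
  have hfrac : 1/(2*(k:ℝ)) ≤ 1/2 := by
    apply one_div_le_one_div_of_le (by norm_num)
    linarith
  have hfracpos : 0 < 1/(2*(k:ℝ)) := by positivity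
  have hc0 : 0 < c := by rw [hc]; linarith
  have hc1 : c ≤ 1 := by rw [hc]; linarith
  have hchalf : ∀ j, j ≤ k → (1/2 : ℝ) ≤ c^j := by
    intro j hj
    have h1 : c^k ≤ c^j := pow_le_pow_of_le_one hc0.le hc1 hj
    have h2 : (1/2 : ℝ) ≤ c^k := by
      have h3 : 1 + (k:ℝ) * (-(1/(2*k))) ≤ (1 + (-(1/(2*k))))^k :=
        one_add_mul_le_pow (by nlinarith) k
      have h4 : (1 + (-(1/(2*(k:ℝ))))) = c := by rw [hc]; ring
      have h5 : (k:ℝ) * (1/(2*(k:ℝ))) = 1/2 := by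
        field_simp
      rw [h4] at h3
      nlinarith
    linarith
  -- find N where the pairwise inequality holds
  have hev1 : ∀ᶠ i in Filter.atTop, c < Real.log (a i) / Real.log (a (i+1)) :=
    hA2.eventually (eventually_gt_nhds (show c < 1 by rw [hc]; linarith))
  have hev2 : ∀ᶠ i in Filter.atTop, (2:ℝ) ≤ (a i : ℝ) := hA1.eventually_ge_atTop _
  have hev2' : ∀ᶠ i in Filter.atTop, (2:ℝ) ≤ (a (i+1) : ℝ) := by
    obtain ⟨M, hM⟩ := Filter.eventually_atTop.mp hev2
    exact Filter.eventually_atTop.mpr ⟨M, fun i hi => hM (i+1) (by omega)⟩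
  obtain ⟨N, hN⟩ := Filter.eventually_atTop.mp ((hev1.and (hev2.and hev2')))
  have hNlog : ∀ i, N ≤ i → 0 < Real.log (a i) := by
    intro i hi
    have := (hN i hi).2.1
    have h2 : (1:ℝ) < (a i : ℝ) := by linarith
    exact Real.log_pos h2
  have hNstep : ∀ i, N ≤ i → c * Real.log (a (i+1)) ≤ Real.log (a i) := by
    intro i hi
    have hpos : 0 < Real.log (a (i+1)) := Real.log_pos (by linarith [(hN i hi).2.2])
    have := (hN i hi).1
    rw [lt_div_iff₀ hpos] at this
    linarith
  have chain : ∀ j, ∀ i, N ≤ i → c^j * Real.log (a (i+j)) ≤ Real.log (a i) := by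
    intro j
    induction j with
    | zero => intro i hi; simp
    | succ j ih =>
      intro i hi
      have h1 : c * Real.log (a (i+j+1)) ≤ Real.log (a (i+j)) := hNstep (i+j) (by omega)
      have h2 : c^j * Real.log (a (i+j)) ≤ Real.log (a i) := ih i hi
      have h3 : c^j * (c * Real.log (a (i+j+1))) ≤ c^j * Real.log (a (i+j)) :=
        mul_le_mul_of_nonneg_left h1 (by positivity)
      calc c^(j+1) * Real.log (a (i+(j+1))) = c^j * (c * Real.log (a (i+j+1))) := by
            rw [pow_succ]; ring_nf
        _ ≤ c^j * Real.log (a (i+j)) := h3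
        _ ≤ Real.log (a i) := h2
  rw [Filter.eventually_atTop]
  refine ⟨N + k + 1, fun n hn => ?_⟩
  have hlogpos : 0 < Real.log (a (n+1)) := hNlog (n+1) (by omega)
  rw [le_div_iff₀ hlogpos]
  -- sum over the last k indices
  have hsub : Finset.Icc (n+2-k) (n+1) ⊆ Finset.Icc 1 (n+1) :=
    Finset.Icc_subset_Icc_left (by omega)
  have h1 : ∑ i ∈ Finset.Icc (n+2-k) (n+1), Real.log (a i) ≤ Sl a (n+1) := by
    apply Finset.sum_le_sum_of_subset_of_nonneg hsub
    intro i hi _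
    exact Sl_nonneg_term ha (Finset.mem_Icc.mp hi).1
  have hterm : ∀ i ∈ Finset.Icc (n+2-k) (n+1), (1/2) * Real.log (a (n+1)) ≤ Real.log (a i) := by
    intro i hi
    rw [Finset.mem_Icc] at hi
    have hiN : N ≤ i := by omega
    have hj : n + 1 = i + (n+1-i) := by omega
    have hjk : n+1-i ≤ k := by omega
    calc (1/2) * Real.log (a (n+1)) ≤ c^(n+1-i) * Real.log (a (n+1)) :=
          mul_le_mul_of_nonneg_right (hchalf _ hjk) hlogpos.le
      _ = c^(n+1-i) * Real.log (a (i + (n+1-i))) := by rw [← hj]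
      _ ≤ Real.log (a i) := chain (n+1-i) i hiN
  have h2 := Finset.card_nsmul_le_sum (Finset.Icc (n+2-k) (n+1))
    (fun i => Real.log (a i)) ((1/2) * Real.log (a (n+1))) hterm
  have hcard : (Finset.Icc (n+2-k) (n+1)).card = k := by
    rw [Nat.card_Icc]; omega
  rw [hcard, nsmul_eq_mul] at h2
  have : C * Real.log (a (n+1)) ≤ ((k:ℝ)/2) * Real.log (a (n+1)) :=
    mul_le_mul_of_nonneg_right hkC hlogpos.le
  calc C * Real.log (a (n+1)) ≤ ((k:ℝ)/2) * Real.log (a (n+1)) := this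
    _ = (k:ℝ) * ((1/2) * Real.log (a (n+1))) := by ring
    _ ≤ ∑ i ∈ Finset.Icc (n+2-k) (n+1), Real.log (a i) := h2
    _ ≤ Sl a (n+1) := h1

/-! ### the log-diameter function -/

noncomputable def Lf (a : ℕ → ℕ) (n : ℕ) : ℝ :=
  Real.log ((cq a n : ℝ) * ((cq a n : ℝ) + (cq a (n-1) : ℝ)))

lemma Lf_bounds (ha : ∀ i, 1 ≤ i → 1 ≤ a i) (n : ℕ) (hn : 1 ≤ n) :
    2 * Sl a n ≤ Lf a n ∧ Lf a n ≤ 2 * Sl a n + (2*(n:ℝ)+1) * Real.log 2 := by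
  have hq := cq_posR ha n
  have hq' := cq_posR ha (n-1)
  have hq1 : (1:ℝ) ≤ cq a n := by exact_mod_cast cq_pos ha n
  have hmono : (cq a (n-1) : ℝ) ≤ (cq a n : ℝ) := by
    have h := cq_mono ha (n-1)
    have : n - 1 + 1 = n := by omega
    rw [this] at h
    exact_mod_cast h
  have hsplit : Lf a n = Real.log (cq a n) + Real.log ((cq a n : ℝ) + cq a (n-1)) := by
    unfold Lf
    rw [Real.log_mul (ne_of_gt hq) (by positivity)]
  obtain ⟨hlb, hub⟩ := log_cq_bounds ha n
  have hlog2 : Real.log (cq a n) ≤ Real.log ((cq a n : ℝ) + cq a (n-1)) :=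
    Real.log_le_log hq (by linarith)
  have hlog3 : Real.log ((cq a n : ℝ) + cq a (n-1)) ≤ Real.log 2 + Real.log (cq a n) := by
    rw [← Real.log_mul (by norm_num) (ne_of_gt hq)]
    exact Real.log_le_log (by linarith) (by linarith)
  constructor
  · rw [hsplit]; linarith
  · rw [hsplit]; linarith

lemma tendsto_Lf_ratio (ha : ∀ i, 1 ≤ i → 1 ≤ a i)
    (hA1 : Filter.Tendsto (fun n : ℕ => (a n : ℝ)) Filter.atTop Filter.atTop)
    (hA2 : Filter.Tendsto (fun n : ℕ => Real.log (a n) / Real.log (a (n + 1)))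
      Filter.atTop (nhds 1)) :
    Filter.Tendsto (fun n : ℕ => Lf a n / Lf a (n+1)) Filter.atTop (nhds 1) := by
  have hT1 := tendsto_Sl_div_n ha hA1
  have hT2 := tendsto_Sl_div_log ha hA1 hA2
  -- the error bound
  set B : ℕ → ℝ := fun n => Real.log (a (n+1)) / Sl a (n+1)
    + (2*Real.log 2) * (((n:ℝ)+1) / Sl a (n+1)) with hB
  have hB0 : Filter.Tendsto B Filter.atTop (nhds 0) := by
    have hf1 : Filter.Tendsto (fun n : ℕ => Real.log (a (n+1)) / Sl a (n+1))
        Filter.atTop (nhds 0) := by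
      have := hT2.inv_tendsto_atTop
      refine this.congr (fun n => ?_)
      rw [Pi.inv_apply, inv_div]
    have hf2 : Filter.Tendsto (fun n : ℕ => ((n:ℝ)+1) / Sl a (n+1))
        Filter.atTop (nhds 0) := by
      have := hT1.inv_tendsto_atTop
      refine this.congr (fun n => ?_)
      rw [Pi.inv_apply, inv_div]
    have := hf1.add (hf2.const_mul (2*Real.log 2))
    simpa using this
  have hSbig : ∀ᶠ n : ℕ in Filter.atTop, (n:ℝ)+1 ≤ Sl a (n+1) := by
    have := (Filter.tendsto_atTop.mp hT1) 1
    filter_upwards [this] with n hn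
    have hnn : (0:ℝ) < (n:ℝ)+1 := by positivity
    rw [le_div_iff₀ hnn] at hn
    linarith
  have hgB : ∀ᶠ n in Filter.atTop, ‖Lf a n / Lf a (n+1) - 1‖ ≤ B n := by
    filter_upwards [hSbig, Filter.eventually_ge_atTop 1] with n hS hn1
    set u := Lf a n
    set v := Lf a (n+1)
    set s := Sl a (n+1) with hs
    set t := Real.log (a (n+1)) with ht
    have ht0 : 0 ≤ t := Sl_nonneg_term ha (by omega)
    have hlog2 : (0:ℝ) ≤ Real.log 2 := Real.log_nonneg (by norm_num)
    have hsp : (0:ℝ) < s := by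
      have : (0:ℝ) < (n:ℝ)+1 := by positivity
      linarith
    have hSn : Sl a n = s - t := by rw [hs, ht, Sl_succ]; ring
    obtain ⟨hu1, hu2⟩ := Lf_bounds ha n hn1
    obtain ⟨hv1, hv2⟩ := Lf_bounds ha (n+1) (by omega)
    rw [hSn] at hu1 hu2
    rw [← hs] at hv1 hv2
    have hv2' : v ≤ 2*s + (2*(n:ℝ)+3) * Real.log 2 := by
      push_cast at hv2
      linarith
    have hvpos : 0 < v := by linarith
    have hnum : |u - v| ≤ 2*t + (4*(n:ℝ)+4) * Real.log 2 := by
      rw [abs_le]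
      constructor
      · nlinarith
      · nlinarith
    have hgeq : u / v - 1 = (u - v)/v := by
      field_simp
    rw [hgeq, Real.norm_eq_abs, abs_div, abs_of_pos hvpos]
    have hstep : |u - v| / v ≤ (2*t + (4*(n:ℝ)+4) * Real.log 2) / (2*s) :=
      div_le_div₀ (by nlinarith) hnum (by linarith) (by linarith)
    have hBn : B n = (2*t + (4*(n:ℝ)+4) * Real.log 2) / (2*s) := by
      rw [hB]
      show t / s + 2 * Real.log 2 * (((n:ℝ)+1) / s) = _
      rw [mul_div_assoc', ← add_div, div_eq_div_iff (ne_of_gt hsp) (by positivity)]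
      ring
    rw [hBn]
    exact hstep
  have hzero : Filter.Tendsto (fun n : ℕ => Lf a n / Lf a (n+1) - 1)
      Filter.atTop (nhds 0) := squeeze_zero_norm' hgB hB0
  have := hzero.add_const 1
  simpa using this


/-- Lemma 4.3: if the partial quotients of an irrational `x ∈ (0,1)` tend to infinity
and `log a_n(x) / log a_{n+1}(x) → 1`, then `log |I_n(x)| / log |I_{n+1}(x)| → 1`. -/
theorem stmt14 (x : ℝ) (hx : x ∈ Set.Ioo (0 : ℝ) 1) (hirr : Irrational x)
    (h1 : Filter.Tendsto (fun n : ℕ => (pq x n : ℝ)) Filter.atTop Filter.atTop)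
    (h2 : Filter.Tendsto
      (fun n : ℕ => Real.log (pq x n) / Real.log (pq x (n + 1)))
      Filter.atTop (nhds 1)) :
    Filter.Tendsto
      (fun n : ℕ => Real.log (Metric.diam (cyl n (pq x))) /
        Real.log (Metric.diam (cyl (n + 1) (pq x))))
      Filter.atTop (nhds 1) := by
  have ha : ∀ i, 1 ≤ i → 1 ≤ pq x i := pq_ge_one hx hirr
  have htend := tendsto_Lf_ratio ha h1 h2
  refine htend.congr' ?_
  filter_upwards [Filter.eventually_ge_atTop 1] with n hn
  have hd1 : Real.log (Metric.diam (cyl n (pq x))) = - Lf (pq x) n := by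
    rw [diam_cyl n hn _ ha, one_div, Real.log_inv]
    rfl
  have hd2 : Real.log (Metric.diam (cyl (n+1) (pq x))) = - Lf (pq x) (n+1) := by
    rw [diam_cyl (n+1) (by omega) _ ha, one_div, Real.log_inv]
    rfl
  rw [hd1, hd2, neg_div_neg_eq]
end

section
/- Let t ≥ 2 be an integer. For integers 1 ≤ m ≤ n define R_t(m,n) = (∑_{i=m}^{n} log((2i+1)^t − (2i)^t)) / (2t ∑_{i=m}^{n} log(2i+1)). Then lim_{m→∞} inf_{n ≥ m} R_t(m,n) = (t−1)/(2t). -/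
open Filter Finset Real

/-- In ℕ: `(2i+1)^(t-1) ≤ (2i+1)^t - (2i)^t`. -/
private lemma stmt17_nat_lb (t i : ℕ) (ht : 1 ≤ t) :
    (2 * i + 1) ^ (t - 1) ≤ (2 * i + 1) ^ t - (2 * i) ^ t := by
  obtain ⟨s, rfl⟩ : ∃ s, t = s + 1 := ⟨t - 1, by omega⟩
  have key : (2 * i) ^ (s + 1) + (2 * i + 1) ^ s ≤ (2 * i + 1) ^ (s + 1) := by
    calc (2 * i) ^ (s + 1) + (2 * i + 1) ^ s
        = (2 * i) ^ s * (2 * i) + (2 * i + 1) ^ s := by ring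
      _ ≤ (2 * i + 1) ^ s * (2 * i) + (2 * i + 1) ^ s := by
          gcongr; omega
      _ = (2 * i + 1) ^ (s + 1) := by ring
  have : (s + 1) - 1 = s := by omega
  rw [this]
  omega

/-- In ℝ: `(y+1)^t - y^t ≤ t * (y+1)^(t-1)` for `y ≥ 0`. -/
private lemma stmt17_real_ub (t : ℕ) (y : ℝ) (hy : 0 ≤ y) :
    (y + 1) ^ t - y ^ t ≤ (t : ℝ) * (y + 1) ^ (t - 1) := by
  have h := geom_sum₂_mul (y + 1) y t
  have h1 : (y + 1) - y = 1 := by ring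
  rw [h1, mul_one] at h
  rw [← h]
  calc ∑ i ∈ range t, (y + 1) ^ i * y ^ (t - 1 - i)
      ≤ ∑ _i ∈ range t, (y + 1) ^ (t - 1) := by
        apply Finset.sum_le_sum
        intro i hi
        have hi' : i ≤ t - 1 := Nat.le_sub_one_of_lt (mem_range.mp hi)
        calc (y + 1) ^ i * y ^ (t - 1 - i)
            ≤ (y + 1) ^ i * (y + 1) ^ (t - 1 - i) := by
              gcongr <;> linarith
          _ = (y + 1) ^ (t - 1) := by
              rw [← pow_add, Nat.add_sub_cancel' hi']
    _ = (t : ℝ) * (y + 1) ^ (t - 1) := by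
        rw [Finset.sum_const, card_range, nsmul_eq_mul]

/-- The limit `B_k → (t-1)/(2t)` used in Lemmas 4.2 and 4.7: with
`R_t(m,n) = (∑_{i=m}^n log((2i+1)^t - (2i)^t)) / (2t ∑_{i=m}^n log(2i+1))`,
one has `inf_{n ≥ m} R_t(m,n) → (t-1)/(2t)` as `m → ∞`. -/
theorem stmt17 (t : ℕ) (ht : 2 ≤ t) :
    Filter.Tendsto (fun m : ℕ =>
        ⨅ n : Set.Ici m,
          (∑ i ∈ Finset.Icc m (n : ℕ),
              Real.log ((((2 * i + 1) ^ t - (2 * i) ^ t : ℕ)) : ℝ)) /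
            (2 * (t : ℝ) * ∑ i ∈ Finset.Icc m (n : ℕ),
              Real.log (((2 * i + 1 : ℕ)) : ℝ)))
      Filter.atTop (nhds (((t : ℝ) - 1) / (2 * (t : ℝ)))) := by
  have htR : (0 : ℝ) < t := by exact_mod_cast Nat.lt_of_lt_of_le (by norm_num) ht
  set c : ℝ := ((t : ℝ) - 1) / (2 * (t : ℝ)) with hc
  set A : ℕ → ℝ := fun i => Real.log ((((2 * i + 1) ^ t - (2 * i) ^ t : ℕ)) : ℝ) with hA
  set L : ℕ → ℝ := fun i => Real.log (((2 * i + 1 : ℕ)) : ℝ) with hL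
  have hLpos : ∀ i : ℕ, 1 ≤ i → 0 < L i := by
    intro i hi
    apply Real.log_pos
    have : (3 : ℕ) ≤ 2 * i + 1 := by omega
    exact_mod_cast Nat.lt_of_lt_of_le (by norm_num) this
  have hcast : ((t - 1 : ℕ) : ℝ) = (t : ℝ) - 1 := by
    have : 1 ≤ t := by omega
    push_cast [this]; ring
  -- pointwise lower bound on each term of the sums
  have hAL : ∀ i : ℕ, 1 ≤ i → ((t : ℝ) - 1) * L i ≤ A i := by
    intro i hi
    have hnat := stmt17_nat_lb t i (by omega)
    have hcast2 : (((2 * i + 1) ^ (t - 1) : ℕ) : ℝ) ≤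
        (((2 * i + 1) ^ t - (2 * i) ^ t : ℕ) : ℝ) := by exact_mod_cast hnat
    have hpos : (0 : ℝ) < (((2 * i + 1) ^ (t - 1) : ℕ) : ℝ) := by positivity
    have hlog := Real.log_le_log hpos hcast2
    calc ((t : ℝ) - 1) * L i = ((t - 1 : ℕ) : ℝ) * L i := by rw [hcast]
      _ = Real.log ((((2 * i + 1) ^ (t - 1) : ℕ)) : ℝ) := by
          rw [hL]; push_cast; rw [Real.log_pow]
      _ ≤ A i := hlog
  -- lower bound for each R(m, n)
  have hlow : ∀ m : ℕ, 1 ≤ m → ∀ n : ℕ, m ≤ n →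
      c ≤ (∑ i ∈ Finset.Icc m n, A i) / (2 * (t : ℝ) * ∑ i ∈ Finset.Icc m n, L i) := by
    intro m hm n hn
    have hne : (Finset.Icc m n).Nonempty := Finset.nonempty_Icc.mpr hn
    have hS : 0 < ∑ i ∈ Finset.Icc m n, L i := by
      apply Finset.sum_pos _ hne
      intro i hi
      exact hLpos i (le_trans hm (Finset.mem_Icc.mp hi).1)
    have hNS : ((t : ℝ) - 1) * ∑ i ∈ Finset.Icc m n, L i ≤ ∑ i ∈ Finset.Icc m n, A i := by
      rw [Finset.mul_sum]
      apply Finset.sum_le_sum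
      intro i hi
      exact hAL i (le_trans hm (Finset.mem_Icc.mp hi).1)
    rw [le_div_iff₀ (by positivity)]
    calc c * (2 * (t : ℝ) * ∑ i ∈ Finset.Icc m n, L i)
        = ((t : ℝ) - 1) * ∑ i ∈ Finset.Icc m n, L i := by
          rw [hc]; field_simp
      _ ≤ _ := hNS
  -- upper bound for R(m, m)
  have hup : ∀ m : ℕ, 1 ≤ m →
      A m / (2 * (t : ℝ) * L m) ≤ c + Real.log t / (2 * (t : ℝ)) * (L m)⁻¹ := by
    intro m hm
    have hLm := hLpos m hm
    have hy : (0 : ℝ) ≤ (2 * m : ℝ) := by positivity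
    have hsub : ((2 * m : ℕ)) ^ t ≤ ((2 * m + 1 : ℕ)) ^ t :=
      Nat.pow_le_pow_left (by omega) t
    have hAm : A m ≤ Real.log t + ((t : ℝ) - 1) * L m := by
      have hcast3 : (((2 * m + 1) ^ t - (2 * m) ^ t : ℕ) : ℝ) =
          ((2 * m : ℝ) + 1) ^ t - (2 * m : ℝ) ^ t := by
        rw [Nat.cast_sub hsub]; push_cast; ring
      have hub := stmt17_real_ub t (2 * m : ℝ) hy
      have hposval : (0 : ℝ) < (((2 * m + 1) ^ t - (2 * m) ^ t : ℕ) : ℝ) := by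
        rw [hcast3]
        have := stmt17_real_ub t (2 * m : ℝ) hy
        have h2 : ((2 * m : ℝ) + 1) ^ (t - 1) ≤ ((2 * m : ℝ) + 1) ^ t - (2 * m : ℝ) ^ t := by
          have := stmt17_nat_lb t m (by omega)
          have h3 : (((2 * m + 1) ^ (t - 1) : ℕ) : ℝ) ≤
              (((2 * m + 1) ^ t - (2 * m) ^ t : ℕ) : ℝ) := by exact_mod_cast this
          rw [hcast3] at h3
          calc ((2 * m : ℝ) + 1) ^ (t - 1) = (((2 * m + 1) ^ (t - 1) : ℕ) : ℝ) := by
                push_cast; ring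
            _ ≤ _ := h3
        have h4 : (0 : ℝ) < ((2 * m : ℝ) + 1) ^ (t - 1) := by positivity
        linarith
      have hle' : (((2 * m + 1) ^ t - (2 * m) ^ t : ℕ) : ℝ) ≤
          (t : ℝ) * ((2 * m : ℝ) + 1) ^ (t - 1) := by
        rw [hcast3]; exact hub
      calc A m ≤ Real.log ((t : ℝ) * ((2 * m : ℝ) + 1) ^ (t - 1)) :=
            Real.log_le_log hposval hle' 
        _ = Real.log t + ((t : ℝ) - 1) * L m := by
            rw [Real.log_mul (ne_of_gt htR) (by positivity), Real.log_pow, hcast]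
            congr 2
            rw [hL]; push_cast; ring_nf
    calc A m / (2 * (t : ℝ) * L m)
        ≤ (Real.log t + ((t : ℝ) - 1) * L m) / (2 * (t : ℝ) * L m) := by
          exact (div_le_div_iff_of_pos_right (by positivity)).mpr hAm
      _ = c + Real.log t / (2 * (t : ℝ)) * (L m)⁻¹ := by
          rw [hc]; field_simp; ring
  -- the upper envelope tends to c
  have hLtop : Tendsto L atTop atTop := by
    apply Real.tendsto_log_atTop.comp
    apply tendsto_atTop_mono (fun m : ℕ => ?_) tendsto_natCast_atTop_atTop
    show (m : ℝ) ≤ ((2 * m + 1 : ℕ) : ℝ)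
    push_cast; linarith [Nat.cast_nonneg (α := ℝ) m]
  have hg : Tendsto (fun m : ℕ => c + Real.log t / (2 * (t : ℝ)) * (L m)⁻¹)
      atTop (nhds c) := by
    have h0 : Tendsto (fun m : ℕ => (L m)⁻¹) atTop (nhds 0) :=
      hLtop.inv_tendsto_atTop
    have := Filter.Tendsto.add
      (tendsto_const_nhds : Tendsto (fun _ : ℕ => c) atTop (nhds c))
      (h0.const_mul (Real.log t / (2 * (t : ℝ))))
    simpa using this
  apply tendsto_of_tendsto_of_tendsto_of_le_of_le' tendsto_const_nhds hg
  · filter_upwards [eventually_ge_atTop 1] with m hm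
    haveI : Nonempty (Set.Ici m) := ⟨⟨m, le_refl m⟩⟩
    exact le_ciInf fun n => hlow m hm (n : ℕ) n.2
  · filter_upwards [eventually_ge_atTop 1] with m hm
    have hbdd : BddBelow (Set.range (fun n : Set.Ici m =>
        (∑ i ∈ Finset.Icc m (n : ℕ), A i) / (2 * (t : ℝ) * ∑ i ∈ Finset.Icc m (n : ℕ), L i))) := by
      refine ⟨c, ?_⟩
      rintro x ⟨n, rfl⟩
      exact hlow m hm (n : ℕ) n.2
    refine le_trans (ciInf_le hbdd ⟨m, le_refl m⟩) ?_
    have hmm : (∑ i ∈ Finset.Icc m m, A i) / (2 * (t : ℝ) * ∑ i ∈ Finset.Icc m m, L i)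
        = A m / (2 * (t : ℝ) * L m) := by
      rw [Finset.Icc_self, Finset.sum_singleton, Finset.sum_singleton]
    rw [hmm]
    exact hup m hm
end
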